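/- arXiv:1411.4892 — 10 statements merged into one kernel-verified Lean document; each statement's English description precedes it below -/
import Mathlib

section
/- Let U be an (n+k) × (n+k) unitary matrix written in block form U = [[U₁₁, U₁₂],[U₂₁, U₂₂]] with U₁₁ of size n × n and U₂₂ of size k × k. Define Ξ(z) = U₁₁ + z U₁₂ (I − z U₂₂)⁻¹ U₂₁ for z ∈ ℂ with det(I − z U₂₂) ≠ 0. Then for every z on the unit circle where Ξ is defined, Ξ(z) is a unitary matrix; moreover I − Ξ(z)*Ξ(z) = (1 − |z|²) U₂₁*(I − z̄ U₂₂*)⁻¹(I − z U₂₂)⁻¹ U₂₁ wherever defined. -/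
open Matrix

set_option maxHeartbeats 1000000 in
/-- Transfer functions of unitary block matrices are unitary on the unit circle,
with the stated defect identity wherever defined. -/
theorem stmt1 (n k : ℕ)
    (U11 : Matrix (Fin n) (Fin n) ℂ) (U12 : Matrix (Fin n) (Fin k) ℂ)
    (U21 : Matrix (Fin k) (Fin n) ℂ) (U22 : Matrix (Fin k) (Fin k) ℂ)
    (hU : Matrix.fromBlocks U11 U12 U21 U22 ∈ Matrix.unitaryGroup (Fin n ⊕ Fin k) ℂ) :
    (∀ z : ℂ, ‖z‖ = 1 → IsUnit (1 - z • U22) →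
      U11 + z • (U12 * (1 - z • U22)⁻¹ * U21) ∈ Matrix.unitaryGroup (Fin n) ℂ) ∧
    (∀ z : ℂ, IsUnit (1 - z • U22) →
      1 - (U11 + z • (U12 * (1 - z • U22)⁻¹ * U21))ᴴ *
            (U11 + z • (U12 * (1 - z • U22)⁻¹ * U21)) =
        (((1 - ‖z‖ ^ 2 : ℝ) : ℂ)) •
          (U21ᴴ * (1 - (starRingEnd ℂ z) • U22ᴴ)⁻¹ * (1 - z • U22)⁻¹ * U21)) := by
  -- Block relations from unitarity
  have h : (fromBlocks U11 U12 U21 U22)ᴴ * fromBlocks U11 U12 U21 U22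
      = fromBlocks 1 0 0 1 := by
    have := hU.1
    rw [Matrix.fromBlocks_one]
    simpa [Matrix.star_eq_conjTranspose] using this
  rw [Matrix.fromBlocks_conjTranspose, Matrix.fromBlocks_multiply] at h
  have h1 : U11ᴴ * U11 + U21ᴴ * U21 = 1 := congrArg Matrix.toBlocks₁₁ h
  have h2 : U11ᴴ * U12 + U21ᴴ * U22 = 0 := congrArg Matrix.toBlocks₁₂ h
  have h3 : U12ᴴ * U11 + U22ᴴ * U21 = 0 := congrArg Matrix.toBlocks₂₁ h
  have h4 : U12ᴴ * U12 + U22ᴴ * U22 = 1 := congrArg Matrix.toBlocks₂₂ h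
  have hb1 : U11ᴴ * U11 = 1 - U21ᴴ * U21 := eq_sub_of_add_eq h1
  have hb2 : U11ᴴ * U12 = -(U21ᴴ * U22) := eq_neg_of_add_eq_zero_left h2
  have hb3 : U12ᴴ * U11 = -(U22ᴴ * U21) := eq_neg_of_add_eq_zero_left h3
  have hb4 : U12ᴴ * U12 = 1 - U22ᴴ * U22 := eq_sub_of_add_eq h4
  -- the key identity
  have key : ∀ z : ℂ, IsUnit (1 - z • U22) →
      1 - (U11 + z • (U12 * (1 - z • U22)⁻¹ * U21))ᴴ *
            (U11 + z • (U12 * (1 - z • U22)⁻¹ * U21)) =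
        (1 - (starRingEnd ℂ z) * z) •
          (U21ᴴ * (1 - (starRingEnd ℂ z) • U22ᴴ)⁻¹ * (1 - z • U22)⁻¹ * U21) := by
    intro z hz
    set s : ℂ := starRingEnd ℂ z with hs
    set M : Matrix (Fin k) (Fin k) ℂ := 1 - z • U22 with hM
    have hdet : IsUnit M.det := (Matrix.isUnit_iff_isUnit_det M).mp hz
    set A : Matrix (Fin k) (Fin k) ℂ := M⁻¹ with hA
    have hMA : M * A = 1 := Matrix.mul_nonsing_inv M hdet
    have hAM : A * M = 1 := Matrix.nonsing_inv_mul M hdet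
    have hMH : Mᴴ = 1 - s • U22ᴴ := by
      rw [hM]
      simp [Matrix.conjTranspose_sub, Matrix.conjTranspose_smul]
      rfl
    set B : Matrix (Fin k) (Fin k) ℂ := Aᴴ with hB
    have hBdef : (1 - s • U22ᴴ)⁻¹ = B := by
      rw [← hMH, hB, hA, Matrix.conjTranspose_nonsing_inv]
    have hBMH : B * Mᴴ = 1 := by
      rw [hB, ← Matrix.conjTranspose_mul, hMA, Matrix.conjTranspose_one]
    have hMHB : Mᴴ * B = 1 := by
      rw [hB, ← Matrix.conjTranspose_mul, hAM, Matrix.conjTranspose_one]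
    have e1 : Mᴴ + s • U22ᴴ = 1 := by rw [hMH]; exact sub_add_cancel 1 _
    have e2 : M + z • U22 = 1 := by rw [hM]; exact sub_add_cancel 1 _
    -- the central resolvent identity
    have claim : B * A
        = 1 + s • (B * U22ᴴ) + z • (U22 * A) + (s * z) • (B * (U22ᴴ * (U22 * A))) := by
      have t1 : B * (Mᴴ * (M * A)) = 1 := by rw [hMA, Matrix.mul_one, hBMH]
      have t2 : B * (Mᴴ * ((z • U22) * A)) = z • (U22 * A) := by
        rw [← Matrix.mul_assoc, hBMH, Matrix.one_mul, Matrix.smul_mul]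
      have t3 : B * ((s • U22ᴴ) * (M * A)) = s • (B * U22ᴴ) := by
        rw [hMA, Matrix.mul_one, Matrix.mul_smul]
      have t4 : B * ((s • U22ᴴ) * ((z • U22) * A))
          = (s * z) • (B * (U22ᴴ * (U22 * A))) := by
        simp only [Matrix.smul_mul, Matrix.mul_smul, smul_smul, Matrix.mul_assoc]
        rw [mul_comm z s]
      calc B * A = B * ((Mᴴ + s • U22ᴴ) * ((M + z • U22) * A)) := by
            rw [e1, e2, Matrix.one_mul, Matrix.one_mul]
        _ = B * (Mᴴ * (M * A)) + B * (Mᴴ * ((z • U22) * A))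
            + B * ((s • U22ᴴ) * (M * A)) + B * ((s • U22ᴴ) * ((z • U22) * A)) := by
            simp only [Matrix.add_mul, Matrix.mul_add]
            abel
        _ = 1 + s • (B * U22ᴴ) + z • (U22 * A) + (s * z) • (B * (U22ᴴ * (U22 * A))) := by
            rw [t1, t2, t3, t4]; abel
    -- expansion of Ξᴴ Ξ
    have hXiH : (U11 + z • (U12 * A * U21))ᴴ = U11ᴴ + s • (U21ᴴ * (B * U12ᴴ)) := by
      rw [Matrix.conjTranspose_add, Matrix.conjTranspose_smul, Matrix.conjTranspose_mul,
        Matrix.conjTranspose_mul]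
      rfl
    have e0 : (U11 + z • (U12 * A * U21))ᴴ * (U11 + z • (U12 * A * U21))
        = U11ᴴ * U11 + z • (U11ᴴ * (U12 * (A * U21)))
          + s • (U21ᴴ * (B * (U12ᴴ * U11)))
          + (z * s) • (U21ᴴ * (B * (U12ᴴ * (U12 * (A * U21))))) := by
      rw [hXiH]
      simp only [Matrix.add_mul, Matrix.mul_add, Matrix.smul_mul, Matrix.mul_smul, smul_smul,
        Matrix.mul_assoc, smul_add]
      abel
    have t2' : U11ᴴ * (U12 * (A * U21)) = -(U21ᴴ * (U22 * (A * U21))) := by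
      rw [← Matrix.mul_assoc, hb2, Matrix.neg_mul, Matrix.mul_assoc]
    have t3' : U21ᴴ * (B * (U12ᴴ * U11)) = -(U21ᴴ * (B * (U22ᴴ * U21))) := by
      rw [hb3, Matrix.mul_neg, Matrix.mul_neg]
    have t4' : U21ᴴ * (B * (U12ᴴ * (U12 * (A * U21))))
        = U21ᴴ * (B * (A * U21)) - U21ᴴ * (B * (U22ᴴ * (U22 * (A * U21)))) := by
      rw [← Matrix.mul_assoc U12ᴴ U12 (A * U21), hb4, Matrix.sub_mul, Matrix.one_mul,
        Matrix.mul_sub, Matrix.mul_sub, Matrix.mul_assoc]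
    have goalish : U21ᴴ * (B * (A * U21))
        = U21ᴴ * U21 + s • (U21ᴴ * (B * (U22ᴴ * U21))) + z • (U21ᴴ * (U22 * (A * U21)))
          + (s * z) • (U21ᴴ * (B * (U22ᴴ * (U22 * (A * U21))))) := by
      have h0 : U21ᴴ * ((B * A) * U21)
          = U21ᴴ * ((1 + s • (B * U22ᴴ) + z • (U22 * A)
              + (s * z) • (B * (U22ᴴ * (U22 * A)))) * U21) := by rw [claim]
      simpa only [Matrix.add_mul, Matrix.mul_add, Matrix.one_mul, Matrix.smul_mul,
        Matrix.mul_smul, Matrix.mul_assoc] using h0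
    rw [hBdef]
    calc 1 - (U11 + z • (U12 * A * U21))ᴴ * (U11 + z • (U12 * A * U21))
        = 1 - ((1 - U21ᴴ * U21) + z • (-(U21ᴴ * (U22 * (A * U21))))
            + s • (-(U21ᴴ * (B * (U22ᴴ * U21))))
            + (z * s) • (U21ᴴ * (B * (A * U21)) - U21ᴴ * (B * (U22ᴴ * (U22 * (A * U21)))))) := by
          rw [e0, hb1, t2', t3', t4']
      _ = (1 - s * z) • (U21ᴴ * B * A * U21) := by
          simp only [Matrix.mul_assoc]
          rw [goalish]
          module
  constructor
  · intro z hz hinv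
    have hk := key z hinv
    have h0 : (1 - starRingEnd ℂ z * z : ℂ) = 0 := by
      rw [RCLike.conj_mul, hz]
      norm_num
    rw [h0, zero_smul] at hk
    rw [Matrix.mem_unitaryGroup_iff', Matrix.star_eq_conjTranspose]
    exact (sub_eq_zero.mp hk).symm
  · intro z hinv
    have hsz : ((1 - ‖z‖ ^ 2 : ℝ) : ℂ) = 1 - (starRingEnd ℂ z) * z := by
      push_cast
      rw [RCLike.conj_mul]
      norm_num
    rw [hsz]
    exact key z hinv
end

section
/- Let U be a unitary matrix as in the block setup above and Ξ(z) = U₁₁ + z U₁₂ (I − z U₂₂)⁻¹ U₂₁. Then ‖Ξ(z)‖ ≤ 1 (operator norm) for every z in the open unit disk where Ξ is defined. -/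
open Matrix

lemma star_sum_elim {α β : Type*} [Fintype α] [Fintype β] (a : α → ℂ) (b : β → ℂ) :
    star (Sum.elim a b) = Sum.elim (star a) (star b) := by
  funext i; cases i <;> rfl

/-- The transfer function of a unitary block matrix is a contraction on the open unit disk. -/
theorem stmt2 (n k : ℕ)
    (U11 : Matrix (Fin n) (Fin n) ℂ) (U12 : Matrix (Fin n) (Fin k) ℂ)
    (U21 : Matrix (Fin k) (Fin n) ℂ) (U22 : Matrix (Fin k) (Fin k) ℂ)
    (hU : Matrix.fromBlocks U11 U12 U21 U22 ∈ Matrix.unitaryGroup (Fin n ⊕ Fin k) ℂ) :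
    ∀ z : ℂ, ‖z‖ < 1 → IsUnit (1 - z • U22) →
      ‖Matrix.toEuclideanCLM (𝕜 := ℂ) (U11 + z • (U12 * (1 - z • U22)⁻¹ * U21))‖ ≤ 1 := by
  intro z hz hunit
  set M : Matrix (Fin k) (Fin k) ℂ := 1 - z • U22 with hM
  set A : Matrix (Fin n) (Fin n) ℂ := U11 + z • (U12 * M⁻¹ * U21) with hA
  set Ufull := Matrix.fromBlocks U11 U12 U21 U22 with hUfull
  have hUstar : star Ufull * Ufull = 1 := hU.1
  -- squared norm function
  have Qdef : ∀ {m : Type} [Fintype m], (m → ℂ) → ℝ := fun {m} _ w =>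
    ‖(WithLp.equiv 2 (m → ℂ)).symm w‖ ^ 2
  apply ContinuousLinearMap.opNorm_le_bound _ zero_le_one
  intro x
  rw [one_mul]
  set x' : Fin n → ℂ := WithLp.equiv 2 _ x with hx'
  set y : Fin k → ℂ := M⁻¹ *ᵥ (U21 *ᵥ x') with hy
  have hMy : M *ᵥ y = U21 *ᵥ x' := by
    rw [hy, Matrix.mulVec_mulVec,
      Matrix.mul_nonsing_inv _ ((Matrix.isUnit_iff_isUnit_det _).mp hunit),
      Matrix.one_mulVec]
  have hsnd : U21 *ᵥ x' + z • (U22 *ᵥ y) = y := by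
    have h1 : M *ᵥ y = y - z • (U22 *ᵥ y) := by
      rw [hM, Matrix.sub_mulVec, Matrix.one_mulVec, Matrix.smul_mulVec]
    rw [h1, sub_eq_iff_eq_add] at hMy
    exact hMy.symm
  have hfst : A *ᵥ x' = U11 *ᵥ x' + z • (U12 *ᵥ y) := by
    rw [hA, Matrix.add_mulVec, Matrix.smul_mulVec, Matrix.mul_assoc,
      ← Matrix.mulVec_mulVec, ← Matrix.mulVec_mulVec, ← hy]
  set v : (Fin n ⊕ Fin k) → ℂ := Sum.elim x' (z • y) with hv
  have hUv : Ufull *ᵥ v = Sum.elim (A *ᵥ x') y := by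
    rw [hUfull, Matrix.fromBlocks_mulVec]
    simp only [hv, Sum.elim_comp_inl, Sum.elim_comp_inr, Matrix.mulVec_smul]
    rw [← hfst, hsnd]
  -- unitarity conserves dot products
  have hcons : star (Ufull *ᵥ v) ⬝ᵥ (Ufull *ᵥ v) = star v ⬝ᵥ v := by
    rw [Matrix.star_mulVec, Matrix.dotProduct_mulVec, Matrix.vecMul_vecMul,
      ← Matrix.star_eq_conjTranspose, hUstar, Matrix.vecMul_one]
  rw [hUv] at hcons
  rw [star_sum_elim, star_sum_elim, sumElim_dotProduct_sumElim,
    sumElim_dotProduct_sumElim] at hcons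
  -- take real parts
  have hre := congrArg Complex.re hcons
  simp only [Complex.add_re] at hre
  have hQ : ∀ {m : Type} [Fintype m] (w : m → ℂ),
      (star w ⬝ᵥ w).re = ‖(WithLp.equiv 2 (m → ℂ)).symm w‖ ^ 2 := by
    intro m _ w
    have h1 : (inner ℂ ((WithLp.equiv 2 (m → ℂ)).symm w)
        ((WithLp.equiv 2 (m → ℂ)).symm w) : ℂ) = star w ⬝ᵥ w :=
      (EuclideanSpace.inner_toLp_toLp w w).trans (dotProduct_comm _ _)
    rw [← h1]
    simpa using inner_self_eq_norm_sq (𝕜 := ℂ) ((WithLp.equiv 2 (m → ℂ)).symm w)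
  have hzy : (star (z • y) ⬝ᵥ (z • y)).re = ‖z‖ ^ 2 * (star y ⬝ᵥ y).re := by
    rw [star_smul, smul_dotProduct, dotProduct_smul]
    have : star z • z • (star y ⬝ᵥ y) = ((‖z‖ ^ 2 : ℝ) : ℂ) * (star y ⬝ᵥ y) := by
      rw [smul_smul]
      congr 1
      rw [Complex.star_def, ← Complex.normSq_eq_conj_mul_self, Complex.normSq_eq_norm_sq]
    rw [this, Complex.re_ofReal_mul]
  rw [hzy, hQ, hQ, hQ] at hre
  have hynn : (0:ℝ) ≤ ‖(WithLp.equiv 2 (Fin k → ℂ)).symm y‖ ^ 2 := sq_nonneg _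
  have hz2 : ‖z‖ ^ 2 ≤ 1 := by nlinarith [norm_nonneg z]
  have hfinal : ‖(WithLp.equiv 2 (Fin n → ℂ)).symm (A *ᵥ x')‖ ^ 2
      ≤ ‖(WithLp.equiv 2 (Fin n → ℂ)).symm x'‖ ^ 2 := by nlinarith
  have hAx : Matrix.toEuclideanCLM (𝕜 := ℂ) A x
      = (WithLp.equiv 2 (Fin n → ℂ)).symm (A *ᵥ x') := by
    rfl
  have hxnorm : ‖x‖ = ‖(WithLp.equiv 2 (Fin n → ℂ)).symm x'‖ := by
    rw [hx', (WithLp.equiv 2 (Fin n → ℂ)).symm_apply_apply]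
  rw [hAx, hxnorm]
  exact (pow_le_pow_iff_left₀ (norm_nonneg _) (norm_nonneg _) two_ne_zero).mp hfinal
end

section
/- Let p ∈ ℂ[z₁,…,z_d] have multidegree n = (n₁,…,n_d), have no zeros in the open polydisk 𝔻^d, and define the reflection p̃(z) = z₁^{n₁}⋯z_d^{n_d} · conj(p(1/z̄₁,…,1/z̄_d)). Then |p̃(z)| ≤ |p(z)| for all z ∈ 𝔻^d. -/
open MvPolynomial Polynomial NNReal


lemma key_ineq (s : ℝ) (hs0 : 0 < s) (hs1 : s < 1) (a : ℂ) (ha : 1 ≤ ‖a‖) :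
    ‖1 - (s:ℂ) * a‖ ≤ ‖(s:ℂ) - a‖ := by
  have h2 : 1 ≤ a.re*a.re + a.im*a.im := by
    have := one_le_pow₀ (n := 2) ha
    rwa [Complex.sq_norm, Complex.normSq_apply] at this
  rw [← Real.sqrt_sq (norm_nonneg ((s:ℂ) - a)), ← Real.sqrt_sq (norm_nonneg (1 - (s:ℂ)*a))]
  apply Real.sqrt_le_sqrt
  rw [Complex.sq_norm, Complex.sq_norm,
    Complex.normSq_apply, Complex.normSq_apply]
  simp only [Complex.sub_re, Complex.sub_im, Complex.mul_re, Complex.mul_im,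
    Complex.one_re, Complex.one_im, Complex.ofReal_re, Complex.ofReal_im]
  nlinarith [mul_nonneg (by nlinarith : (0:ℝ) ≤ 1 - s*s) (by linarith : (0:ℝ) ≤ a.re*a.re + a.im*a.im - 1)]

lemma norm_multiset_prod' (m : Multiset ℂ) : ‖m.prod‖ = (m.map fun a => ‖a‖).prod := by
  induction m using Multiset.induction with
  | empty => simp
  | cons a m ih => simp [norm_mul, ih]

lemma prod_le_prod' (s : ℝ) (hs0 : 0 < s) (hs1 : s < 1) (m : Multiset ℂ)
    (hm : ∀ a ∈ m, 1 ≤ ‖a‖) :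
    (m.map fun a => ‖1 - (s:ℂ)*a‖).prod ≤ (m.map fun a => ‖(s:ℂ) - a‖).prod := by
  induction m using Multiset.induction with
  | empty => simp
  | cons a m ih =>
    simp only [Multiset.map_cons, Multiset.prod_cons]
    have h1 := key_ineq s hs0 hs1 a (hm a (Multiset.mem_cons_self a m))
    have h2 := ih (fun b hb => hm b (Multiset.mem_cons_of_mem hb))
    have h3 : (0:ℝ) ≤ (m.map fun a => ‖1 - (s:ℂ)*a‖).prod :=
      Multiset.prod_nonneg (by intro x hx; simp at hx; obtain ⟨b, _, rfl⟩ := hx; positivity)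
    exact mul_le_mul h1 h2 h3 (norm_nonneg _)

lemma onevar (q : Polynomial ℂ) (hq : ∀ t : ℂ, ‖t‖ < 1 → q.eval t ≠ 0)
    (s : ℝ) (hs0 : 0 < s) (hs1 : s < 1) (N : ℕ) (hN : q.natDegree ≤ N) :
    s ^ N * ‖q.eval ((1/s : ℝ) : ℂ)‖ ≤ ‖q.eval (s : ℂ)‖ := by
  have hsp : Splits q := IsAlgClosed.splits q
  have hfact := hsp.eq_prod_roots
  have hcard : q.roots.card = q.natDegree := (splits_iff_card_roots).mp hsp
  have hroots : ∀ a ∈ q.roots, 1 ≤ ‖a‖ := by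
    intro a ha
    by_contra h
    exact hq a (lt_of_not_ge h) ((isRoot_of_mem_roots ha))
  have heval : ∀ t : ℂ, ‖q.eval t‖ = ‖q.leadingCoeff‖ * (q.roots.map fun a => ‖t - a‖).prod := by
    intro t
    conv_lhs => rw [hfact]
    rw [Polynomial.eval_mul, Polynomial.eval_C, norm_mul, Polynomial.eval_multiset_prod, Multiset.map_map, norm_multiset_prod',
      Multiset.map_map]
    simp [Function.comp_def]
  rw [heval, heval]
  have hs' : ((1:ℝ)/s : ℝ) = s⁻¹ := one_div s
  -- LHS rearrangement
  have hrw : s ^ N * (‖q.leadingCoeff‖ * (q.roots.map fun a => ‖((1/s:ℝ):ℂ) - a‖).prod)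
      = ‖q.leadingCoeff‖ * (s ^ (N - q.natDegree) *
        (q.roots.map fun a => ‖1 - (s:ℂ) * a‖).prod) := by
    have hmap : (q.roots.map fun a => ‖1 - (s:ℂ) * a‖)
        = q.roots.map fun a => s * ‖((1/s:ℝ):ℂ) - a‖ := by
      apply Multiset.map_congr rfl
      intro a _
      have : (1 : ℂ) - (s:ℂ) * a = (s:ℂ) * (((1/s:ℝ):ℂ) - a) := by
        have hsne : (s:ℂ) ≠ 0 := Complex.ofReal_ne_zero.mpr hs0.ne'
        push_cast
        field_simp
      rw [this, norm_mul, Complex.norm_real, Real.norm_of_nonneg hs0.le]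
    rw [hmap]
    rw [Multiset.prod_map_mul (f := fun _ => (s:ℝ)) (g := fun a => ‖((1/s:ℝ):ℂ) - a‖)]
    have hconst : (q.roots.map fun _ => s).prod = s ^ q.natDegree := by
      rw [Multiset.map_const', Multiset.prod_replicate, hcard]
    rw [hconst]
    have hNe : N - q.natDegree + q.natDegree = N := Nat.sub_add_cancel hN
    conv_lhs => rw [← hNe]
    rw [pow_add]
    ring
  rw [hrw]
  apply mul_le_mul_of_nonneg_left _ (norm_nonneg _)
  calc s ^ (N - q.natDegree) * (q.roots.map fun a => ‖1 - (s:ℂ) * a‖).prod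
      ≤ 1 * (q.roots.map fun a => ‖1 - (s:ℂ) * a‖).prod := by
        apply mul_le_mul_of_nonneg_right (pow_le_one₀ hs0.le hs1.le)
        exact Multiset.prod_nonneg (by intro x hx; simp at hx; obtain ⟨b, _, rfl⟩ := hx; positivity)
    _ = _ := one_mul _
    _ ≤ _ := prod_le_prod' s hs0 hs1 q.roots hroots


lemma mem_support_le {d : ℕ} (p : MvPolynomial (Fin d) ℂ) (m : Fin d →₀ ℕ)
    (hm : m ∈ p.support) (i : Fin d) : m i ≤ p.degreeOf i := by
  rw [MvPolynomial.degreeOf_eq_sup]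
  exact Finset.le_sup (f := fun m => m i) hm

noncomputable def nfin {d : ℕ} (p : MvPolynomial (Fin d) ℂ) : Fin d →₀ ℕ :=
  Finsupp.equivFunOnFinite.symm fun i => p.degreeOf i

noncomputable def ptil {d : ℕ} (p : MvPolynomial (Fin d) ℂ) : MvPolynomial (Fin d) ℂ :=
  ∑ m ∈ p.support, monomial (nfin p - m) ((starRingEnd ℂ) (p.coeff m))

lemma nfin_sub_apply {d : ℕ} (p : MvPolynomial (Fin d) ℂ) (m : Fin d →₀ ℕ) (i : Fin d) :
    (nfin p - m) i = p.degreeOf i - m i := by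
  rw [Finsupp.tsub_apply]
  simp [nfin]

lemma eval_ptil {d : ℕ} (p : MvPolynomial (Fin d) ℂ) (z : Fin d → ℂ) :
    eval z (ptil p) = ∑ m ∈ p.support,
      (starRingEnd ℂ) (p.coeff m) * ∏ i, z i ^ (p.degreeOf i - m i) := by
  rw [ptil, map_sum]
  apply Finset.sum_congr rfl
  intro m _
  rw [MvPolynomial.eval_monomial, Finsupp.prod_fintype _ _ (fun i => pow_zero _)]
  simp only [nfin_sub_apply]

lemma eval_ptil_eq {d : ℕ} (p : MvPolynomial (Fin d) ℂ) (z : Fin d → ℂ) (hz : ∀ i, z i ≠ 0) :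
    eval z (ptil p) = (∏ i, z i ^ p.degreeOf i) *
      (starRingEnd ℂ) (eval (fun i => ((starRingEnd ℂ) (z i))⁻¹) p) := by
  rw [eval_ptil, eval_eq', map_sum, Finset.mul_sum]
  apply Finset.sum_congr rfl
  intro m hm
  rw [map_mul, map_prod]
  have hc : ∀ i, (starRingEnd ℂ) (((starRingEnd ℂ) (z i))⁻¹ ^ m i) = (z i)⁻¹ ^ m i := by
    intro i
    rw [map_pow, map_inv₀, Complex.conj_conj]
  simp only [hc]
  have key : ∏ i, z i ^ (p.degreeOf i - m i)
      = (∏ i, z i ^ p.degreeOf i) * ∏ i, (z i)⁻¹ ^ m i := by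
    rw [← Finset.prod_mul_distrib]
    apply Finset.prod_congr rfl
    intro i _
    rw [inv_pow, ← pow_sub₀ (z i) (hz i) (mem_support_le p m hm i)]
  rw [key]
  ring

lemma eval_congr_degreeOf {d : ℕ} (p : MvPolynomial (Fin d) ℂ) (z z' : Fin d → ℂ)
    (h : ∀ i, z i = z' i ∨ p.degreeOf i = 0) : eval z p = eval z' p := by
  rw [eval_eq', eval_eq']
  apply Finset.sum_congr rfl
  intro m hm
  congr 1
  apply Finset.prod_congr rfl
  intro i _
  rcases h i with h'|h'
  · rw [h']
  · have h0 : m i = 0 := le_antisymm (h' ▸ mem_support_le p m hm i) (Nat.zero_le _)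
    rw [h0, pow_zero, pow_zero]


lemma eval_aeval' {d : ℕ} (p : MvPolynomial (Fin d) ℂ) (g : Fin d → Polynomial ℂ) (t : ℂ) :
    Polynomial.eval t (MvPolynomial.aeval g p) = eval (fun i => (g i).eval t) p := by
  rw [MvPolynomial.aeval_def, ← Polynomial.coe_evalRingHom,
    MvPolynomial.eval₂_comp_left (Polynomial.evalRingHom t)]
  have h : (Polynomial.evalRingHom t).comp (algebraMap ℂ (Polynomial ℂ)) = RingHom.id ℂ := by
    ext a; simp
  rw [h]
  rfl

lemma natDegree_aeval_le {d : ℕ} (p : MvPolynomial (Fin d) ℂ) (ω : Fin d → ℂ) :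
    (MvPolynomial.aeval (fun i => Polynomial.C (ω i) * Polynomial.X) p).natDegree
      ≤ ∑ i, p.degreeOf i := by
  rw [MvPolynomial.aeval_def, MvPolynomial.eval₂_eq]
  apply Polynomial.natDegree_sum_le_of_forall_le
  intro m hm
  apply le_trans (Polynomial.natDegree_mul_le)
  have h1 : (algebraMap ℂ (Polynomial ℂ) (p.coeff m)).natDegree = 0 := Polynomial.natDegree_C _
  rw [h1, zero_add]
  apply le_trans (Polynomial.natDegree_prod_le _ _)
  calc ∑ i ∈ m.support, ((Polynomial.C (ω i) * Polynomial.X) ^ m i).natDegree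
      ≤ ∑ i ∈ m.support, m i := by
        apply Finset.sum_le_sum
        intro i _
        apply le_trans Polynomial.natDegree_pow_le
        have : (Polynomial.C (ω i) * Polynomial.X).natDegree ≤ 1 :=
          le_trans (Polynomial.natDegree_C_mul_le _ _) (le_of_eq Polynomial.natDegree_X)
        calc m i * (Polynomial.C (ω i) * Polynomial.X).natDegree ≤ m i * 1 :=
              Nat.mul_le_mul_left _ this
          _ = m i := Nat.mul_one _
    _ ≤ ∑ i, m i := Finset.sum_le_sum_of_subset (Finset.subset_univ _)
    _ ≤ ∑ i, p.degreeOf i := Finset.sum_le_sum fun i _ => mem_support_le p m hm i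

lemma torus_bound (p : MvPolynomial (Fin d) ℂ)
    (hp : ∀ z : Fin d → ℂ, (∀ i, ‖z i‖ < 1) → eval z p ≠ 0)
    (s : ℝ) (hs0 : 0 < s) (hs1 : s < 1)
    (w : Fin d → ℂ) (hw : ∀ i, ‖w i‖ = s) :
    ‖eval w (ptil p)‖ ≤ ‖eval w p‖ := by
  have hwne : ∀ i, w i ≠ 0 := fun i h => by
    have := hw i; rw [h, norm_zero] at this; exact hs0.ne' this.symm
  set ω : Fin d → ℂ := fun i => w i / (s : ℂ) with hω
  have hωn : ∀ i, ‖ω i‖ = 1 := by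
    intro i
    rw [hω]
    simp only [norm_div, Complex.norm_real, Real.norm_of_nonneg hs0.le, hw i]
    exact div_self hs0.ne'
  have hωne : ∀ i, ω i ≠ 0 := fun i h => by
    have := hωn i; rw [h, norm_zero] at this; norm_num at this
  set q : Polynomial ℂ := MvPolynomial.aeval (fun i => Polynomial.C (ω i) * Polynomial.X) p with hqdef
  have hqeval : ∀ t : ℂ, q.eval t = eval (fun i => ω i * t) p := by
    intro t
    rw [hqdef, eval_aeval']
    simp
  have hq : ∀ t : ℂ, ‖t‖ < 1 → q.eval t ≠ 0 := by
    intro t ht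
    rw [hqeval]
    apply hp
    intro i
    rw [norm_mul, hωn i, one_mul]
    exact ht
  have hqs : q.eval (s : ℂ) = eval w p := by
    rw [hqeval]
    have hfun : (fun i => ω i * (s:ℂ)) = w := by
      funext i
      rw [hω]
      have : (s:ℂ) ≠ 0 := Complex.ofReal_ne_zero.mpr hs0.ne'
      field_simp
    rw [hfun]
  have hu : (fun i => ((starRingEnd ℂ) (w i))⁻¹) = fun i => ω i * ((1/s : ℝ) : ℂ) := by
    funext i
    have h1 : ω i * (starRingEnd ℂ) (ω i) = 1 := by
      rw [Complex.mul_conj, Complex.normSq_eq_norm_sq, hωn i]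
      norm_num
    have h2 : w i = (s:ℂ) * ω i := by
      rw [hω]
      have : (s:ℂ) ≠ 0 := Complex.ofReal_ne_zero.mpr hs0.ne'
      field_simp
    rw [h2, map_mul, Complex.conj_ofReal, mul_inv, inv_eq_of_mul_eq_one_left h1]
    push_cast
    ring
  rw [eval_ptil_eq p w hwne, norm_mul, RCLike.norm_conj, hu, ← hqeval, ← hqs]
  have hprod : ‖∏ i, w i ^ p.degreeOf i‖ = s ^ (∑ i, p.degreeOf i) := by
    rw [norm_prod]
    have : ∀ i : Fin d, ‖w i ^ p.degreeOf i‖ = s ^ p.degreeOf i := by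
      intro i; rw [norm_pow, hw i]
    rw [Finset.prod_congr rfl fun i _ => this i, Finset.prod_pow_eq_pow_sum]
  rw [hprod]
  exact onevar q hq s hs0 hs1 _ (natDegree_aeval_le p ω)

lemma main_ineq (p : MvPolynomial (Fin d) ℂ)
    (hp : ∀ z : Fin d → ℂ, (∀ i, ‖z i‖ < 1) → eval z p ≠ 0)
    (z : Fin d → ℂ) (hz : ∀ i, ‖z i‖ < 1) :
    ‖eval z (ptil p)‖ ≤ ‖eval z p‖ := by
  obtain ⟨s, hs0, hs1, hzs⟩ : ∃ s : ℝ, 0 < s ∧ s < 1 ∧ ∀ i, ‖z i‖ ≤ s := by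
    refine ⟨(((Finset.univ : Finset (Fin d)).sup fun i => ‖z i‖₊ : ℝ≥0) + 1)/2, by positivity,
      ?_, ?_⟩
    · have hM : ((Finset.univ : Finset (Fin d)).sup fun i => ‖z i‖₊) < 1 := by
        rw [Finset.sup_lt_iff (by norm_num : (⊥ : ℝ≥0) < 1)]
        intro i _
        have := hz i
        rw [← coe_nnnorm] at this
        exact_mod_cast this
      have : (((Finset.univ : Finset (Fin d)).sup fun i => ‖z i‖₊ : ℝ≥0) : ℝ) < 1 := by
        exact_mod_cast hM
      linarith
    · intro i
      have h1 : ‖z i‖₊ ≤ (Finset.univ : Finset (Fin d)).sup fun i => ‖z i‖₊ :=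
        Finset.le_sup (f := fun i => ‖z i‖₊) (Finset.mem_univ i)
      have h2 : ‖z i‖ ≤ (((Finset.univ : Finset (Fin d)).sup fun i => ‖z i‖₊ : ℝ≥0) : ℝ) := by
        rw [← coe_nnnorm]
        exact_mod_cast h1
      have h3 : ‖z i‖ < 1 := hz i
      linarith
  have key : ∀ k : ℕ, k ≤ d → ∃ w : Fin d → ℂ,
      (∀ i : Fin d, (i : ℕ) < k → ‖w i‖ = s) ∧ (∀ i : Fin d, k ≤ (i : ℕ) → w i = z i) ∧
      ‖eval z (ptil p)‖ / ‖eval z p‖ ≤ ‖eval w (ptil p)‖ / ‖eval w p‖ := by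
    intro k
    induction k with
    | zero =>
      exact fun _ => ⟨z, fun i h => absurd h (Nat.not_lt_zero _), fun _ _ => rfl, le_refl _⟩
    | succ k ih =>
      intro hk1
      obtain ⟨w, hw1, hw2, hw3⟩ := ih (Nat.le_of_succ_le hk1)
      have hkd : k < d := Nat.lt_of_succ_le hk1
      set kk : Fin d := ⟨k, hkd⟩ with hkk
      have hwz : w kk = z kk := hw2 kk (le_refl _)
      have hwle : ∀ i, ‖w i‖ ≤ s := by
        intro i
        rcases lt_or_ge (i : ℕ) k with h | h
        · exact le_of_eq (hw1 i h)
        · rw [hw2 i h]; exact hzs i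
      set g : Fin d → Polynomial ℂ := fun i => if i = kk then Polynomial.X else Polynomial.C (w i)
        with hgdef
      have hg : ∀ (t : ℂ) i, (g i).eval t = Function.update w kk t i := by
        intro t i
        rw [Function.update_apply, hgdef]
        by_cases h : i = kk <;> simp [h]
      have hfun : ∀ t : ℂ, (fun i => (g i).eval t) = Function.update w kk t := by
        intro t; funext i; exact hg t i
      have hQ1 : ∀ t : ℂ, (MvPolynomial.aeval g (ptil p)).eval t
          = eval (Function.update w kk t) (ptil p) := by
        intro t; rw [eval_aeval', hfun]
      have hQ2 : ∀ t : ℂ, (MvPolynomial.aeval g p).eval t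
          = eval (Function.update w kk t) p := by
        intro t; rw [eval_aeval', hfun]
      have hupd : ∀ t : ℂ, ‖t‖ < 1 → ∀ i, ‖Function.update w kk t i‖ < 1 := by
        intro t ht i
        rw [Function.update_apply]
        split
        · exact ht
        · exact lt_of_le_of_lt (hwle i) hs1
      have hQ2ne : ∀ t : ℂ, ‖t‖ < 1 → (MvPolynomial.aeval g p).eval t ≠ 0 := by
        intro t ht
        rw [hQ2]
        exact hp _ (hupd t ht)
      set h : ℂ → ℂ := fun t =>
        (MvPolynomial.aeval g (ptil p)).eval t / (MvPolynomial.aeval g p).eval t with hhdef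
      have hdiffat : ∀ t : ℂ, ‖t‖ < 1 → DifferentiableAt ℂ h t := by
        intro t ht
        exact (Polynomial.differentiableAt _).div (Polynomial.differentiableAt _) (hQ2ne t ht)
      have hdiff : DiffContOnCl ℂ h (Metric.ball 0 s) := by
        apply DifferentiableOn.diffContOnCl
        rw [closure_ball (0:ℂ) hs0.ne']
        intro t ht
        have ht1 : ‖t‖ < 1 := by
          rw [Metric.mem_closedBall, dist_zero_right] at ht
          exact lt_of_le_of_lt ht hs1
        exact (hdiffat t ht1).differentiableWithinAt
      have hsph : (Metric.sphere (0:ℂ) s).Nonempty := NormedSpace.sphere_nonempty.mpr hs0.le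
      have hcont : ContinuousOn (fun t => ‖h t‖) (Metric.sphere (0:ℂ) s) := by
        intro t ht
        rw [mem_sphere_zero_iff_norm] at ht
        exact ((hdiffat t (ht ▸ hs1)).continuousAt.norm).continuousWithinAt
      obtain ⟨t₀, ht₀, hmax⟩ := (isCompact_sphere (0:ℂ) s).exists_isMaxOn hsph hcont
      have hzk : w kk ∈ closure (Metric.ball (0:ℂ) s) := by
        rw [closure_ball (0:ℂ) hs0.ne', Metric.mem_closedBall, dist_zero_right]
        exact hwle kk
      have hb : ‖h (w kk)‖ ≤ ‖h t₀‖ := by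
        apply Complex.norm_le_of_forall_mem_frontier_norm_le Metric.isBounded_ball hdiff _ hzk
        intro x hx
        rw [frontier_ball (0:ℂ) hs0.ne'] at hx
        exact hmax hx
      refine ⟨Function.update w kk t₀, ?_, ?_, ?_⟩
      · intro i hi
        rw [Function.update_apply]
        split
        · rename_i he
          subst he
          rwa [mem_sphere_zero_iff_norm] at ht₀
        · rename_i he
          apply hw1
          rcases Nat.lt_succ_iff_lt_or_eq.mp hi with h' | h'
          · exact h'
          · exact absurd (Fin.ext h' : i = kk) he
      · intro i hi
        rw [Function.update_apply]
        have : i ≠ kk := by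
          intro hcon
          rw [hcon] at hi
          simp [hkk] at hi
        rw [if_neg this]
        exact hw2 i (Nat.le_of_succ_le hi)
      · refine le_trans hw3 ?_
        have h1 : ‖eval w (ptil p)‖ / ‖eval w p‖ = ‖h (w kk)‖ := by
          rw [hhdef]
          simp only [hQ1, hQ2]
          rw [Function.update_eq_self, norm_div]
        have h2 : ‖h t₀‖ = ‖eval (Function.update w kk t₀) (ptil p)‖
            / ‖eval (Function.update w kk t₀) p‖ := by
          rw [hhdef]
          simp only [hQ1, hQ2]
          rw [norm_div]
        rw [h1, ← h2]
        exact hb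
  obtain ⟨w, hw1, _, hw3⟩ := key d (le_refl d)
  have hallw : ∀ i, ‖w i‖ = s := fun i => hw1 i i.isLt
  have hwlt : ∀ i, ‖w i‖ < 1 := fun i => (hallw i) ▸ hs1
  have hwne : eval w p ≠ 0 := hp w hwlt
  have hzne : eval z p ≠ 0 := hp z hz
  have htor := torus_bound p hp s hs0 hs1 w hallw
  have hle1 : ‖eval z (ptil p)‖ / ‖eval z p‖ ≤ 1 :=
    le_trans hw3 ((div_le_one (norm_pos_iff.mpr hwne)).mpr htor)
  rwa [div_le_one (norm_pos_iff.mpr hzne)] at hle1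


/-- If `p` has no zeros in the open polydisk, then `|p̃(z)| ≤ |p(z)|` on the polydisk,
where `p̃` is the reflection of `p` at its multidegree. -/
theorem stmt3 (d : ℕ) (p : MvPolynomial (Fin d) ℂ)
    (hp : ∀ z : Fin d → ℂ, (∀ i, ‖z i‖ < 1) → eval z p ≠ 0) :
    ∀ z : Fin d → ℂ, (∀ i, ‖z i‖ < 1) →
      ‖(∏ i, z i ^ p.degreeOf i) *
          (starRingEnd ℂ) (eval (fun i => ((starRingEnd ℂ) (z i))⁻¹) p)‖ ≤ ‖eval z p‖ := by
  intro z hz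
  by_cases ha : ∃ i, z i = 0 ∧ p.degreeOf i ≠ 0
  · obtain ⟨i, hzi, hni⟩ := ha
    have h0 : (∏ i, z i ^ p.degreeOf i) = 0 :=
      Finset.prod_eq_zero (Finset.mem_univ i) (by rw [hzi]; exact zero_pow hni)
    rw [h0, zero_mul, norm_zero]
    exact norm_nonneg _
  · push_neg at ha
    set z' : Fin d → ℂ := fun i => if z i = 0 then (1/2 : ℂ) else z i with hz'def
    have hz' : ∀ i, ‖z' i‖ < 1 := by
      intro i
      rw [hz'def]
      by_cases h : z i = 0
      · simp [h]; norm_num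
      · simp only [h, if_false]; exact hz i
    have hz'ne : ∀ i, z' i ≠ 0 := by
      intro i
      rw [hz'def]
      by_cases h : z i = 0
      · simp [h]
      · simp only [hz'def] at *; simp [h]
    have hcong : ∀ i, z i = z' i ∨ p.degreeOf i = 0 := by
      intro i
      by_cases h : z i = 0
      · exact Or.inr (ha i h)
      · exact Or.inl (by rw [hz'def]; simp [h])
    have e1 : eval z p = eval z' p := eval_congr_degreeOf p z z' hcong
    have e2 : eval (fun i => ((starRingEnd ℂ) (z i))⁻¹) p
        = eval (fun i => ((starRingEnd ℂ) (z' i))⁻¹) p :=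
      eval_congr_degreeOf p _ _ (fun i => (hcong i).imp (fun h => by rw [h]) id)
    have e3 : (∏ i, z i ^ p.degreeOf i) = ∏ i, z' i ^ p.degreeOf i := by
      apply Finset.prod_congr rfl
      intro i _
      rcases hcong i with h | h
      · rw [h]
      · rw [h, pow_zero, pow_zero]
    rw [e1, e2, e3, ← eval_ptil_eq p z' hz'ne]
    exact main_ineq p hp z' hz'
end

section
/- Let p ∈ ℂ[z₁,…,z_d] have total degree n, no zeros in the open polydisk 𝔻^d, and vanish to order exactly M at the point u = (1,…,1), so that p(u − ζ) = Σ_{j=M}^{n} P_j(ζ) where each P_j is homogeneous of degree j and P_M ≠ 0. Then P_M has no zeros in (RHP)^d, the product of open right half-planes. -/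
open MvPolynomial

private lemma aux_diff_eval {d : ℕ} (q : MvPolynomial (Fin d) ℂ) (v : ℂ → Fin d → ℂ)
    (hv : ∀ i, Differentiable ℂ fun s => v s i) :
    Differentiable ℂ fun s => eval (v s) q := by
  induction q using MvPolynomial.induction_on with
  | C a => simp only [eval_C]; exact differentiable_const _
  | add p q hp hq => simp only [map_add]; exact hp.add hq
  | mul_X p i hp => simp only [map_mul, eval_X]; exact hp.mul (hv i)

private lemma aux_eval_scale {d j : ℕ} {q : MvPolynomial (Fin d) ℂ} (hq : q.IsHomogeneous j)
    (c : ℂ) (x : Fin d → ℂ) :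
    eval (fun i => c * x i) q = c ^ j * eval x q := by
  rw [eval_eq', eval_eq', Finset.mul_sum]
  refine Finset.sum_congr rfl fun m hm => ?_
  have hcm : coeff m q ≠ 0 := mem_support_iff.mp hm
  have hdeg : m.degree = j := by
    by_contra h
    exact hcm (hq.coeff_eq_zero h)
  have hsum : ∑ i, m i = j := by
    rw [← hdeg, Finsupp.degree]
    exact (Finset.sum_subset (Finset.subset_univ _) fun i _ hi =>
      Finsupp.notMem_support_iff.mp hi).symm
  calc (coeff m q) * ∏ i, (c * x i) ^ m i
      = coeff m q * ((∏ i, c ^ m i) * ∏ i, x i ^ m i) := by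
        rw [← Finset.prod_mul_distrib]; simp_rw [mul_pow]
    _ = c ^ j * (coeff m q * ∏ i, x i ^ m i) := by
        rw [Finset.prod_pow_eq_pow_sum, hsum]; ring

set_option maxHeartbeats 1000000 in
/-- The bottom homogeneous term at a boundary zero of a polynomial with no zeros in the
polydisk has no zeros in the product of open right half-planes. -/
theorem stmt4 (d M : ℕ) (p : MvPolynomial (Fin d) ℂ)
    (hp : ∀ z : Fin d → ℂ, (∀ i, ‖z i‖ < 1) → eval z p ≠ 0)
    (P : ℕ → MvPolynomial (Fin d) ℂ)
    (hhom : ∀ j, (P j).IsHomogeneous j)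
    (hexp : ∀ ζ : Fin d → ℂ,
      eval (fun i => 1 - ζ i) p = ∑ j ∈ Finset.range (p.totalDegree + 1), eval ζ (P j))
    (hlow : ∀ j, j < M → P j = 0) (hM : P M ≠ 0) :
    ∀ ζ : Fin d → ℂ, (∀ i, 0 < (ζ i).re) → eval ζ (P M) ≠ 0 := by
  intro ζ0 hζ0 hzero
  rcases le_or_gt M p.totalDegree with hMn | hMn
  case inr =>
    -- M > totalDegree : all homogeneous parts up to totalDegree vanish, so p ≡ 0
    apply hp (fun _ => (0:ℂ)) (fun i => by simp)
    have h := hexp (fun _ => 1)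
    have h1 : (fun i : Fin d => (1:ℂ) - (fun _ : Fin d => (1:ℂ)) i) = fun _ => (0:ℂ) := by
      funext i; ring
    rw [h1] at h
    rw [h]
    refine Finset.sum_eq_zero fun j hj => ?_
    rw [hlow j (lt_of_le_of_lt (Nat.lt_succ_iff.mp (Finset.mem_range.mp hj)) hMn), map_zero]
  case inl =>
  set n := p.totalDegree with hn
  obtain ⟨w, hw⟩ : ∃ x : Fin d → ℂ, eval x (P M) ≠ 0 := by
    by_contra h
    push_neg at h
    exact hM (MvPolynomial.funext fun x => by rw [h x, map_zero])
  rcases Nat.eq_zero_or_pos d with hd0 | hd0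
  · subst hd0
    have hwz : w = ζ0 := funext fun i => i.elim0
    rw [hwz] at hw
    exact hw hzero
  haveI : Nonempty (Fin d) := ⟨⟨0, hd0⟩⟩
  set η : Fin d → ℂ := fun i => w i - ζ0 i with hη
  set ξ : ℂ → Fin d → ℂ := fun s i => ζ0 i + s * η i with hξ
  have hvdiff : ∀ i, Differentiable ℂ fun s => ξ s i := fun i => by
    simp only [hξ]
    exact (differentiable_const (ζ0 i)).add (differentiable_id.mul (differentiable_const (η i)))
  set g0 : ℂ → ℂ := fun s => eval (ξ s) (P M) with hg0def
  have hg0diff : Differentiable ℂ g0 := aux_diff_eval _ _ hvdiff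
  have hξ0 : ξ 0 = ζ0 := funext fun i => by simp [hξ]
  have hξ1 : ξ 1 = w := funext fun i => by simp [hξ, hη]
  have hg00 : g0 0 = 0 := by rw [hg0def]; simp only; rw [hξ0]; exact hzero
  have hg01 : g0 1 ≠ 0 := by rw [hg0def]; simp only; rw [hξ1]; exact hw
  -- isolated zeros: find a punctured neighbourhood of 0 where g0 is nonzero
  have hAnal : AnalyticOnNhd ℂ g0 Set.univ := Complex.analyticOnNhd_univ_iff_differentiable.mpr hg0diff
  obtain ⟨ε, hε, hεball⟩ : ∃ ε > 0, ∀ s : ℂ, s ≠ 0 → ‖s‖ < ε → g0 s ≠ 0 := by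
    rcases (hAnal 0 trivial).eventually_eq_zero_or_eventually_ne_zero with h | h
    · exfalso
      exact hg01 (hAnal.eqOn_zero_of_preconnected_of_eventuallyEq_zero isPreconnected_univ
        trivial h (Set.mem_univ 1))
    · rw [eventually_nhdsWithin_iff, Metric.eventually_nhds_iff] at h
      obtain ⟨ε, hε, hb⟩ := h
      exact ⟨ε, hε, fun s hs hsε =>
        hb (by simpa [dist_eq_norm] using hsε) (Set.mem_compl_singleton_iff.mpr hs)⟩
  -- radius
  set r : ℝ := min (ε/2)
    (Finset.univ.inf' Finset.univ_nonempty fun i => (ζ0 i).re / (2 * (‖η i‖ + 1))) with hrdef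
  have hr : 0 < r := lt_min (by linarith)
    ((Finset.lt_inf'_iff _).mpr fun i _ => div_pos (hζ0 i) (by positivity))
  have hrη : ∀ i, r * ‖η i‖ ≤ (ζ0 i).re / 2 := by
    intro i
    have h1 : r ≤ (ζ0 i).re / (2*(‖η i‖+1)) :=
      le_trans (min_le_right _ _) (Finset.inf'_le _ (Finset.mem_univ i))
    have h2 : 0 ≤ ‖η i‖ := norm_nonneg _
    have h4 : r * (2*(‖η i‖+1)) ≤ (ζ0 i).re := by
      rw [← le_div_iff₀ (by positivity)]; exact h1
    nlinarith [hr.le]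
  have hrε : r < ε := lt_of_le_of_lt (min_le_left _ _) (by linarith)
  have hRe : ∀ s : ℂ, ‖s‖ ≤ r → ∀ i, (ζ0 i).re / 2 ≤ (ξ s i).re := by
    intro s hs i
    have h1 : |(s * η i).re| ≤ ‖s * η i‖ := by
      exact Complex.abs_re_le_norm _
    have h2 : ‖s * η i‖ ≤ r * ‖η i‖ := by
      rw [norm_mul]; exact mul_le_mul_of_nonneg_right hs (norm_nonneg _)
    have h3 := hrη i
    have h5 : (ξ s i).re = (ζ0 i).re + (s * η i).re := by simp [hξ]
    rw [h5]
    have h6 := abs_le.mp (h1.trans h2)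
    linarith [h6.1]
  set C : ℝ := Finset.univ.sup' Finset.univ_nonempty (fun i => ‖ζ0 i‖ + r * ‖η i‖) with hCdef
  have hCb : ∀ s : ℂ, ‖s‖ ≤ r → ∀ i, ‖ξ s i‖ ≤ C := by
    intro s hs i
    have h1 : ‖ξ s i‖ ≤ ‖ζ0 i‖ + ‖s * η i‖ := by
      simp only [hξ]; exact norm_add_le _ _
    have h2 : ‖s * η i‖ ≤ r * ‖η i‖ := by
      rw [norm_mul]; exact mul_le_mul_of_nonneg_right hs (norm_nonneg _)
    have h3 : ‖ζ0 i‖ + r * ‖η i‖ ≤ C := by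
      rw [hCdef]; exact Finset.le_sup' (fun i => ‖ζ0 i‖ + r * ‖η i‖) (Finset.mem_univ i)
    linarith
  have hC : 0 < C := by
    obtain ⟨i⟩ := ‹Nonempty (Fin d)›
    have h1 : (ζ0 i).re ≤ ‖ζ0 i‖ := by
      exact Complex.re_le_norm _
    have h2 : ‖ζ0 i‖ + r * ‖η i‖ ≤ C := by
      rw [hCdef]; exact Finset.le_sup' (fun i => ‖ζ0 i‖ + r * ‖η i‖) (Finset.mem_univ i)
    nlinarith [hζ0 i, hr.le, norm_nonneg (η i)]
  set δ : ℝ := Finset.univ.inf' Finset.univ_nonempty (fun i => (ζ0 i).re / 2) with hδdef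
  have hδ : 0 < δ := (Finset.lt_inf'_iff _).mpr fun i _ => by linarith [hζ0 i]
  have hδle : ∀ s : ℂ, ‖s‖ ≤ r → ∀ i, δ ≤ (ξ s i).re := fun s hs i =>
    le_trans (Finset.inf'_le _ (Finset.mem_univ i)) (hRe s hs i)
  -- minimum of ‖g0‖ on the sphere of radius r
  have hsne : (Metric.sphere (0:ℂ) r).Nonempty := NormedSpace.sphere_nonempty.mpr hr.le
  obtain ⟨s₀, hs₀, hmin'⟩ := (isCompact_sphere (0:ℂ) r).exists_isMinOn hsne
    (hg0diff.continuous.norm.continuousOn)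
  have hmin : ∀ z ∈ Metric.sphere (0:ℂ) r, ‖g0 s₀‖ ≤ ‖g0 z‖ := fun z hz => hmin' hz
  set m : ℝ := ‖g0 s₀‖ with hmdef
  have hs₀norm : ‖s₀‖ = r := by simpa using hs₀
  have hm : 0 < m := by
    rw [hmdef, norm_pos_iff]
    apply hεball s₀
    · intro h; rw [h] at hs₀norm; simp at hs₀norm; exact hr.ne' hs₀norm.symm
    · rw [hs₀norm]; exact hrε
  -- bounds for higher homogeneous parts on the closed ball
  have hBex : ∀ j : ℕ, ∃ Bj : ℝ, ∀ s ∈ Metric.closedBall (0:ℂ) r, ‖eval (ξ s) (P j)‖ ≤ Bj :=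
    fun j => (isCompact_closedBall (0:ℂ) r).exists_bound_of_continuousOn
      ((aux_diff_eval (P j) ξ hvdiff).continuous.continuousOn)
  choose B hB using hBex
  have hBnn : ∀ j, 0 ≤ B j := fun j =>
    le_trans (norm_nonneg _) (hB j 0 (by simpa using hr.le))
  set Bsum : ℝ := ∑ j ∈ Finset.Ico (M+1) (n+1), B j with hBsumdef
  have hBsumnn : 0 ≤ Bsum := Finset.sum_nonneg fun j _ => hBnn j
  set F : ℝ → ℂ → ℂ :=
    fun t s => ∑ j ∈ Finset.Ico M (n+1), (t:ℂ)^(j - M) * eval (ξ s) (P j) with hFdef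
  have hMlt : M < n + 1 := Nat.lt_succ_of_le hMn
  have hsplit : ∀ (t : ℝ) (s : ℂ),
      F t s = eval (ξ s) (P M) + ∑ j ∈ Finset.Ico (M+1) (n+1), (t:ℂ)^(j-M) * eval (ξ s) (P j) := by
    intro t s
    rw [hFdef]
    simp only
    rw [Finset.sum_eq_sum_Ico_succ_bot hMlt]
    simp
  have hclose : ∀ t : ℝ, 0 ≤ t → t ≤ 1 → ∀ s : ℂ, ‖s‖ ≤ r →
      ‖F t s - g0 s‖ ≤ t * Bsum := by
    intro t ht0 ht1 s hs
    have hdiff : F t s - g0 s = ∑ j ∈ Finset.Ico (M+1) (n+1), (t:ℂ)^(j-M) * eval (ξ s) (P j) := by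
      rw [hsplit t s, hg0def]; ring
    rw [hdiff, hBsumdef, Finset.mul_sum]
    refine le_trans (norm_sum_le _ _) (Finset.sum_le_sum fun j hj => ?_)
    obtain ⟨hj1, _⟩ := Finset.mem_Ico.mp hj
    rw [norm_mul, norm_pow]
    have h1 : ‖((t:ℝ):ℂ)‖ = t := by
      rw [Complex.norm_real, Real.norm_eq_abs, abs_of_nonneg ht0]
    rw [h1]
    have h2 : t ^ (j - M) ≤ t :=
      pow_le_of_le_one ht0 ht1 (Nat.sub_ne_zero_of_lt hj1)
    have h3 : ‖eval (ξ s) (P j)‖ ≤ B j :=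
      hB j s (by simpa [Metric.mem_closedBall, dist_eq_norm] using hs)
    exact mul_le_mul h2 h3 (norm_nonneg _) ht0
  have hkey : ∀ t : ℝ, 0 < t → t * C^2 ≤ δ → ∀ s : ℂ, ‖s‖ ≤ r → F t s ≠ 0 := by
    intro t ht htC s hs
    have hident : ((t:ℝ):ℂ)^M * F t s = eval (fun i => 1 - (t:ℂ) * ξ s i) p := by
      have h := hexp (fun i => (t:ℂ) * ξ s i)
      rw [h]
      rw [Finset.sum_congr rfl (fun j _ => aux_eval_scale (hhom j) ((t:ℝ):ℂ) (ξ s))]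
      rw [← Finset.sum_range_add_sum_Ico _ (le_of_lt hMlt)]
      have hz : ∑ j ∈ Finset.range M, ((t:ℝ):ℂ)^j * eval (ξ s) (P j) = 0 :=
        Finset.sum_eq_zero fun j hj => by
          rw [hlow j (Finset.mem_range.mp hj), map_zero, mul_zero]
      rw [hz, zero_add, hFdef]
      simp only
      rw [Finset.mul_sum]
      refine (Finset.sum_congr rfl fun j hj => ?_).symm
      have hMj : M ≤ j := (Finset.mem_Ico.mp hj).1
      rw [← mul_assoc, ← pow_add, Nat.add_sub_cancel' hMj]
    have hne : eval (fun i => 1 - (t:ℂ) * ξ s i) p ≠ 0 := by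
      apply hp
      intro i
      have hre : δ ≤ (ξ s i).re := hδle s hs i
      have hno : ‖ξ s i‖ ≤ C := hCb s hs i
      have hsq : ‖(1:ℂ) - (t:ℂ) * ξ s i‖^2
          = 1 - 2*t*(ξ s i).re + t^2 * ((ξ s i).re^2 + (ξ s i).im^2) := by
        rw [Complex.sq_norm, Complex.normSq_apply]
        simp [Complex.sub_re, Complex.sub_im, Complex.mul_re, Complex.mul_im]
        ring
      have hsq2 : (ξ s i).re^2 + (ξ s i).im^2 = ‖ξ s i‖^2 := by
        rw [Complex.sq_norm, Complex.normSq_apply]; ring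
      have hC2 : ‖ξ s i‖^2 ≤ C^2 := by nlinarith [norm_nonneg (ξ s i)]
      have hlt1 : ‖(1:ℂ) - (t:ℂ) * ξ s i‖^2 < 1 := by
        rw [hsq, hsq2]
        nlinarith [mul_nonneg ht.le (sub_nonneg.mpr hre),
          mul_nonneg ht.le (sub_nonneg.mpr htC), sq_nonneg t,
          mul_le_mul_of_nonneg_left hC2 (sq_nonneg t)]
      have := norm_nonneg ((1:ℂ) - (t:ℂ) * ξ s i)
      nlinarith
    intro hF0
    rw [hF0, mul_zero] at hident
    exact hne hident.symm
  -- choose t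
  set t : ℝ := min (δ / C^2) (min 1 (m / (2*(Bsum+1)))) with htdef
  have ht0 : 0 < t := lt_min (div_pos hδ (by positivity))
    (lt_min one_pos (div_pos hm (by positivity)))
  have ht1 : t ≤ 1 := le_trans (min_le_right _ _) (min_le_left _ _)
  have htC : t * C^2 ≤ δ := by
    have h := min_le_left (δ / C^2) (min 1 (m / (2*(Bsum+1))))
    rw [← htdef] at h
    exact (le_div_iff₀ (by positivity : (0:ℝ) < C^2)).mp h
  have htm : t * Bsum < m/2 := by
    have h1 : t ≤ m / (2*(Bsum+1)) := le_trans (min_le_right _ _) (min_le_right _ _)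
    have h2 : t * (2*(Bsum+1)) ≤ m := (le_div_iff₀ (by positivity)).mp h1
    nlinarith
  have hnz : ∀ s : ℂ, ‖s‖ ≤ r → F t s ≠ 0 := hkey t ht0 htC
  have hFdiffable : Differentiable ℂ (F t) := by
    rw [hFdef]
    exact Differentiable.fun_sum fun j _ =>
      (differentiable_const _).mul (aux_diff_eval (P j) ξ hvdiff)
  have hclosure : closure (Metric.ball (0:ℂ) r) = Metric.closedBall 0 r :=
    closure_ball 0 hr.ne'
  have hfrontier : frontier (Metric.ball (0:ℂ) r) = Metric.sphere 0 r :=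
    frontier_ball 0 hr.ne'
  have hdc : DiffContOnCl ℂ (fun s => (F t s)⁻¹) (Metric.ball 0 r) := by
    constructor
    · exact (hFdiffable.differentiableOn).inv fun s hs =>
        hnz s (le_of_lt (mem_ball_zero_iff.mp hs))
    · rw [hclosure]
      exact (hFdiffable.continuous.continuousOn).inv₀ fun s hs =>
        hnz s (mem_closedBall_zero_iff.mp hs)
  have hbound : ∀ z ∈ frontier (Metric.ball (0:ℂ) r), ‖(F t z)⁻¹‖ ≤ (m/2)⁻¹ := by
    intro z hz
    rw [hfrontier] at hz
    have hzr : ‖z‖ = r := by simpa using hz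
    have h1 : m ≤ ‖g0 z‖ := hmin z hz
    have h2 : ‖F t z - g0 z‖ ≤ t * Bsum := hclose t ht0.le ht1 z hzr.le
    have h3 : m/2 ≤ ‖F t z‖ := by
      have h4 := norm_sub_norm_le (g0 z) (F t z)
      rw [norm_sub_rev] at h4
      linarith
    rw [norm_inv]
    exact inv_anti₀ (half_pos hm) h3
  have h0mem : (0:ℂ) ∈ closure (Metric.ball (0:ℂ) r) :=
    subset_closure (Metric.mem_ball_self hr)
  have hfinal := Complex.norm_le_of_forall_mem_frontier_norm_le
    Metric.isBounded_ball hdc hbound h0mem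
  have hF0small : ‖F t 0‖ ≤ t * Bsum := by
    have h := hclose t ht0.le ht1 0 (by simpa using hr.le)
    rwa [hg00, sub_zero] at h
  have hF0ne : F t 0 ≠ 0 := hnz 0 (by simpa using hr.le)
  have hpos : 0 < ‖F t 0‖ := norm_pos_iff.mpr hF0ne
  rw [norm_inv] at hfinal
  have hge : m/2 ≤ ‖F t 0‖ := (inv_le_inv₀ hpos (half_pos hm)).mp hfinal
  linarith
end

section
/- If p ∈ ℂ[z₁,…,z_d] has no zeros in 𝔻^d and p̃ is its reflection, then for every ζ ∈ 𝕋^d the non-tangential limit of p̃(z)/p(z) as z → ζ in 𝔻^d exists and is an element of the unit circle 𝕋. -/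
open MvPolynomial Filter

/-- A non-tangential approach region to `ζ ∈ 𝕋^d` inside the polydisk: all of the
quantities `|z_i − ζ_i|` and `1 − |z_i|` are pairwise comparable within factor `c`. -/
def PolydiskAR (d : ℕ) (ζ : Fin d → ℂ) (c : ℝ) : Set (Fin d → ℂ) :=
  {z | (∀ i, ‖z i‖ < 1) ∧ ∀ i j,
    ‖z i - ζ i‖ ≤ c * (1 - ‖z j‖) ∧ (1 - ‖z i‖) ≤ c * ‖z j - ζ j‖ ∧
    ‖z i - ζ i‖ ≤ c * ‖z j - ζ j‖ ∧ (1 - ‖z i‖) ≤ c * (1 - ‖z j‖)}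

noncomputable section

namespace Stmt8Aux

open Metric Set

variable {d : ℕ}


lemma norm_sq_eq (u : ℂ) : ‖u‖ ^ 2 = Complex.normSq u := by
  rw [Complex.sq_norm]

lemma normSq_identity (x y : ℂ) :
    ‖1 - (starRingEnd ℂ) x * y‖ ^ 2 - ‖y - x‖ ^ 2 = (1 - ‖x‖ ^ 2) * (1 - ‖y‖ ^ 2) := by
  simp only [norm_sq_eq]
  simp only [Complex.normSq_apply, Complex.sub_re, Complex.sub_im, Complex.mul_re,
    Complex.mul_im, Complex.one_re, Complex.one_im, Complex.conj_re, Complex.conj_im]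
  ring

lemma one_sub_conj_mul_ne (x y : ℂ) (hx : ‖x‖ < 1) (hy : ‖y‖ ≤ 1) :
    1 - (starRingEnd ℂ) x * y ≠ 0 := by
  have h1 : ‖(starRingEnd ℂ) x * y‖ < 1 := by
    rw [norm_mul, RCLike.norm_conj]
    nlinarith [norm_nonneg x, norm_nonneg y]
  intro h
  rw [sub_eq_zero] at h
  rw [← h] at h1
  simp at h1

lemma norm_one_sub_pos (x y : ℂ) (hx : ‖x‖ < 1) (hy : ‖y‖ ≤ 1) :
    0 < ‖1 - (starRingEnd ℂ) x * y‖ := norm_pos_iff.2 (one_sub_conj_mul_ne x y hx hy)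

lemma mobius_le_one {x y : ℂ} (hx : ‖x‖ < 1) (hy : ‖y‖ ≤ 1) :
    ‖(y - x) / (1 - (starRingEnd ℂ) x * y)‖ ≤ 1 := by
  have hP : 0 ≤ (1 - ‖x‖ ^ 2) * (1 - ‖y‖ ^ 2) := by
    apply mul_nonneg <;> nlinarith [norm_nonneg x, norm_nonneg y]
  rw [norm_div, div_le_one (norm_one_sub_pos x y hx hy)]
  nlinarith [normSq_identity x y, hP, norm_nonneg (y - x), norm_one_sub_pos x y hx hy]

lemma mobius_lt_one {x y : ℂ} (hx : ‖x‖ < 1) (hy : ‖y‖ < 1) :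
    ‖(y + x) / (1 + (starRingEnd ℂ) x * y)‖ < 1 := by
  have h := normSq_identity (-x) y
  simp only [map_neg, norm_neg, sub_neg_eq_add, mul_neg, neg_mul] at h
  have hpos : 0 < ‖1 + (starRingEnd ℂ) x * y‖ := by
    have := norm_one_sub_pos (-x) y (by simpa using hx) hy.le
    simpa [sub_neg_eq_add] using this
  have hP : 0 < (1 - ‖x‖ ^ 2) * (1 - ‖y‖ ^ 2) := by
    apply mul_pos <;> nlinarith [norm_nonneg x, norm_nonneg y]
  rw [norm_div, div_lt_one hpos]
  nlinarith [h, hP, norm_nonneg (y + x), hpos]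


variable {d : ℕ}

lemma differentiable_finprod {ι : Type*} (s : Finset ι) (f : ι → (Fin d → ℂ) → ℂ)
    (h : ∀ i ∈ s, Differentiable ℂ (f i)) :
    Differentiable ℂ (fun z => ∏ i ∈ s, f i z) := by
  classical
  induction s using Finset.induction_on with
  | empty => simpa using differentiable_const (1 : ℂ)
  | @insert a s ha ih =>
    simp only [Finset.prod_insert ha]
    exact (h a (Finset.mem_insert_self a s)).mul
      (ih fun i hi => h i (Finset.mem_insert_of_mem hi))

lemma differentiable_coord (i : Fin d) : Differentiable ℂ (fun z : Fin d → ℂ => z i) :=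
  (ContinuousLinearMap.proj i : (Fin d → ℂ) →L[ℂ] ℂ).differentiable

lemma differentiable_eval (p : MvPolynomial (Fin d) ℂ) :
    Differentiable ℂ (fun z : Fin d → ℂ => eval z p) := by
  have h : (fun z : Fin d → ℂ => eval z p)
      = fun z => ∑ α ∈ p.support, coeff α p * ∏ i, z i ^ α i := by
    funext z; rw [eval_eq']
  rw [h]
  apply Differentiable.fun_sum
  intro α _
  exact ((differentiable_finprod Finset.univ _
    (fun i _ => (differentiable_coord i).pow _)).const_mul _)

/-- The reflection of `p`, as a function. -/
def Phi (p : MvPolynomial (Fin d) ℂ) (z : Fin d → ℂ) : ℂ :=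
  ∑ α ∈ p.support, (starRingEnd ℂ) (coeff α p) * ∏ i, z i ^ (p.degreeOf i - α i)

lemma differentiable_Phi (p : MvPolynomial (Fin d) ℂ) :
    Differentiable ℂ (Phi p) := by
  apply Differentiable.fun_sum
  intro α _
  exact ((differentiable_finprod Finset.univ _
    (fun i _ => (differentiable_coord i).pow _)).const_mul _)

lemma apply_le_degreeOf {p : MvPolynomial (Fin d) ℂ} {α : Fin d →₀ ℕ}
    (hα : α ∈ p.support) (i : Fin d) : α i ≤ p.degreeOf i := by
  rw [degreeOf_eq_sup]
  exact Finset.le_sup (f := fun m => m i) hα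

/-- the theorem's numerator equals `Phi p z` when all coordinates are nonzero. -/
lemma phi_eq (p : MvPolynomial (Fin d) ℂ) (z : Fin d → ℂ) (hz : ∀ i, z i ≠ 0) :
    (∏ i, z i ^ p.degreeOf i) *
      (starRingEnd ℂ) (eval (fun i => ((starRingEnd ℂ) (z i))⁻¹) p) = Phi p z := by
  rw [eval_eq']
  rw [map_sum]
  rw [Finset.mul_sum]
  apply Finset.sum_congr rfl
  intro α hα
  rw [map_mul, map_prod]
  have hterm : ∀ i : Fin d,
      (starRingEnd ℂ) (((starRingEnd ℂ) (z i))⁻¹ ^ α i) = (z i)⁻¹ ^ α i := by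
    intro i
    rw [map_pow, map_inv₀, Complex.conj_conj]
  calc (∏ i, z i ^ p.degreeOf i) *
        ((starRingEnd ℂ) (coeff α p) * ∏ i, (starRingEnd ℂ) (((starRingEnd ℂ) (z i))⁻¹ ^ α i))
      = (starRingEnd ℂ) (coeff α p) * ∏ i, z i ^ p.degreeOf i * (z i)⁻¹ ^ α i := by
        simp only [hterm]
        rw [Finset.prod_mul_distrib]
        ring
    _ = (starRingEnd ℂ) (coeff α p) * ∏ i, z i ^ (p.degreeOf i - α i) := by
        congr 1
        apply Finset.prod_congr rfl
        intro i _
        rw [pow_sub₀ _ (hz i) (apply_le_degreeOf hα i), inv_pow]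


lemma coeff_prod_of_le {ι : Type*} (s : Finset ι) (f : ι → Polynomial ℂ) (n : ι → ℕ)
    (h : ∀ i ∈ s, (f i).natDegree ≤ n i) :
    (∏ i ∈ s, f i).coeff (∑ i ∈ s, n i) = ∏ i ∈ s, (f i).coeff (n i) := by
  classical
  induction s using Finset.induction_on with
  | empty => simp
  | @insert a s ha ih =>
    rw [Finset.prod_insert ha, Finset.sum_insert ha,
      Polynomial.coeff_mul_add_eq_of_natDegree_le (h a (Finset.mem_insert_self a s))
        ((Polynomial.natDegree_prod_le s f).trans
          (Finset.sum_le_sum fun i hi => h i (Finset.mem_insert_of_mem hi))),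
      ih fun i hi => h i (Finset.mem_insert_of_mem hi), Finset.prod_insert ha]

lemma natDegree_one_add_C_mul_X (v : ℂ) : (1 + Polynomial.C v * Polynomial.X).natDegree ≤ 1 := by
  apply (Polynomial.natDegree_add_le _ _).trans
  simp [Polynomial.natDegree_C_mul_le]
  exact (Polynomial.natDegree_C_mul_le v Polynomial.X).trans (by simp)

lemma coeff_one_add_C_mul_X_pow (v : ℂ) (b : ℕ) :
    ((1 + Polynomial.C v * Polynomial.X) ^ b).coeff b = v ^ b := by
  induction b with
  | zero => simp
  | succ b ih =>
    rw [pow_succ,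
      Polynomial.coeff_mul_add_eq_of_natDegree_le
        ((Polynomial.natDegree_pow_le).trans (by
          have := natDegree_one_add_C_mul_X v
          nlinarith))
        (natDegree_one_add_C_mul_X v), ih]
    simp [Polynomial.coeff_add, Polynomial.coeff_one, pow_succ]

lemma one_le_multiset_prod (s : Multiset ℝ) (h : ∀ x ∈ s, (1:ℝ) ≤ x) : 1 ≤ s.prod := by
  induction s using Multiset.induction_on with
  | empty => simp
  | cons a t ih =>
    rw [Multiset.prod_cons]
    have h1 := h a (Multiset.mem_cons_self a t)
    have h2 := ih fun x hx => h x (Multiset.mem_cons_of_mem hx)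
    nlinarith

lemma norm_multiset_prod' (s : Multiset ℂ) : ‖s.prod‖ = (s.map fun x => ‖x‖).prod := by
  induction s using Multiset.induction_on with
  | empty => simp
  | cons a t ih => simp [Multiset.prod_cons, norm_mul, ih]

/-- a polynomial with no zero in the open unit disk has `‖coeff N‖ ≤ ‖coeff 0‖` for
`N ≥ natDegree`. -/
lemma coeff_le_of_nonvanishing (R : Polynomial ℂ)
    (hR : ∀ s : ℂ, ‖s‖ < 1 → Polynomial.eval s R ≠ 0) {N : ℕ} (hN : R.natDegree ≤ N) :
    ‖R.coeff N‖ ≤ ‖R.coeff 0‖ := by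
  have hR0 : R ≠ 0 := by
    intro h
    exact hR 0 (by simp) (by simp [h])
  rcases lt_or_eq_of_le hN with hlt | heq
  · rw [Polynomial.coeff_eq_zero_of_natDegree_lt hlt, norm_zero]
    exact norm_nonneg _
  · have hsplit : Polynomial.Splits R := IsAlgClosed.splits R
    have hfac := hsplit.eq_prod_roots
    have hroots : ∀ β ∈ R.roots, (1:ℝ) ≤ ‖β‖ := by
      intro β hβ
      by_contra hb
      push_neg at hb
      exact hR β hb ((Polynomial.mem_roots'.1 hβ).2)
    have hc0 : R.coeff 0 = R.leadingCoeff * (R.roots.map fun a => -a).prod := by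
      conv_lhs => rw [Polynomial.coeff_zero_eq_eval_zero, hfac]
      rw [Polynomial.eval_mul, Polynomial.eval_C, Polynomial.eval_multiset_prod,
        Multiset.map_map]
      congr 1
      apply congrArg Multiset.prod
      apply Multiset.map_congr rfl
      intro a _
      simp
    rw [← heq, Polynomial.coeff_natDegree, hc0, norm_mul, norm_multiset_prod',
      Multiset.map_map]
    have : (1:ℝ) ≤ ((R.roots.map fun a => -a).map fun x => ‖x‖).prod := by
      rw [Multiset.map_map]
      apply one_le_multiset_prod
      intro x hx
      rw [Multiset.mem_map] at hx
      obtain ⟨β, hβ, rfl⟩ := hx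
      simpa using hroots β hβ
    rw [Multiset.map_map] at this
    exact le_mul_of_one_le_right (norm_nonneg _) this


lemma one_add_conj_mul_ne (x y : ℂ) (hx : ‖x‖ < 1) (hy : ‖y‖ ≤ 1) :
    1 + (starRingEnd ℂ) x * y ≠ 0 := by
  have := one_sub_conj_mul_ne (-x) y (by simpa using hx) hy
  simpa [sub_neg_eq_add] using this

lemma schur_bound (p : MvPolynomial (Fin d) ℂ)
    (hp : ∀ z : Fin d → ℂ, (∀ i, ‖z i‖ < 1) → eval z p ≠ 0)
    (z : Fin d → ℂ) (hz : ∀ i, ‖z i‖ < 1) : ‖Phi p z‖ ≤ ‖eval z p‖ := by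
  classical
  set N := ∑ i, p.degreeOf i with hN
  set R : Polynomial ℂ := ∑ α ∈ p.support, Polynomial.C (coeff α p) *
      ∏ i, ((Polynomial.X + Polynomial.C (z i)) ^ (α i) *
        (1 + Polynomial.C ((starRingEnd ℂ) (z i)) * Polynomial.X) ^ (p.degreeOf i - α i))
    with hR
  -- degree bound for each factor
  have hfdeg : ∀ (α : Fin d →₀ ℕ) (i : Fin d),
      ((Polynomial.X + Polynomial.C (z i)) ^ (α i) *
        (1 + Polynomial.C ((starRingEnd ℂ) (z i)) * Polynomial.X) ^ (p.degreeOf i - α i)).natDegree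
        ≤ α i + (p.degreeOf i - α i) := by
    intro α i
    apply (Polynomial.natDegree_mul_le).trans
    apply add_le_add
    · apply (Polynomial.natDegree_pow_le).trans
      simp [Polynomial.natDegree_X_add_C]
    · apply (Polynomial.natDegree_pow_le).trans
      calc (p.degreeOf i - α i) * (1 + Polynomial.C ((starRingEnd ℂ) (z i)) * Polynomial.X).natDegree
          ≤ (p.degreeOf i - α i) * 1 := by
            exact Nat.mul_le_mul_left _ (natDegree_one_add_C_mul_X _)
        _ = p.degreeOf i - α i := by ring
  have hsum : ∀ α ∈ p.support, (∑ i, (α i + (p.degreeOf i - α i))) = N := by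
    intro α hα
    rw [hN]
    apply Finset.sum_congr rfl
    intro i _
    exact Nat.add_sub_cancel' (apply_le_degreeOf hα i)
  -- natDegree R ≤ N
  have hRdeg : R.natDegree ≤ N := by
    rw [hR]
    apply Polynomial.natDegree_sum_le_of_forall_le
    intro α hα
    apply (Polynomial.natDegree_C_mul_le _ _).trans
    apply (Polynomial.natDegree_prod_le _ _).trans
    rw [← hsum α hα]
    exact Finset.sum_le_sum fun i _ => hfdeg α i
  -- coeff 0
  have hc0 : R.coeff 0 = eval z p := by
    rw [Polynomial.coeff_zero_eq_eval_zero, hR, Polynomial.eval_finset_sum, eval_eq']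
    apply Finset.sum_congr rfl
    intro α hα
    rw [Polynomial.eval_mul, Polynomial.eval_C, Polynomial.eval_prod]
    congr 1
    apply Finset.prod_congr rfl
    intro i _
    simp
  -- coeff N
  have hcN : R.coeff N = (starRingEnd ℂ) (Phi p z) := by
    rw [hR, Polynomial.finset_sum_coeff]
    rw [Phi, map_sum]
    apply Finset.sum_congr rfl
    intro α hα
    rw [Polynomial.coeff_C_mul, ← hsum α hα,
      coeff_prod_of_le Finset.univ _ _ (fun i _ => hfdeg α i)]
    rw [map_mul, Complex.conj_conj, map_prod]
    congr 1
    apply Finset.prod_congr rfl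
    intro i _
    rw [Polynomial.coeff_mul_add_eq_of_natDegree_le
      (by apply (Polynomial.natDegree_pow_le).trans; simp [Polynomial.natDegree_X_add_C])
      (by apply (Polynomial.natDegree_pow_le).trans
          exact (Nat.mul_le_mul_left _ (natDegree_one_add_C_mul_X _)).trans (by ring_nf; rfl))]
    rw [coeff_one_add_C_mul_X_pow]
    have hmonic : ((Polynomial.X + Polynomial.C (z i)) ^ (α i)).coeff (α i) = 1 := by
      have h1 : ((Polynomial.X + Polynomial.C (z i)) ^ (α i)).natDegree = α i := by
        rw [Polynomial.natDegree_pow, Polynomial.natDegree_X_add_C, mul_one]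
      have hm := ((Polynomial.monic_X_add_C (z i)).pow (n := α i)).coeff_natDegree
      rwa [h1] at hm
    rw [hmonic, one_mul, map_pow]
  -- nonvanishing
  have hRnv : ∀ s : ℂ, ‖s‖ < 1 → Polynomial.eval s R ≠ 0 := by
    intro s hs
    have heval : Polynomial.eval s R =
        (∏ i, (1 + (starRingEnd ℂ) (z i) * s) ^ p.degreeOf i) *
          eval (fun i => (s + z i) / (1 + (starRingEnd ℂ) (z i) * s)) p := by
      rw [hR, Polynomial.eval_finset_sum, eval_eq', Finset.mul_sum]
      apply Finset.sum_congr rfl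
      intro α hα
      rw [Polynomial.eval_mul, Polynomial.eval_C, Polynomial.eval_prod]
      have hterm : ∀ j : Fin d, Polynomial.eval s
          ((Polynomial.X + Polynomial.C (z j)) ^ (α j) *
            (1 + Polynomial.C ((starRingEnd ℂ) (z j)) * Polynomial.X) ^ (p.degreeOf j - α j))
          = (1 + (starRingEnd ℂ) (z j) * s) ^ p.degreeOf j *
            ((s + z j) / (1 + (starRingEnd ℂ) (z j) * s)) ^ (α j) := by
        intro j
        have hne : (1 + (starRingEnd ℂ) (z j) * s) ≠ 0 :=
          one_add_conj_mul_ne _ _ (hz j) hs.le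
        have hle := apply_le_degreeOf hα j
        rw [Polynomial.eval_mul, Polynomial.eval_pow, Polynomial.eval_pow]
        simp only [Polynomial.eval_add, Polynomial.eval_mul, Polynomial.eval_X,
          Polynomial.eval_C, Polynomial.eval_one]
        rw [div_pow, mul_comm ((1 + (starRingEnd ℂ) (z j) * s) ^ p.degreeOf j),
          div_mul_eq_mul_div, eq_div_iff (pow_ne_zero _ hne),
          mul_comm ((s + z j) ^ α j)]
        rw [show ((1 + (starRingEnd ℂ) (z j) * s) ^ (p.degreeOf j - α j) *
            (s + z j) ^ α j * (1 + (starRingEnd ℂ) (z j) * s) ^ α j) =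
            ((s + z j) ^ α j * ((1 + (starRingEnd ℂ) (z j) * s) ^ (p.degreeOf j - α j) *
              (1 + (starRingEnd ℂ) (z j) * s) ^ α j)) from by ring,
          ← pow_add, Nat.sub_add_cancel hle, mul_comm]
      simp only [hterm]
      rw [Finset.prod_mul_distrib]
      ring
    rw [heval]
    apply mul_ne_zero
    · apply Finset.prod_ne_zero_iff.2
      intro i _
      exact pow_ne_zero _ (one_add_conj_mul_ne _ _ (hz i) hs.le)
    · apply hp
      intro i
      have := mobius_lt_one (hz i) hs
      simpa [add_comm] using this
  -- conclude
  have := coeff_le_of_nonvanishing R hRnv hRdeg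
  rw [hc0, hcN] at this
  rwa [RCLike.norm_conj] at this

def ell (β : ℂ) : ℂ := if β = 1 then -1 else (1 - (starRingEnd ℂ) β) / (1 - β)

lemma norm_ell {β : ℂ} (hβ : 1 ≤ ‖β‖) : ‖ell β‖ = 1 := by
  rw [ell]
  split_ifs with h
  · simp
  · rw [norm_div]
    have h2 : 1 - (starRingEnd ℂ) β = (starRingEnd ℂ) (1 - β) := by
      rw [map_sub, map_one]
    rw [h2, RCLike.norm_conj, div_self]
    rw [norm_ne_zero_iff, sub_ne_zero]
    exact fun hc => h hc.symm

lemma tendsto_ell (β : ℂ) :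
    Tendsto (fun t : ℝ => (1 - (starRingEnd ℂ) β * (t:ℂ)) / ((t:ℂ) - β))
      (nhdsWithin 1 (Set.Iio 1)) (nhds (ell β)) := by
  by_cases h : β = 1
  · subst h
    apply Tendsto.congr' (f₁ := fun _ : ℝ => ell 1)
    · filter_upwards [self_mem_nhdsWithin] with t ht
      have hne : (t:ℂ) - 1 ≠ 0 := by
        rw [sub_ne_zero]
        exact_mod_cast ne_of_lt ht
      rw [ell, if_pos rfl, map_one, eq_div_iff hne]
      ring
    · exact tendsto_const_nhds
  · rw [ell, if_neg h]
    have hne : (1:ℂ) - β ≠ 0 := by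
      rw [sub_ne_zero]; exact fun hc => h hc.symm
    have hc : ContinuousAt (fun t : ℝ => (1 - (starRingEnd ℂ) β * (t:ℂ)) / ((t:ℂ) - β)) 1 := by
      apply ContinuousAt.div
      · fun_prop
      · fun_prop
      · simpa using hne
    have := hc.tendsto
    simp only [Complex.ofReal_one, mul_one] at this
    exact this.mono_left nhdsWithin_le_nhds

lemma tendsto_prod_ell (s : Multiset ℂ) :
    Tendsto (fun t : ℝ => (s.map fun β => (1 - (starRingEnd ℂ) β * (t:ℂ)) / ((t:ℂ) - β)).prod)
      (nhdsWithin 1 (Set.Iio 1)) (nhds (s.map ell).prod) := by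
  induction s using Multiset.induction_on with
  | empty => simpa using tendsto_const_nhds
  | cons a t ih =>
    simp only [Multiset.map_cons, Multiset.prod_cons]
    exact (tendsto_ell a).mul ih

/-- limit along the diagonal -/
lemma diag_limit (p : MvPolynomial (Fin d) ℂ)
    (hp : ∀ z : Fin d → ℂ, (∀ i, ‖z i‖ < 1) → eval z p ≠ 0)
    (ζ : Fin d → ℂ) (hζ : ∀ i, ‖ζ i‖ = 1) :
    ∃ L : ℂ, ‖L‖ = 1 ∧ Tendsto (fun t : ℝ =>
      Phi p (fun i => (t:ℂ) * ζ i) / eval (fun i => (t:ℂ) * ζ i) p)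
      (nhdsWithin 1 (Set.Iio 1)) (nhds L) := by
  classical
  have hζ0 : ∀ i, ζ i ≠ 0 := fun i => by
    intro h; have := hζ i; rw [h] at this; simp at this
  have hζinv : ∀ i, (starRingEnd ℂ) (ζ i) = (ζ i)⁻¹ := by
    intro i
    have h1 : ζ i * (starRingEnd ℂ) (ζ i) = 1 := by
      rw [Complex.mul_conj]
      rw [Complex.normSq_eq_norm_sq, hζ i]
      simp
    exact (inv_eq_of_mul_eq_one_right h1).symm
  set N := ∑ i, p.degreeOf i with hNdef
  set q : Polynomial ℂ := ∑ α ∈ p.support,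
      Polynomial.C (coeff α p * ∏ i, ζ i ^ α i) * Polynomial.X ^ (∑ i, α i) with hqdef
  have heval : ∀ w : ℂ, Polynomial.eval w q = eval (fun i => w * ζ i) p := by
    intro w
    rw [hqdef, Polynomial.eval_finset_sum, eval_eq']
    apply Finset.sum_congr rfl
    intro α hα
    rw [Polynomial.eval_mul, Polynomial.eval_C, Polynomial.eval_pow, Polynomial.eval_X]
    simp only [mul_pow]
    rw [Finset.prod_mul_distrib, Finset.prod_pow_eq_pow_sum]
    ring
  have hnv : ∀ w : ℂ, ‖w‖ < 1 → Polynomial.eval w q ≠ 0 := by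
    intro w hw
    rw [heval w]
    apply hp
    intro i
    rw [norm_mul, hζ i, mul_one]
    exact hw
  have hq0 : q ≠ 0 := by
    intro h
    apply hnv 0 (by simp)
    rw [h]; simp
  set a := q.leadingCoeff with hadef
  have ha : a ≠ 0 := by rwa [hadef, Polynomial.leadingCoeff_ne_zero]
  have hsplit : Polynomial.Splits q := IsAlgClosed.splits q
  have hfac := hsplit.eq_prod_roots
  have hroots : ∀ β ∈ q.roots, 1 ≤ ‖β‖ := by
    intro β hβ
    by_contra hb
    push_neg at hb
    exact hnv β hb (Polynomial.mem_roots'.1 hβ).2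
  have hcard : Multiset.card q.roots = q.natDegree := by
    have := hsplit.natDegree_eq_card_roots
    omega
  have hm : q.natDegree ≤ N := by
    rw [hqdef]
    apply Polynomial.natDegree_sum_le_of_forall_le
    intro α hα
    apply (Polynomial.natDegree_C_mul_le _ _).trans
    rw [Polynomial.natDegree_X_pow]
    rw [hNdef]
    exact Finset.sum_le_sum fun i _ => apply_le_degreeOf hα i
  set Z := ∏ i, ζ i ^ p.degreeOf i with hZdef
  refine ⟨Z * ((starRingEnd ℂ) a / a) * (q.roots.map ell).prod, ?_, ?_⟩
  · rw [norm_mul, norm_mul]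
    have h1 : ‖Z‖ = 1 := by
      rw [hZdef, norm_prod]
      apply Finset.prod_eq_one
      intro i _
      rw [norm_pow, hζ i, one_pow]
    have h2 : ‖(starRingEnd ℂ) a / a‖ = 1 := by
      rw [norm_div, RCLike.norm_conj, div_self (norm_ne_zero_iff.2 ha)]
    have h3 : ‖(q.roots.map ell).prod‖ = 1 := by
      rw [show ‖(q.roots.map ell).prod‖ = ((q.roots.map ell).map (fun x => ‖x‖)).prod from ?_]
      · rw [Multiset.map_map]
        apply Multiset.prod_eq_one
        intro x hx
        rw [Multiset.mem_map] at hx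
        obtain ⟨β, hβ, rfl⟩ := hx
        exact norm_ell (hroots β hβ)
      · induction (q.roots.map ell) using Multiset.induction_on with
        | empty => simp
        | cons c t ih => simp [Multiset.prod_cons, norm_mul, ih]
    rw [h1, h2, h3]; norm_num
  · -- the tendsto
    set G : ℝ → ℂ := fun t => Z * ((starRingEnd ℂ) a / a) *
      ((t:ℂ) ^ (N - q.natDegree) *
        (q.roots.map fun β => (1 - (starRingEnd ℂ) β * (t:ℂ)) / ((t:ℂ) - β)).prod) with hGdef
    have hstepB : Tendsto G (nhdsWithin 1 (Set.Iio 1)) (nhds (Z * ((starRingEnd ℂ) a / a) *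
        (q.roots.map ell).prod)) := by
      rw [hGdef]
      have h1 : Tendsto (fun t : ℝ => ((t:ℂ)) ^ (N - q.natDegree))
          (nhdsWithin 1 (Set.Iio 1)) (nhds 1) := by
        have hc : ContinuousAt (fun t : ℝ => ((t:ℂ)) ^ (N - q.natDegree)) 1 := by fun_prop
        have := hc.tendsto
        simp only [Complex.ofReal_one, one_pow] at this
        exact this.mono_left nhdsWithin_le_nhds
      have := (tendsto_const_nhds (x := Z * ((starRingEnd ℂ) a / a))
          (f := nhdsWithin (1:ℝ) (Set.Iio 1))).mul (h1.mul (tendsto_prod_ell q.roots))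
      simpa using this
    apply hstepB.congr'
    filter_upwards [Ioo_mem_nhdsLT_of_mem (by constructor <;> norm_num :
      (1:ℝ) ∈ Set.Ioc (0:ℝ) 1)] with t ht
    obtain ⟨ht0, ht1⟩ := ht
    -- now prove G t = F t
    have hT0 : (t:ℂ) ≠ 0 := Complex.ofReal_ne_zero.2 (ne_of_gt ht0)
    have hβne : ∀ β ∈ q.roots, (t:ℂ) - β ≠ 0 := by
      intro β hβ hcontra
      rw [sub_eq_zero] at hcontra
      have h2 := hroots β hβ
      rw [← hcontra] at h2
      simp only [Complex.norm_real, Real.norm_eq_abs, abs_of_pos ht0] at h2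
      linarith
    have e1 : eval (fun i => (t:ℂ) * ζ i) p
        = a * (q.roots.map fun β => (t:ℂ) - β).prod := by
      rw [← heval]
      conv_lhs => rw [hfac]
      rw [Polynomial.eval_mul, Polynomial.eval_C, Polynomial.eval_multiset_prod,
        Multiset.map_map]
      congr 1
      apply congrArg Multiset.prod
      apply Multiset.map_congr rfl
      intro β _
      simp
    have e2 : Phi p (fun i => (t:ℂ) * ζ i)
        = Z * (t:ℂ) ^ N * (starRingEnd ℂ) (Polynomial.eval ((t:ℂ))⁻¹ q) := by
      rw [hqdef, Polynomial.eval_finset_sum, map_sum, Finset.mul_sum, Phi]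
      apply Finset.sum_congr rfl
      intro α hα
      have hsle : (∑ i, α i) ≤ N := by
        rw [hNdef]; exact Finset.sum_le_sum fun i _ => apply_le_degreeOf hα i
      have key : ∏ i, ((t:ℂ) * ζ i) ^ (p.degreeOf i - α i)
          = Z * (∏ i, (starRingEnd ℂ) (ζ i) ^ α i) * ((t:ℂ) ^ N * ((t:ℂ) ^ (∑ i, α i))⁻¹) := by
        simp only [mul_pow]
        rw [Finset.prod_mul_distrib, Finset.prod_pow_eq_pow_sum]
        have h1 : (∑ i, (p.degreeOf i - α i)) = N - ∑ i, α i := by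
          rw [hNdef]
          exact Finset.sum_tsub_distrib Finset.univ fun i _ => apply_le_degreeOf hα i
        rw [h1, pow_sub₀ _ hT0 hsle]
        have h2 : (∏ i, ζ i ^ (p.degreeOf i - α i))
            = Z * ∏ i, (starRingEnd ℂ) (ζ i) ^ α i := by
          rw [hZdef, ← Finset.prod_mul_distrib]
          apply Finset.prod_congr rfl
          intro i _
          rw [pow_sub₀ _ (hζ0 i) (apply_le_degreeOf hα i), hζinv i, inv_pow]
        rw [h2]
        ring
      rw [Polynomial.eval_mul, Polynomial.eval_C, Polynomial.eval_pow, Polynomial.eval_X]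
      rw [map_mul, map_mul, map_pow, map_inv₀, Complex.conj_ofReal, map_prod]
      simp only [map_pow]
      rw [key]
      ring
    have e3 : (starRingEnd ℂ) (Polynomial.eval ((t:ℂ))⁻¹ q)
        = (starRingEnd ℂ) a *
          (q.roots.map fun β => ((t:ℂ))⁻¹ - (starRingEnd ℂ) β).prod := by
      conv_lhs => rw [hfac]
      rw [Polynomial.eval_mul, Polynomial.eval_C, Polynomial.eval_multiset_prod,
        Multiset.map_map, map_mul, map_multiset_prod, Multiset.map_map]
      congr 1
      apply congrArg Multiset.prod
      apply Multiset.map_congr rfl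
      intro β _
      simp [Complex.conj_ofReal]
    have e4 : (t:ℂ) ^ N * (q.roots.map fun β => ((t:ℂ))⁻¹ - (starRingEnd ℂ) β).prod
        = (t:ℂ) ^ (N - q.natDegree) *
          (q.roots.map fun β => 1 - (starRingEnd ℂ) β * (t:ℂ)).prod := by
      have h1 : (t:ℂ) ^ N = (t:ℂ) ^ (N - q.natDegree) * (t:ℂ) ^ (Multiset.card q.roots) := by
        rw [hcard, ← pow_add, Nat.sub_add_cancel hm]
      rw [h1, mul_assoc]
      congr 1
      rw [show ((t:ℂ)) ^ (Multiset.card q.roots) = (q.roots.map fun _ => (t:ℂ)).prod from by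
        rw [Multiset.map_const', Multiset.prod_replicate]]
      rw [← Multiset.prod_map_mul]
      apply congrArg Multiset.prod
      apply Multiset.map_congr rfl
      intro β _
      rw [mul_sub, mul_inv_cancel₀ hT0]
      ring
    have hP2 : (q.roots.map fun β => (t:ℂ) - β).prod ≠ 0 := by
      apply Multiset.prod_ne_zero
      intro hmem
      rw [Multiset.mem_map] at hmem
      obtain ⟨β, hβ, hβ0⟩ := hmem
      exact hβne β hβ hβ0
    simp only [hGdef]
    rw [e1, e2, e3]
    rw [show Z * (t:ℂ)^N * ((starRingEnd ℂ) a *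
        (q.roots.map fun β => ((t:ℂ))⁻¹ - (starRingEnd ℂ) β).prod)
        = Z * (starRingEnd ℂ) a * ((t:ℂ)^N *
          (q.roots.map fun β => ((t:ℂ))⁻¹ - (starRingEnd ℂ) β).prod) from by ring, e4]
    rw [Multiset.prod_map_div]
    field_simp
    simp_rw [mul_comm (t:ℂ) _]

/-- Schwarz–Pick-type estimate for a disk map bounded by 1 in norm. -/
lemma schwarz_pick (ψ : ℂ → ℂ) (hd : DifferentiableOn ℂ ψ (ball 0 1))
    (hb : ∀ s ∈ ball (0:ℂ) 1, ‖ψ s‖ ≤ 1) {r : ℝ} (hr0 : 0 ≤ r) (hr1 : r < 1) :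
    ‖ψ (r:ℂ) - ψ 0‖ ≤ r * ‖1 - (starRingEnd ℂ) (ψ 0) * ψ (r:ℂ)‖ := by
  have hrball : (r:ℂ) ∈ ball (0:ℂ) 1 := by
    simp only [mem_ball, dist_zero_right, Complex.norm_real, Real.norm_eq_abs,
      abs_of_nonneg hr0]
    exact hr1
  have h0ball : (0:ℂ) ∈ ball (0:ℂ) 1 := by simp
  by_cases hA : ‖ψ 0‖ < 1
  · set A := ψ 0 with hAdef
    set k : ℂ → ℂ := fun s => (ψ s - A) / (1 - (starRingEnd ℂ) A * ψ s) with hkdef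
    have hkd : DifferentiableOn ℂ k (ball 0 1) := by
      apply DifferentiableOn.div
      · exact hd.sub (differentiableOn_const A)
      · exact (differentiableOn_const _).sub ((differentiableOn_const _).mul hd)
      · intro s hs
        exact one_sub_conj_mul_ne A (ψ s) hA (hb s hs)
    have hk0 : k 0 = 0 := by
      rw [hkdef]
      simp [hAdef]
    have hkb : ∀ s ∈ ball (0:ℂ) 1, ‖k s‖ ≤ 1 := fun s hs =>
      mobius_le_one hA (hb s hs)
    -- Schwarz lemma through mapsTo into larger balls
    have hkr : ‖k (r:ℂ)‖ ≤ r := by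
      rcases eq_or_lt_of_le hr0 with h0 | h0
    -- r = 0
      · rw [← h0]
        simp only [Complex.ofReal_zero, hk0, norm_zero]  -- k (0) = 0
        norm_num [hk0]
      · by_contra hcon
        push_neg at hcon
        set R₂ : ℝ := (1 + ‖k (r:ℂ)‖ / r) / 2 with hR₂
        have hR₂1 : 1 < R₂ := by
          rw [hR₂]
          have : 1 < ‖k (r:ℂ)‖ / r := (one_lt_div h0).2 hcon
          linarith
        have hmaps : MapsTo k (ball 0 1) (closedBall (k 0) R₂) := by
          intro s hs
          rw [mem_closedBall, hk0, dist_zero_right]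
          exact le_of_lt (lt_of_le_of_lt (hkb s hs) hR₂1)
        have := Complex.dist_le_div_mul_dist_of_mapsTo_ball hkd hmaps hrball
        rw [hk0, dist_zero_right, dist_zero_right] at this
        rw [div_one] at this
        rw [Complex.norm_real, Real.norm_eq_abs, abs_of_nonneg hr0] at this
        have hcontra2 : ‖k (r:ℂ)‖ < ‖k (r:ℂ)‖ := by
          calc ‖k (r:ℂ)‖ ≤ R₂ * r := this
            _ < (‖k (r:ℂ)‖ / r) * r := by
                apply mul_lt_mul_of_pos_right _ h0
                rw [hR₂]
                have : 1 < ‖k (r:ℂ)‖ / r := (one_lt_div h0).2 hcon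
                linarith
            _ = ‖k (r:ℂ)‖ := by field_simp
        exact absurd hcontra2 (lt_irrefl _)
    -- unfold k at r
    have hden : 1 - (starRingEnd ℂ) A * ψ (r:ℂ) ≠ 0 :=
      one_sub_conj_mul_ne A (ψ (r:ℂ)) hA (hb _ hrball)
    rw [hkdef] at hkr
    simp only at hkr
    rw [norm_div, div_le_iff₀ (norm_pos_iff.2 hden)] at hkr
    exact hkr
  · -- ‖ψ 0‖ = 1 : maximum modulus, ψ is constant
    push_neg at hA
    have hA1 : ‖ψ 0‖ = 1 := le_antisymm (hb 0 h0ball) hA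
    have hmax : IsMaxOn (norm ∘ ψ) (ball 0 1) 0 := by
      intro s hs
      simp only [Function.comp_apply, hA1]
      exact hb s hs
    have := Complex.eqOn_of_isPreconnected_of_isMaxOn_norm
      (convex_ball (0:ℂ) 1).isPreconnected isOpen_ball hd h0ball hmax
    have hconst : ψ (r:ℂ) = ψ 0 := this hrball
    rw [hconst]
    simp only [sub_self, norm_zero]
    positivity
lemma key_estimate (p : MvPolynomial (Fin d) ℂ)
    (hp : ∀ z : Fin d → ℂ, (∀ i, ‖z i‖ < 1) → eval z p ≠ 0)
    {z w : Fin d → ℂ} (hz : ∀ i, ‖z i‖ < 1) (hw : ∀ i, ‖w i‖ < 1)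
    {r : ℝ} (hr0 : 0 < r) (hr1 : r < 1)
    (hb : ∀ i, ‖(w i - z i) / (1 - (starRingEnd ℂ) (z i) * w i)‖ ≤ r) :
    (1 - r) * ‖Phi p z / eval z p - Phi p w / eval w p‖
      ≤ r * (1 - ‖Phi p w / eval w p‖ ^ 2) := by
  have hrC : ((r:ℂ)) ≠ 0 := Complex.ofReal_ne_zero.2 (ne_of_gt hr0)
  set u : Fin d → ℂ := fun i => (w i - z i) / (1 - (starRingEnd ℂ) (z i) * w i) / (r:ℂ)
    with hudef
  have hu : ∀ i, ‖u i‖ ≤ 1 := by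
    intro i
    rw [hudef]
    simp only [norm_div]
    rw [div_le_one (by rw [Complex.norm_real, Real.norm_eq_abs, abs_of_pos hr0]; exact hr0)]
    calc ‖(w i - z i)‖ / ‖1 - (starRingEnd ℂ) (z i) * w i‖
        = ‖(w i - z i) / (1 - (starRingEnd ℂ) (z i) * w i)‖ := (norm_div _ _).symm
      _ ≤ r := hb i
      _ = ‖(r:ℂ)‖ := by rw [Complex.norm_real, Real.norm_eq_abs, abs_of_pos hr0]
  set g : ℂ → (Fin d → ℂ) := fun s i => (u i * s + z i) / (1 + (starRingEnd ℂ) (z i) * (u i * s))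
    with hgdef
  have hus : ∀ (s : ℂ), s ∈ ball (0:ℂ) 1 → ∀ i, ‖u i * s‖ < 1 := by
    intro s hs i
    rw [mem_ball, dist_zero_right] at hs
    rw [norm_mul]
    calc ‖u i‖ * ‖s‖ ≤ 1 * ‖s‖ := by
          apply mul_le_mul_of_nonneg_right (hu i) (norm_nonneg s)
      _ = ‖s‖ := one_mul _
      _ < 1 := hs
  have hgball : ∀ (s : ℂ), s ∈ ball (0:ℂ) 1 → ∀ i, ‖g s i‖ < 1 := by
    intro s hs i
    rw [hgdef]
    exact mobius_lt_one (hz i) (hus s hs i)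
  have hg0 : g 0 = z := by
    funext i
    rw [hgdef]
    simp
  have hgr : g (r:ℂ) = w := by
    funext i
    rw [hgdef]
    simp only
    have hbr : u i * (r:ℂ) = (w i - z i) / (1 - (starRingEnd ℂ) (z i) * w i) := by
      rw [hudef]
      simp only
      rw [div_mul_cancel₀ _ hrC]
    rw [hbr]
    set D := 1 - (starRingEnd ℂ) (z i) * w i with hDdef
    have hD : D ≠ 0 := one_sub_conj_mul_ne (z i) (w i) (hz i) (hw i).le
    have hzz : 1 - (starRingEnd ℂ) (z i) * z i ≠ 0 := by
      rw [show (starRingEnd ℂ) (z i) * z i = ((Complex.normSq (z i) : ℝ) : ℂ) from by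
        rw [mul_comm, Complex.mul_conj]]
      rw [show (1:ℂ) - ((Complex.normSq (z i) : ℝ) : ℂ)
          = (((1 - Complex.normSq (z i) : ℝ)) : ℂ) from by push_cast; ring]
      rw [Complex.ofReal_ne_zero]
      have h2 : Complex.normSq (z i) < 1 := by
        rw [← Complex.sq_norm]
        nlinarith [hz i, norm_nonneg (z i)]
      linarith
    have hBD : (1 + (starRingEnd ℂ) (z i) * ((w i - z i) / D)) * D
        = 1 - (starRingEnd ℂ) (z i) * z i := by
      field_simp
      rw [hDdef]
      ring
    have hB : 1 + (starRingEnd ℂ) (z i) * ((w i - z i) / D) ≠ 0 := by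
      intro hcon
      rw [hcon, zero_mul] at hBD
      exact hzz hBD.symm
    rw [div_eq_iff hB]
    apply mul_right_cancel₀ hD
    rw [mul_assoc, hBD]
    field_simp
    rw [hDdef]
    ring
  -- the slice function
  set ψ : ℂ → ℂ := fun s => Phi p (g s) / eval (g s) p with hψdef
  have hψd : DifferentiableOn ℂ ψ (ball 0 1) := by
    intro s hs
    apply DifferentiableAt.differentiableWithinAt
    have hgd : DifferentiableAt ℂ g s := by
      rw [differentiableAt_pi]
      intro i
      apply DifferentiableAt.div
      · fun_prop
      · fun_prop
      · exact one_add_conj_mul_ne (z i) (u i * s) (hz i) (hus s hs i).le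
    apply DifferentiableAt.div
    · exact ((differentiable_Phi p).differentiableAt).comp s hgd
    · exact ((differentiable_eval p).differentiableAt).comp s hgd
    · exact hp (g s) (hgball s hs)
  have hψb : ∀ s ∈ ball (0:ℂ) 1, ‖ψ s‖ ≤ 1 := by
    intro s hs
    rw [hψdef]
    simp only [norm_div]
    have hne := hp (g s) (hgball s hs)
    rw [div_le_one (norm_pos_iff.2 hne)]
    exact schur_bound p hp (g s) (hgball s hs)
  have SP := schwarz_pick ψ hψd hψb hr0.le hr1
  have hψ0 : ψ 0 = Phi p z / eval z p := by rw [hψdef]; simp only [hg0]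
  have hψr : ψ (r:ℂ) = Phi p w / eval w p := by rw [hψdef]; simp only [hgr]
  rw [hψ0, hψr] at SP
  set A := Phi p z / eval z p with hA
  set B := Phi p w / eval w p with hB
  have hBle : ‖B‖ ≤ 1 := by
    have := hψb (r:ℂ) (by
      rw [mem_ball, dist_zero_right, Complex.norm_real, Real.norm_eq_abs, abs_of_pos hr0]
      exact hr1)
    rwa [hψr] at this
  have hBB : ‖(1:ℂ) - (starRingEnd ℂ) B * B‖ = 1 - ‖B‖ ^ 2 := by
    rw [show (starRingEnd ℂ) B * B = ((Complex.normSq B : ℝ) : ℂ) from by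
      rw [mul_comm, Complex.mul_conj]]
    rw [show (1:ℂ) - ((Complex.normSq B : ℝ) : ℂ)
        = (((1 - Complex.normSq B : ℝ)) : ℂ) from by push_cast; ring]
    rw [Complex.norm_real, Real.norm_eq_abs, abs_of_nonneg]
    · rw [← Complex.sq_norm]
    · rw [← Complex.sq_norm]
      nlinarith [norm_nonneg B]
  have hsplit : ‖(1:ℂ) - (starRingEnd ℂ) A * B‖ ≤ (1 - ‖B‖ ^ 2) + ‖B - A‖ * ‖B‖ := by
    calc ‖(1:ℂ) - (starRingEnd ℂ) A * B‖
        = ‖((1:ℂ) - (starRingEnd ℂ) B * B) + ((starRingEnd ℂ) B - (starRingEnd ℂ) A) * B‖ := by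
          congr 1; ring
      _ ≤ ‖(1:ℂ) - (starRingEnd ℂ) B * B‖ + ‖((starRingEnd ℂ) B - (starRingEnd ℂ) A) * B‖ :=
          norm_add_le _ _
      _ = (1 - ‖B‖ ^ 2) + ‖B - A‖ * ‖B‖ := by
          rw [hBB, norm_mul, ← map_sub, RCLike.norm_conj]
  have final : ‖B - A‖ ≤ r * (1 - ‖B‖ ^ 2) + r * ‖B - A‖ := by
    calc ‖B - A‖ ≤ r * ‖(1:ℂ) - (starRingEnd ℂ) A * B‖ := SP
      _ ≤ r * ((1 - ‖B‖ ^ 2) + ‖B - A‖ * ‖B‖) := by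
          apply mul_le_mul_of_nonneg_left hsplit hr0.le
      _ ≤ r * (1 - ‖B‖ ^ 2) + r * ‖B - A‖ := by
          rw [mul_add]
          have : ‖B - A‖ * ‖B‖ ≤ ‖B - A‖ := by
            nlinarith [norm_nonneg (B - A), norm_nonneg B]
          nlinarith
  have hrev : ‖A - B‖ = ‖B - A‖ := norm_sub_rev _ _
  nlinarith [final, hrev]


set_option maxHeartbeats 1000000 in
lemma region_bound {c : ℝ} (hc : 1 < c) (ζ : Fin d → ℂ) (hζ : ∀ i, ‖ζ i‖ = 1)
    {z : Fin d → ℂ} (hzS : z ∈ PolydiskAR d ζ c) (i₀ i : Fin d) :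
    ‖(((‖z i₀‖ : ℝ) : ℂ) * ζ i - z i) /
        (1 - (starRingEnd ℂ) (z i) * (((‖z i₀‖ : ℝ) : ℂ) * ζ i))‖
      ≤ Real.sqrt (1 - 1 / (c * (3 * c + 1) ^ 2)) := by
  obtain ⟨hlt, hcond⟩ := hzS
  set t : ℝ := ‖z i₀‖ with htdef
  set δ : ℝ := 1 - t with hδdef
  clear_value t
  have ht0 : 0 ≤ t := by rw [htdef]; exact norm_nonneg _
  have ht1 : t < 1 := by rw [htdef]; exact hlt i₀
  clear_value δ
  have hδpos : 0 < δ := by rw [hδdef]; linarith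
  have hδ1 : δ ≤ 1 := by rw [hδdef]; linarith
  have h1 : ‖z i - ζ i‖ ≤ c * δ := by
    have := (hcond i i₀).1; rw [hδdef, htdef]; exact this
  have h2 : δ ≤ c * (1 - ‖z i‖) := by
    have := (hcond i₀ i).2.2.2; rw [hδdef, htdef]; exact this
  have h3 : 1 - ‖z i‖ ≤ c * δ := by
    have := (hcond i i₀).2.2.2; rw [hδdef, htdef]; exact this
  set w : ℂ := ((t : ℝ) : ℂ) * ζ i with hwdef
  have hwn : ‖w‖ = t := by
    rw [hwdef, norm_mul, Complex.norm_real, Real.norm_eq_abs, hζ i, mul_one,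
      abs_of_nonneg ht0]
  clear_value w
  have hnum : ‖w - z i‖ ≤ (c + 1) * δ := by
    have e1 : ‖w - ζ i‖ = δ := by
      rw [hwdef, show ((t:ℝ):ℂ) * ζ i - ζ i = (((t - 1 : ℝ)) : ℂ) * ζ i from by
        push_cast; ring]
      rw [norm_mul, Complex.norm_real, Real.norm_eq_abs, hζ i, mul_one, abs_of_nonpos (by linarith)]
      rw [hδdef]; ring
    calc ‖w - z i‖ = ‖(w - ζ i) + (ζ i - z i)‖ := by ring_nf
      _ ≤ ‖w - ζ i‖ + ‖ζ i - z i‖ := norm_add_le _ _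
      _ = δ + ‖z i - ζ i‖ := by rw [e1, norm_sub_rev]
      _ ≤ δ + c * δ := by linarith
      _ = (c + 1) * δ := by ring
  have hz2 : ‖1 - (starRingEnd ℂ) (z i) * z i‖ = 1 - ‖z i‖ ^ 2 := by
    rw [show (starRingEnd ℂ) (z i) * z i = ((Complex.normSq (z i) : ℝ) : ℂ) from by
      rw [mul_comm, Complex.mul_conj]]
    rw [show (1:ℂ) - ((Complex.normSq (z i) : ℝ) : ℂ) = (((1 - Complex.normSq (z i) : ℝ)) : ℂ)
      from by push_cast; ring]
    rw [Complex.norm_real, Real.norm_eq_abs, ← Complex.sq_norm,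
      abs_of_nonneg (by nlinarith [hlt i, norm_nonneg (z i)])]
  have hden_up : ‖1 - (starRingEnd ℂ) (z i) * w‖ ≤ (3 * c + 1) * δ := by
    calc ‖1 - (starRingEnd ℂ) (z i) * w‖
        = ‖(1 - (starRingEnd ℂ) (z i) * z i) + (starRingEnd ℂ) (z i) * (z i - w)‖ := by
          congr 1; ring
      _ ≤ ‖1 - (starRingEnd ℂ) (z i) * z i‖ + ‖(starRingEnd ℂ) (z i) * (z i - w)‖ :=
          norm_add_le _ _
      _ = (1 - ‖z i‖ ^ 2) + ‖z i‖ * ‖z i - w‖ := by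
          rw [hz2, norm_mul, RCLike.norm_conj]
      _ ≤ 2 * (c * δ) + 1 * ((c + 1) * δ) := by
          have hnn := norm_nonneg (z i)
          have h4 : ‖z i - w‖ ≤ (c + 1) * δ := by rw [norm_sub_rev]; exact hnum
          have h5 : 1 - ‖z i‖ ^ 2 ≤ 2 * (1 - ‖z i‖) := by nlinarith [sq_nonneg (1 - ‖z i‖)]
          have h6 : ‖z i‖ * ‖z i - w‖ ≤ 1 * ((c+1) * δ) := by
            apply mul_le_mul (hlt i).le h4 (norm_nonneg _) (by norm_num)
          nlinarith
      _ = (3 * c + 1) * δ := by ring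
  have hlow : δ ^ 2 / c ≤ (1 - ‖z i‖ ^ 2) * (1 - ‖w‖ ^ 2) := by
    have e1 : δ / c ≤ 1 - ‖z i‖ := by
      rw [div_le_iff₀ (by linarith)]; nlinarith
    have e2 : 1 - ‖z i‖ ≤ 1 - ‖z i‖ ^ 2 := by nlinarith [norm_nonneg (z i), hlt i]
    have e3 : δ ≤ 1 - ‖w‖ ^ 2 := by
      rw [hwn, hδdef]; nlinarith
    have e4 : 0 ≤ 1 - ‖w‖ ^ 2 := by rw [hwn]; nlinarith
    calc δ ^ 2 / c = (δ / c) * δ := by ring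
      _ ≤ (1 - ‖z i‖ ^ 2) * (1 - ‖w‖ ^ 2) := by
          apply mul_le_mul (by linarith) e3 (by positivity) (by nlinarith)
  have hident := normSq_identity (z i) w
  -- ‖num‖² ≤ (1-ε) ‖den‖²
  set ε : ℝ := 1 / (c * (3 * c + 1) ^ 2) with hεdef
  clear_value ε
  have hε0 : 0 < ε := by rw [hεdef]; positivity
  have hε1 : ε < 1 := by
    rw [hεdef, div_lt_one (by positivity)]
    nlinarith
  have hsq : ‖w - z i‖ ^ 2 ≤ (1 - ε) * ‖1 - (starRingEnd ℂ) (z i) * w‖ ^ 2 := by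
    have hd2 : ‖1 - (starRingEnd ℂ) (z i) * w‖ ^ 2 ≤ ((3 * c + 1) * δ) ^ 2 := by
      nlinarith [norm_nonneg (1 - (starRingEnd ℂ) (z i) * w), hden_up]
    have : ε * ‖1 - (starRingEnd ℂ) (z i) * w‖ ^ 2 ≤ δ ^ 2 / c := by
      calc ε * ‖1 - (starRingEnd ℂ) (z i) * w‖ ^ 2 ≤ ε * ((3 * c + 1) * δ) ^ 2 := by
            apply mul_le_mul_of_nonneg_left hd2 hε0.le
        _ = δ ^ 2 / c := by
            rw [hεdef]
            have hc0 : (c:ℝ) ≠ 0 := by linarith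
            have h3c : ((3:ℝ) * c + 1) ≠ 0 := by linarith
            field_simp
    linarith [hident, hlow, this]
  have key : ‖w - z i‖ ≤ Real.sqrt (1 - ε) * ‖1 - (starRingEnd ℂ) (z i) * w‖ := by
    have h7 : ‖w - z i‖ = Real.sqrt (‖w - z i‖ ^ 2) := by
      rw [Real.sqrt_sq (norm_nonneg _)]
    rw [h7]
    calc Real.sqrt (‖w - z i‖ ^ 2)
        ≤ Real.sqrt ((1 - ε) * ‖1 - (starRingEnd ℂ) (z i) * w‖ ^ 2) := Real.sqrt_le_sqrt hsq
      _ = Real.sqrt (1 - ε) * ‖1 - (starRingEnd ℂ) (z i) * w‖ := by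
          rw [Real.sqrt_mul (by linarith), Real.sqrt_sq (norm_nonneg _)]
  have hδc : 0 < δ ^ 2 / c := by positivity
  have h8 : 0 < ‖1 - (starRingEnd ℂ) (z i) * w‖ ^ 2 := by
    linarith [hident, hlow, sq_nonneg ‖w - z i‖]
  have hdpos : 0 < ‖1 - (starRingEnd ℂ) (z i) * w‖ := by
    nlinarith [h8, norm_nonneg (1 - (starRingEnd ℂ) (z i) * w)]
  rw [norm_div, div_le_iff₀ hdpos]
  exact key

end Stmt8Aux

open Stmt8Aux Metric Set in
/-- A rational inner function `p̃/p` on the polydisk has a non-tangential limit of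
modulus one at every point of the `d`-torus. -/
theorem stmt8 (d : ℕ) (p : MvPolynomial (Fin d) ℂ)
    (hp : ∀ z : Fin d → ℂ, (∀ i, ‖z i‖ < 1) → eval z p ≠ 0) :
    ∀ ζ : Fin d → ℂ, (∀ i, ‖ζ i‖ = 1) →
      ∃ L : ℂ, ‖L‖ = 1 ∧ ∀ c : ℝ, 1 < c →
        Tendsto (fun z : Fin d → ℂ =>
            ((∏ i, z i ^ p.degreeOf i) *
              (starRingEnd ℂ) (eval (fun i => ((starRingEnd ℂ) (z i))⁻¹) p)) / eval z p)
          (nhdsWithin ζ (PolydiskAR d ζ c)) (nhds L) := by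
  intro ζ hζ
  rcases Nat.eq_zero_or_pos d with hd | hd
  · -- degenerate case d = 0
    subst hd
    have hpd : eval (default : Fin 0 → ℂ) p ≠ 0 := hp default (fun i => i.elim0)
    refine ⟨(starRingEnd ℂ) (eval (default : Fin 0 → ℂ) p) / eval (default : Fin 0 → ℂ) p,
      ?_, ?_⟩
    · rw [norm_div, RCLike.norm_conj, div_self (norm_ne_zero_iff.2 hpd)]
    · intro c _
      have hfun : (fun z : Fin 0 → ℂ =>
          ((∏ i, z i ^ p.degreeOf i) *
            (starRingEnd ℂ) (eval (fun i => ((starRingEnd ℂ) (z i))⁻¹) p)) / eval z p)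
          = fun _ => (starRingEnd ℂ) (eval (default : Fin 0 → ℂ) p) /
              eval (default : Fin 0 → ℂ) p := by
        funext z
        rw [Subsingleton.elim z default,
          Subsingleton.elim (fun i => ((starRingEnd ℂ) ((default : Fin 0 → ℂ) i))⁻¹)
            (default : Fin 0 → ℂ)]
        simp
      rw [hfun]
      exact tendsto_const_nhds
  · -- main case
    set i₀ : Fin d := ⟨0, hd⟩ with hi₀
    obtain ⟨L, hL1, hLt⟩ := diag_limit p hp ζ hζ
    refine ⟨L, hL1, ?_⟩
    intro c hc
    set ε : ℝ := 1 / (c * (3 * c + 1) ^ 2) with hεdef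
    clear_value ε
    have hε0 : 0 < ε := by rw [hεdef]; positivity
    have hε1 : ε < 1 := by
      rw [hεdef, div_lt_one (by positivity)]
      nlinarith
    set r : ℝ := Real.sqrt (1 - ε) with hrdef
    clear_value r
    have hr0 : 0 < r := by rw [hrdef]; exact Real.sqrt_pos.2 (by linarith)
    have hr1 : r < 1 := by
      have hsq := Real.sq_sqrt (show (0:ℝ) ≤ 1 - ε by linarith)
      rw [hrdef]
      nlinarith [Real.sqrt_nonneg (1 - ε), hsq]
    -- the diagonal comparison point
    set v : (Fin d → ℂ) → ℂ := fun z =>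
      Phi p (fun i => ((‖z i₀‖ : ℝ) : ℂ) * ζ i) /
        eval (fun i => ((‖z i₀‖ : ℝ) : ℂ) * ζ i) p with hvdef
    have ht_tendsto : Tendsto (fun z : Fin d → ℂ => ‖z i₀‖)
        (nhdsWithin ζ (PolydiskAR d ζ c)) (nhdsWithin 1 (Set.Iio 1)) := by
      rw [tendsto_nhdsWithin_iff]
      constructor
      · have h1 : Tendsto (fun z : Fin d → ℂ => ‖z i₀‖) (nhds ζ) (nhds ‖ζ i₀‖) :=
          ((continuous_apply i₀).norm).tendsto ζ
        rw [hζ i₀] at h1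
        exact h1.mono_left nhdsWithin_le_nhds
      · filter_upwards [self_mem_nhdsWithin] with z hzS
        exact hzS.1 i₀
    have hv : Tendsto v (nhdsWithin ζ (PolydiskAR d ζ c)) (nhds L) := hLt.comp ht_tendsto
    have hvdist : Tendsto (fun z => dist (v z) L)
        (nhdsWithin ζ (PolydiskAR d ζ c)) (nhds 0) :=
      tendsto_iff_dist_tendsto_zero.1 hv
    have hvnorm : Tendsto (fun z => ‖v z‖) (nhdsWithin ζ (PolydiskAR d ζ c)) (nhds 1) := by
      have := (continuous_norm.tendsto L).comp hv
      rwa [hL1] at this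
    rw [tendsto_iff_dist_tendsto_zero]
    apply squeeze_zero' (g := fun z => r * (1 - ‖v z‖ ^ 2) / (1 - r) + dist (v z) L)
    · filter_upwards with z using dist_nonneg
    · -- eventual bound
      have hev1 : ∀ᶠ z in nhdsWithin ζ (PolydiskAR d ζ c), ∀ i, ‖z i - ζ i‖ < 1/2 := by
        apply Filter.Eventually.filter_mono nhdsWithin_le_nhds
        rw [eventually_all]
        intro i
        have hopen : IsOpen {z : Fin d → ℂ | ‖z i - ζ i‖ < 1/2} :=
          isOpen_lt (((continuous_apply i).sub continuous_const).norm) continuous_const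
        apply hopen.mem_nhds
        simp
      filter_upwards [self_mem_nhdsWithin, hev1] with z hzS hznear
      have hzlt : ∀ i, ‖z i‖ < 1 := hzS.1
      have hz0 : ∀ i, z i ≠ 0 := by
        intro i hcon
        have h1 := hznear i
        rw [hcon, zero_sub, norm_neg, hζ i] at h1
        norm_num at h1
      set w : Fin d → ℂ := fun i => ((‖z i₀‖ : ℝ) : ℂ) * ζ i with hwdef
      have hwlt : ∀ i, ‖w i‖ < 1 := by
        intro i
        rw [hwdef]
        simp only [norm_mul, Complex.norm_real, Real.norm_eq_abs, hζ i, mul_one,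
          abs_of_nonneg (norm_nonneg (z i₀))]
        exact hzlt i₀
      have hb : ∀ i, ‖(w i - z i) / (1 - (starRingEnd ℂ) (z i) * w i)‖ ≤ r := by
        intro i
        rw [hwdef, hrdef, hεdef]
        simpa using region_bound hc ζ hζ hzS i₀ i
      have KE := key_estimate p hp hzlt hwlt hr0 hr1 hb
      have hvz : v z = Phi p w / eval w p := by rw [hvdef]
      have heq : ((∏ i, z i ^ p.degreeOf i) *
          (starRingEnd ℂ) (eval (fun i => ((starRingEnd ℂ) (z i))⁻¹) p)) / eval z p
          = Phi p z / eval z p := by rw [phi_eq p z hz0]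
      rw [heq]
      have htri : dist (Phi p z / eval z p) L
          ≤ dist (Phi p z / eval z p) (v z) + dist (v z) L := dist_triangle _ _ _
      have hd1 : dist (Phi p z / eval z p) (v z) ≤ r * (1 - ‖v z‖ ^ 2) / (1 - r) := by
        rw [hvz, dist_eq_norm]
        rw [le_div_iff₀ (by linarith : (0:ℝ) < 1 - r)]
        calc ‖Phi p z / eval z p - Phi p w / eval w p‖ * (1 - r)
            = (1 - r) * ‖Phi p z / eval z p - Phi p w / eval w p‖ := by ring
          _ ≤ r * (1 - ‖Phi p w / eval w p‖ ^ 2) := KE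
        -- note: r * (1 - ‖v z‖^2) with hvz
      rw [hvz]
      rw [hvz] at htri hd1
      linarith
    · -- limit of the bound is 0
      have hB1 : Tendsto (fun z => r * (1 - ‖v z‖ ^ 2) / (1 - r))
          (nhdsWithin ζ (PolydiskAR d ζ c)) (nhds (r * (1 - 1 ^ 2) / (1 - r))) := by
        apply Tendsto.div_const
        apply Tendsto.const_mul
        exact (tendsto_const_nhds).sub (hvnorm.pow 2)
      have := hB1.add hvdist
      rw [show r * (1 - 1 ^ 2) / (1 - r) + 0 = 0 from by norm_num] at this
      exact this

end
end

section
/- Let p(z₁,z₂) = 2 − z₁ − z₂. Then the function 1/p is not square-integrable on the two-torus 𝕋²: ∫_{𝕋²} |2 − z₁ − z₂|^{−2} dσ = ∞, where dσ is normalized Lebesgue measure on 𝕋². -/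
open MeasureTheory Real

lemma aux_norm_bound {x y : ℝ} (hx : x ∈ Set.Ioo (0:ℝ) 1) (hy : y ∈ Set.Ioo (0:ℝ) 1) :
    ‖(2 : ℂ) - Complex.exp (Complex.I * (x : ℂ)) - Complex.exp (Complex.I * (y : ℂ))‖ ^ 2
      ≤ 4 * (x + y) ^ 2 ∧
    0 < ‖(2 : ℂ) - Complex.exp (Complex.I * (x : ℂ)) - Complex.exp (Complex.I * (y : ℂ))‖ := by
  obtain ⟨hx0, hx1⟩ := hx
  obtain ⟨hy0, hy1⟩ := hy
  have habs : ∀ t : ℝ, 0 < t → t < 1 →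
      ‖(1 : ℂ) - Complex.exp (Complex.I * (t : ℂ))‖ ≤ 2 * t := by
    intro t ht0 ht1
    have hIt : ‖Complex.I * (t : ℂ)‖ = t := by
      rw [norm_mul, Complex.norm_I, Complex.norm_real, one_mul, Real.norm_eq_abs, abs_of_pos ht0]
    have h := Complex.norm_exp_sub_one_le (x := Complex.I * (t : ℂ))
      (by rw [hIt]; linarith)
    rw [hIt] at h
    calc ‖(1 : ℂ) - Complex.exp (Complex.I * (t : ℂ))‖
        = ‖Complex.exp (Complex.I * (t : ℂ)) - 1‖ := by
          rw [norm_sub_rev]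
      _ ≤ 2 * t := h
  have hsplit : (2 : ℂ) - Complex.exp (Complex.I * (x : ℂ)) - Complex.exp (Complex.I * (y : ℂ))
      = ((1 : ℂ) - Complex.exp (Complex.I * (x : ℂ)))
        + ((1 : ℂ) - Complex.exp (Complex.I * (y : ℂ))) := by ring
  have hnorm : ‖(2 : ℂ) - Complex.exp (Complex.I * (x : ℂ)) - Complex.exp (Complex.I * (y : ℂ))‖
      ≤ 2 * x + 2 * y := by
    rw [hsplit]
    exact (norm_add_le _ _).trans (add_le_add (habs x hx0 hx1) (habs y hy0 hy1))
  have hre : ((2 : ℂ) - Complex.exp (Complex.I * (x : ℂ))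
      - Complex.exp (Complex.I * (y : ℂ))).re = 2 - Real.cos x - Real.cos y := by
    rw [mul_comm Complex.I (x : ℂ), mul_comm Complex.I (y : ℂ), Complex.exp_mul_I,
      Complex.exp_mul_I]
    simp [Complex.cos_ofReal_re]
  have hcosx : Real.cos x < 1 := by
    have := Real.cos_lt_cos_of_nonneg_of_le_pi le_rfl
      (by linarith [Real.pi_gt_three] : x ≤ π) hx0
    simpa using this
  have hcosy : Real.cos y < 1 := by
    have := Real.cos_lt_cos_of_nonneg_of_le_pi le_rfl
      (by linarith [Real.pi_gt_three] : y ≤ π) hy0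
    simpa using this
  have hpos : 0 < ‖(2 : ℂ) - Complex.exp (Complex.I * (x : ℂ))
      - Complex.exp (Complex.I * (y : ℂ))‖ := by
    have h1 := Complex.re_le_norm ((2 : ℂ) - Complex.exp (Complex.I * (x : ℂ))
      - Complex.exp (Complex.I * (y : ℂ)))
    rw [hre] at h1
    linarith
  refine ⟨?_, hpos⟩
  nlinarith [norm_nonneg ((2 : ℂ) - Complex.exp (Complex.I * (x : ℂ))
    - Complex.exp (Complex.I * (y : ℂ)))]

lemma aux_one_div_lintegral_top :
    ∫⁻ x : ℝ in Set.Ioo (0:ℝ) 1, ENNReal.ofReal (1 / (16 * x)) = ⊤ := by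
  by_contra h
  have hmeas : Measurable (fun x : ℝ => 1 / (16 * x)) := by
    fun_prop
  have hnn : 0 ≤ᵐ[volume.restrict (Set.Ioo (0:ℝ) 1)] fun x : ℝ => 1 / (16 * x) := by
    filter_upwards [ae_restrict_mem measurableSet_Ioo] with x hx
    have h16 : (0:ℝ) < 16 * x := by linarith [hx.1]
    exact (one_div_pos.mpr h16).le
  have hint : IntegrableOn (fun x : ℝ => 1 / (16 * x)) (Set.Ioo (0:ℝ) 1) :=
    (lintegral_ofReal_ne_top_iff_integrable hmeas.aestronglyMeasurable hnn).1 h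
  have hint2 : IntegrableOn (fun x : ℝ => x ^ (-1 : ℝ)) (Set.Ioo (0:ℝ) 1) := by
    apply MeasureTheory.IntegrableOn.congr_fun (hint.const_mul 16) ?_ measurableSet_Ioo
    intro t ht
    have ht0 : t ≠ 0 := ht.1.ne'
    show 16 * (1 / (16 * t)) = t ^ (-1 : ℝ)
    rw [Real.rpow_neg ht.1.le, Real.rpow_one]
    field_simp
  rw [intervalIntegral.integrableOn_Ioo_rpow_iff zero_lt_one] at hint2
  linarith

/-- `1/(2 − z₁ − z₂)` is not square-integrable on the two-torus. -/
theorem stmt9 :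
    ∫⁻ θ : ℝ × ℝ in Set.Icc (0 : ℝ) (2 * π) ×ˢ Set.Icc (0 : ℝ) (2 * π),
      ENNReal.ofReal
        (1 / ‖(2 : ℂ) - Complex.exp (Complex.I * (θ.1 : ℂ)) -
            Complex.exp (Complex.I * (θ.2 : ℂ))‖ ^ 2) = ⊤ := by
  have hsub : Set.Ioo (0:ℝ) 1 ×ˢ Set.Ioo (0:ℝ) 1
      ⊆ Set.Icc (0:ℝ) (2*π) ×ˢ Set.Icc (0:ℝ) (2*π) := by
    refine Set.prod_mono ?_ ?_ <;>
      exact fun t ht => ⟨ht.1.le, le_trans ht.2.le (by nlinarith [Real.pi_gt_three])⟩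
  rw [eq_top_iff]
  have key : ∫⁻ θ : ℝ × ℝ in Set.Ioo (0:ℝ) 1 ×ˢ Set.Ioo (0:ℝ) 1,
      ENNReal.ofReal (1 / (4 * (θ.1 + θ.2) ^ 2)) = ⊤ := by
    have hg : Measurable fun θ : ℝ × ℝ => ENNReal.ofReal (1 / (4 * (θ.1 + θ.2) ^ 2)) := by
      have hm : Measurable fun θ : ℝ × ℝ => (4 * (θ.1 + θ.2) ^ 2)⁻¹ :=
        (((measurable_fst.add measurable_snd).pow_const 2).const_mul (4:ℝ)).inv
      exact ENNReal.measurable_ofReal.comp (by simpa only [one_div] using hm)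
    rw [Measure.volume_eq_prod, ← Measure.prod_restrict, lintegral_prod _ hg.aemeasurable]
    rw [eq_top_iff, ← aux_one_div_lintegral_top]
    apply setLIntegral_mono' measurableSet_Ioo
    intro x hx
    have hx0 : x ≠ 0 := hx.1.ne'
    calc ENNReal.ofReal (1 / (16 * x))
        = ENNReal.ofReal (1 / (16 * x ^ 2)) * volume (Set.Ioo (0:ℝ) x) := by
          rw [Real.volume_Ioo, sub_zero, ← ENNReal.ofReal_mul (by positivity)]
          congr 1
          field_simp
      _ = ∫⁻ _ in Set.Ioo (0:ℝ) x, ENNReal.ofReal (1 / (16 * x ^ 2)) :=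
          (setLIntegral_const _ _).symm
      _ ≤ ∫⁻ y in Set.Ioo (0:ℝ) x, ENNReal.ofReal (1 / (4 * (x + y) ^ 2)) := by
          apply setLIntegral_mono' measurableSet_Ioo
          intro y hy
          apply ENNReal.ofReal_le_ofReal
          apply one_div_le_one_div_of_le (by nlinarith [hx.1, hy.1])
          nlinarith [hy.1, hy.2, hx.1]
      _ ≤ ∫⁻ y in Set.Ioo (0:ℝ) 1, ENNReal.ofReal (1 / (4 * (x + y) ^ 2)) :=
          lintegral_mono_set (Set.Ioo_subset_Ioo le_rfl hx.2.le)
  calc (⊤ : ENNReal)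
      = ∫⁻ θ : ℝ × ℝ in Set.Ioo (0:ℝ) 1 ×ˢ Set.Ioo (0:ℝ) 1,
          ENNReal.ofReal (1 / (4 * (θ.1 + θ.2) ^ 2)) := key.symm
    _ ≤ ∫⁻ θ : ℝ × ℝ in Set.Ioo (0:ℝ) 1 ×ˢ Set.Ioo (0:ℝ) 1,
          ENNReal.ofReal
            (1 / ‖(2 : ℂ) - Complex.exp (Complex.I * (θ.1 : ℂ)) -
                Complex.exp (Complex.I * (θ.2 : ℂ))‖ ^ 2) := by
        apply setLIntegral_mono' (measurableSet_Ioo.prod measurableSet_Ioo)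
        rintro ⟨x, y⟩ ⟨hx, hy⟩
        obtain ⟨hb, hp⟩ := aux_norm_bound hx hy
        apply ENNReal.ofReal_le_ofReal
        exact one_div_le_one_div_of_le (by positivity) hb
    _ ≤ _ := lintegral_mono_set hsub
end

section
/- Let g(z₁,z₂) = (1 − z₁)/(2 − z₁ − z₂). Then g is square-integrable on 𝕋²: ∫_{𝕋²} |1 − z₁|² / |2 − z₁ − z₂|² dσ < ∞. -/
open MeasureTheory Real

namespace Stmt10Aux

lemma norm_one_sub_exp (x : ℝ) :
    ‖(1 : ℂ) - Complex.exp (Complex.I * (x : ℂ))‖ ^ 2 = 2 - 2 * Real.cos x := by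
  rw [mul_comm, Complex.sq_norm, Complex.normSq_apply]
  simp only [Complex.sub_re, Complex.sub_im, Complex.one_re, Complex.one_im,
    Complex.exp_ofReal_mul_I_re, Complex.exp_ofReal_mul_I_im]
  nlinarith [Real.sin_sq_add_cos_sq x]

lemma abs_w_sq (x : ℝ) :
    (‖(2:ℂ) - Complex.exp (Complex.I * (x : ℂ))‖)^2 = 1 + 2*(2 - 2*Real.cos x) := by
  rw [mul_comm, Complex.sq_norm, Complex.normSq_apply]
  simp only [Complex.sub_re, Complex.sub_im,
    Complex.exp_ofReal_mul_I_re, Complex.exp_ofReal_mul_I_im]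
  norm_num
  nlinarith [Real.sin_sq_add_cos_sq x]

lemma denom_eq (x y : ℝ) :
    ‖((2:ℂ) - Complex.exp (Complex.I * (x : ℂ))) - Complex.exp (Complex.I * (y : ℂ))‖ ^ 2 =
      (‖(2:ℂ) - Complex.exp (Complex.I * (x : ℂ))‖)^2 + 1 -
        2 * ‖(2:ℂ) - Complex.exp (Complex.I * (x : ℂ))‖ *
          Real.cos (y - Complex.arg ((2:ℂ) - Complex.exp (Complex.I * (x : ℂ)))) := by
  set w : ℂ := (2:ℂ) - Complex.exp (Complex.I * (x : ℂ)) with hw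
  have hw0 : w ≠ 0 := by
    intro h
    have h2 : Complex.exp (Complex.I * (x:ℂ)) = 2 := by
      rw [hw] at h; linear_combination -h
    have := Complex.norm_exp_ofReal_mul_I x
    rw [mul_comm] at h2
    rw [h2] at this
    norm_num at this
  have hr : ‖w‖ ≠ 0 := norm_ne_zero_iff.mpr hw0
  have hcos := Complex.cos_arg hw0
  have hsin := Complex.sin_arg w
  rw [Real.cos_sub]
  rw [Complex.sq_norm, Complex.normSq_apply]
  simp only [Complex.sub_re, Complex.sub_im, Complex.exp_ofReal_mul_I_re,
    Complex.exp_ofReal_mul_I_im, mul_comm Complex.I ((y:ℂ))]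
  rw [hcos, hsin]
  have habs : (‖w‖)^2 = w.re^2 + w.im^2 := by
    rw [Complex.sq_norm, Complex.normSq_apply]; ring
  field_simp
  linear_combination Real.sin_sq_add_cos_sq y + (-1:ℝ) * habs

/-- Step 1: the pointwise bound by `8N/(N² + (2 - 2cos(y-φ)))`. -/
lemma step1 (x y : ℝ) :
    ‖(1 : ℂ) - Complex.exp (Complex.I * (x : ℂ))‖ ^ 2 /
      ‖(2 : ℂ) - Complex.exp (Complex.I * (x : ℂ)) - Complex.exp (Complex.I * (y : ℂ))‖ ^ 2 ≤
    8*(2 - 2*Real.cos x) /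
      ((2 - 2*Real.cos x)^2 +
        (2 - 2*Real.cos (y - Complex.arg ((2:ℂ) - Complex.exp (Complex.I * (x : ℂ)))))) := by
  have hnum := norm_one_sub_exp x
  have hden := denom_eq x y
  set N := 2 - 2*Real.cos x with hNdef
  set r := ‖(2:ℂ) - Complex.exp (Complex.I * (x:ℂ))‖ with hrdef
  set q := Real.cos (y - Complex.arg ((2:ℂ) - Complex.exp (Complex.I * (x:ℂ)))) with hqdef
  have hN0 : 0 ≤ N := by
    have := Real.cos_le_one x; rw [hNdef]; linarith
  have hN4 : N ≤ 4 := by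
    have := Real.neg_one_le_cos x; rw [hNdef]; linarith
  have hq1 : q ≤ 1 := Real.cos_le_one _
  have hq2 : (-1:ℝ) ≤ q := Real.neg_one_le_cos _
  have hr0 : (0:ℝ) ≤ r := norm_nonneg _
  have hr2 : r^2 = 1 + 2*N := abs_w_sq x
  rw [hnum, hden]
  rcases eq_or_lt_of_le hN0 with h0 | hNpos
  · rw [← h0]
    simp only [mul_zero, zero_div]
    positivity
  · have hr1 : 1 ≤ r := by nlinarith
    have hApre : (0:ℝ) ≤ N^2*((N-16)^2 - 32) := by
      apply mul_nonneg (sq_nonneg N); nlinarith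
    have h1 : (16*r)^2 ≤ (16+16*N-N^2)^2 := by nlinarith [hApre, hr2]
    have hApos : (0:ℝ) < 16+16*N-N^2 := by nlinarith
    have hA : 16*r ≤ 16+16*N-N^2 := by nlinarith [h1, hApos, hr0]
    have hE : 0 < N^2 + (2-2*q) := by nlinarith
    have hD : N^2 + (2-2*q) ≤ 8*(r^2+1-2*r*q) := by
      nlinarith [mul_nonneg (by linarith : (0:ℝ) ≤ 16*r - 2) (by linarith : (0:ℝ) ≤ 1 - q)]
    have hDpos : 0 < r^2+1-2*r*q := by linarith
    rw [div_le_div_iff₀ hDpos hE]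
    nlinarith [mul_le_mul_of_nonneg_left hD hN0]

/-- The dominating Cauchy-type profile. -/
noncomputable def G (NN d y : ℝ) : ℝ := 8*NN*((NN^2)*(1+((2/(π*NN))*(y-d))^2))⁻¹

lemma G_eq (NN d y : ℝ) (h : NN ≠ 0) :
    G NN d y = 8*NN / (NN^2 + (4/π^2)*(y-d)^2) := by
  have hπ : π ≠ 0 := Real.pi_ne_zero
  rw [G, div_eq_mul_inv]
  congr 2
  field_simp
  ring

lemma G_nonneg (NN d y : ℝ) (h : 0 ≤ NN) : 0 ≤ G NN d y := by
  rw [G]; positivity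

lemma jordan {t : ℝ} (h : |t| ≤ π) : (4/π^2)*t^2 ≤ 2 - 2*Real.cos t := by
  have := Real.cos_le_one_sub_mul_cos_sq h
  ring_nf at this ⊢
  linarith

/-- Step 2: domination by a sum of two Cauchy profiles. -/
lemma step2 (x y : ℝ) (hN : 0 < 2 - 2*Real.cos x) (hy : y ∈ Set.Icc (0:ℝ) (2*π)) :
    8*(2 - 2*Real.cos x) /
      ((2 - 2*Real.cos x)^2 +
        (2 - 2*Real.cos (y - Complex.arg ((2:ℂ) - Complex.exp (Complex.I * (x : ℂ)))))) ≤
    G (2 - 2*Real.cos x) (Complex.arg ((2:ℂ) - Complex.exp (Complex.I * (x : ℂ)))) y +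
      G (2 - 2*Real.cos x) (Complex.arg ((2:ℂ) - Complex.exp (Complex.I * (x : ℂ))) + 2*π) y := by
  set N := 2 - 2*Real.cos x with hNdef
  set φ := Complex.arg ((2:ℂ) - Complex.exp (Complex.I * (x:ℂ))) with hφdef
  have hφ1 : -π < φ := Complex.neg_pi_lt_arg _
  have hφ2 : φ ≤ π := Complex.arg_le_pi _
  obtain ⟨hy0, hy2⟩ := hy
  have hπ : (0:ℝ) < π := Real.pi_pos
  have hG1 : G N φ y = 8*N / (N^2 + (4/π^2)*(y-φ)^2) := G_eq _ _ _ hN.ne'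
  have hG2 : G N (φ+2*π) y = 8*N / (N^2 + (4/π^2)*(y-φ-2*π)^2) := by
    rw [G_eq _ _ _ hN.ne']; ring_nf
  have hcos0 : 0 ≤ 2 - 2*Real.cos (y - φ) := by
    have := Real.cos_le_one (y - φ); linarith
  rcases le_or_gt (y - φ) π with hc | hc
  · -- use the first profile
    have habs : |y - φ| ≤ π := abs_le.2 ⟨by linarith, hc⟩
    have hj := jordan habs
    have h1 : 8*N / (N^2 + (2 - 2*Real.cos (y-φ))) ≤ 8*N / (N^2 + (4/π^2)*(y-φ)^2) := by
      apply div_le_div_of_nonneg_left (by linarith) (by positivity) (by linarith)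
    calc 8*N / (N^2 + (2 - 2*Real.cos (y-φ)))
        ≤ 8*N / (N^2 + (4/π^2)*(y-φ)^2) := h1
      _ ≤ G N φ y + G N (φ+2*π) y := by
          rw [hG1]
          have := G_nonneg N (φ+2*π) y (by linarith)
          linarith
  · -- use the second profile
    have habs : |y - φ - 2*π| ≤ π := abs_le.2 ⟨by linarith, by linarith⟩
    have hj := jordan habs
    have hper : Real.cos (y - φ - 2*π) = Real.cos (y - φ) := Real.cos_sub_two_pi _
    rw [hper] at hj
    have h1 : 8*N / (N^2 + (2 - 2*Real.cos (y-φ))) ≤ 8*N / (N^2 + (4/π^2)*(y-φ-2*π)^2) := by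
      apply div_le_div_of_nonneg_left (by linarith) (by positivity) (by linarith)
    calc 8*N / (N^2 + (2 - 2*Real.cos (y-φ)))
        ≤ 8*N / (N^2 + (4/π^2)*(y-φ-2*π)^2) := h1
      _ ≤ G N φ y + G N (φ+2*π) y := by
          rw [hG2]
          have := G_nonneg N φ y (by linarith)
          linarith

lemma lint_calc (b a c d : ℝ) (hb : 0 ≤ b) (ha : 0 < a) (hc : 0 < c) :
    ∫⁻ y : ℝ, ENNReal.ofReal (b * (a * (1 + (c * (y - d))^2))⁻¹) =
      ENNReal.ofReal (b * (π / (a * c))) := by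
  have h1 : Integrable (fun t : ℝ => (1 + t^2)⁻¹) := integrable_inv_one_add_sq
  have h2 : Integrable (fun t : ℝ => (1 + (c*t)^2)⁻¹) := h1.comp_mul_left' hc.ne'
  have h3 : Integrable (fun y : ℝ => (1 + (c*(y-d))^2)⁻¹) := h2.comp_sub_right d
  have h4 : Integrable (fun y : ℝ => b * (a * (1 + (c*(y-d))^2))⁻¹) := by
    have := (h3.const_mul (b * a⁻¹))
    refine this.congr (Filter.Eventually.of_forall (fun y => ?_))
    simp only [mul_inv]; ring
  rw [← ofReal_integral_eq_lintegral_ofReal h4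
    (Filter.Eventually.of_forall (fun y => by positivity))]
  congr 1
  have key : ∫ y : ℝ, (1 + (c*(y-d))^2)⁻¹ = π / c := by
    have e1 : ∫ y : ℝ, (1 + (c*(y-d))^2)⁻¹ = ∫ y : ℝ, (1 + (c*y)^2)⁻¹ :=
      integral_sub_right_eq_self (fun y : ℝ => (1 + (c*y)^2)⁻¹) d
    have e2 : ∫ y : ℝ, (1 + (c*y)^2)⁻¹ = |c⁻¹| • ∫ t : ℝ, (1 + t^2)⁻¹ :=
      MeasureTheory.Measure.integral_comp_mul_left (fun t : ℝ => (1 + t^2)⁻¹) c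
    rw [e1, e2, integral_univ_inv_one_add_sq, abs_of_pos (inv_pos.2 hc), smul_eq_mul]
    ring
  calc ∫ y : ℝ, b * (a * (1 + (c*(y-d))^2))⁻¹
      = (b * a⁻¹) * ∫ y : ℝ, (1 + (c*(y-d))^2)⁻¹ := by
        rw [← integral_const_mul]
        congr 1; ext y; simp only [mul_inv]; ring
    _ = b * (π / (a * c)) := by rw [key]; field_simp

lemma G_measurable (NN d : ℝ) : Measurable (fun y : ℝ => ENNReal.ofReal (G NN d y)) := by
  apply Measurable.ennreal_ofReal
  unfold G
  fun_prop

lemma G_lintegral (NN d : ℝ) (hNN : 0 < NN) :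
    ∫⁻ y : ℝ, ENNReal.ofReal (G NN d y) = ENNReal.ofReal (4*π^2) := by
  have hπ : (0:ℝ) < π := Real.pi_pos
  have h := lint_calc (8*NN) (NN^2) (2/(π*NN)) d (by positivity) (by positivity) (by positivity)
  unfold G
  rw [h]
  congr 1
  field_simp
  ring

/-- Inner integral bound: for every `x`, the integral in `y` is at most `8π²`. -/
lemma inner_bound (x : ℝ) :
    ∫⁻ y in Set.Icc (0:ℝ) (2*π),
      ENNReal.ofReal
        (‖(1 : ℂ) - Complex.exp (Complex.I * (x : ℂ))‖ ^ 2 /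
          ‖(2 : ℂ) - Complex.exp (Complex.I * (x : ℂ)) - Complex.exp (Complex.I * (y : ℂ))‖ ^ 2)
      ≤ ENNReal.ofReal (8*π^2) := by
  set N := 2 - 2*Real.cos x with hNdef
  have hN0 : 0 ≤ N := by have := Real.cos_le_one x; rw [hNdef]; linarith
  rcases eq_or_lt_of_le hN0 with h0 | hNpos
  · have hz : ∀ y : ℝ,
        ENNReal.ofReal
          (‖(1 : ℂ) - Complex.exp (Complex.I * (x : ℂ))‖ ^ 2 /
            ‖(2 : ℂ) - Complex.exp (Complex.I * (x : ℂ)) - Complex.exp (Complex.I * (y : ℂ))‖ ^ 2)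
          = 0 := by
      intro y
      rw [norm_one_sub_exp x, ← hNdef, ← h0]
      simp
    have h00 : (∫⁻ y in Set.Icc (0:ℝ) (2*π),
        ENNReal.ofReal
          (‖(1 : ℂ) - Complex.exp (Complex.I * (x : ℂ))‖ ^ 2 /
            ‖(2 : ℂ) - Complex.exp (Complex.I * (x : ℂ)) -
              Complex.exp (Complex.I * (y : ℂ))‖ ^ 2)) = 0 := by
      simp only [hz]
      simp
    rw [h00]
    exact zero_le
  · set φ := Complex.arg ((2:ℂ) - Complex.exp (Complex.I * (x:ℂ))) with hφdef
    have hmono : ∀ y ∈ Set.Icc (0:ℝ) (2*π),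
        ENNReal.ofReal
          (‖(1 : ℂ) - Complex.exp (Complex.I * (x : ℂ))‖ ^ 2 /
            ‖(2 : ℂ) - Complex.exp (Complex.I * (x : ℂ)) - Complex.exp (Complex.I * (y : ℂ))‖ ^ 2)
          ≤ ENNReal.ofReal (G N φ y) + ENNReal.ofReal (G N (φ+2*π) y) := by
      intro y hy
      have h1 := (step1 x y).trans (step2 x y hNpos hy)
      calc ENNReal.ofReal
            (‖(1 : ℂ) - Complex.exp (Complex.I * (x : ℂ))‖ ^ 2 /
              ‖(2 : ℂ) - Complex.exp (Complex.I * (x : ℂ)) -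
                Complex.exp (Complex.I * (y : ℂ))‖ ^ 2)
          ≤ ENNReal.ofReal (G N φ y + G N (φ+2*π) y) := ENNReal.ofReal_le_ofReal h1
        _ = ENNReal.ofReal (G N φ y) + ENNReal.ofReal (G N (φ+2*π) y) :=
            ENNReal.ofReal_add (G_nonneg _ _ _ hN0) (G_nonneg _ _ _ hN0)
    calc ∫⁻ y in Set.Icc (0:ℝ) (2*π),
          ENNReal.ofReal
            (‖(1 : ℂ) - Complex.exp (Complex.I * (x : ℂ))‖ ^ 2 /
              ‖(2 : ℂ) - Complex.exp (Complex.I * (x : ℂ)) -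
                Complex.exp (Complex.I * (y : ℂ))‖ ^ 2)
        ≤ ∫⁻ y in Set.Icc (0:ℝ) (2*π),
            (ENNReal.ofReal (G N φ y) + ENNReal.ofReal (G N (φ+2*π) y)) :=
          lintegral_mono_ae ((ae_restrict_iff' measurableSet_Icc).2 (ae_of_all _ hmono))
      _ ≤ ∫⁻ y, (ENNReal.ofReal (G N φ y) + ENNReal.ofReal (G N (φ+2*π) y)) :=
          setLIntegral_le_lintegral _ _
      _ = (∫⁻ y, ENNReal.ofReal (G N φ y)) + ∫⁻ y, ENNReal.ofReal (G N (φ+2*π) y) :=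
          lintegral_add_left (G_measurable N φ) _
      _ = ENNReal.ofReal (4*π^2) + ENNReal.ofReal (4*π^2) := by
          rw [G_lintegral N φ hNpos, G_lintegral N _ hNpos]
      _ ≤ ENNReal.ofReal (8*π^2) := by
          rw [← ENNReal.ofReal_add (by positivity) (by positivity)]
          apply ENNReal.ofReal_le_ofReal
          ring_nf
          linarith [sq_nonneg π]

end Stmt10Aux

/-- `(1 − z₁)/(2 − z₁ − z₂)` is square-integrable on the two-torus. -/
theorem stmt10 :
    ∫⁻ θ : ℝ × ℝ in Set.Icc (0 : ℝ) (2 * π) ×ˢ Set.Icc (0 : ℝ) (2 * π),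
      ENNReal.ofReal
        (‖(1 : ℂ) - Complex.exp (Complex.I * (θ.1 : ℂ))‖ ^ 2 /
          ‖(2 : ℂ) - Complex.exp (Complex.I * (θ.1 : ℂ)) -
            Complex.exp (Complex.I * (θ.2 : ℂ))‖ ^ 2) < ⊤ := by
  have hmeas : Measurable (fun θ : ℝ × ℝ =>
      ENNReal.ofReal
        (‖(1 : ℂ) - Complex.exp (Complex.I * (θ.1 : ℂ))‖ ^ 2 /
          ‖(2 : ℂ) - Complex.exp (Complex.I * (θ.1 : ℂ)) -
            Complex.exp (Complex.I * (θ.2 : ℂ))‖ ^ 2)) := by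
    apply Measurable.ennreal_ofReal
    apply Measurable.div <;> fun_prop
  rw [Measure.volume_eq_prod, ← MeasureTheory.Measure.prod_restrict,
    MeasureTheory.lintegral_prod _ hmeas.aemeasurable]
  refine lt_of_le_of_lt (lintegral_mono fun x => Stmt10Aux.inner_bound x) ?_
  rw [MeasureTheory.setLIntegral_const]
  exact ENNReal.mul_lt_top ENNReal.ofReal_lt_top measure_Icc_lt_top
end

section
/- Let g(z₁,z₂) = (1 − z₁)/(2 − z₁ − z₂), a holomorphic function on 𝔻². Then g is unbounded on 𝔻²: specifically, along the path z(θ) = ((1−θ²)e^{iθ}, (1−θ²)e^{−iθ}) one has |g(z(θ))| ≥ C/|θ| for some constant C > 0 and all small θ ≠ 0, so sup_{𝔻²} |g| = ∞. -/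
lemma stmt11_sin_bound (θ : ℝ) (hθ : θ ≠ 0) (hδ : |θ| < 1/2) :
    |θ| / 2 ≤ |Real.sin θ| := by
  rcases hθ.lt_or_gt with h | h
  · have h1 : 0 < -θ := by linarith
    have h2 : -θ ≤ 1 := by
      have := abs_lt.1 hδ; linarith
    have := Real.sin_gt_sub_cube h1
    rw [Real.sin_neg] at this
    have habs : |θ| = -θ := abs_of_neg h
    have hcube : (-θ)^3 ≤ (-θ) * (1/2)^2 := by
      have hh : -θ ≤ 1/2 := by have := abs_lt.1 hδ; linarith
      nlinarith [mul_le_mul_of_nonneg_left (show (-θ)^2 ≤ (1/2)^2 by nlinarith) h1.le]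
    have hsin : -Real.sin θ > 0 := by nlinarith
    rw [abs_of_neg (by linarith : Real.sin θ < 0), habs]
    nlinarith
  · have h2 : θ ≤ 1 := by have := abs_lt.1 hδ; linarith
    have := Real.sin_gt_sub_cube h
    have hcube : θ^3 ≤ θ * (1/2)^2 := by
      have hh : θ ≤ 1/2 := by have := abs_lt.1 hδ; linarith
      nlinarith [mul_le_mul_of_nonneg_left (show θ^2 ≤ (1/2)^2 by nlinarith) h.le]
    have hsin : Real.sin θ > 0 := by nlinarith
    rw [abs_of_pos hsin, abs_of_pos h]
    nlinarith

lemma stmt11_key (θ : ℝ) (hθ : θ ≠ 0) (hδ : |θ| < 1/2) :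
    (1:ℝ)/8 / |θ| ≤
      ‖(1 - ((1 - θ ^ 2 : ℝ) : ℂ) * Complex.exp (Complex.I * (θ : ℂ))) /
        (2 - ((1 - θ ^ 2 : ℝ) : ℂ) * Complex.exp (Complex.I * (θ : ℂ)) -
          ((1 - θ ^ 2 : ℝ) : ℂ) * Complex.exp (-(Complex.I * (θ : ℂ))))‖ := by
  have hθ2 : θ ^ 2 < 1/4 := by
    have h1 := abs_nonneg θ
    have h2 : |θ|^2 = θ^2 := sq_abs θ
    nlinarith
  have hθ2pos : 0 < θ ^ 2 := by positivity
  have hr1 : (3:ℝ)/4 < 1 - θ ^ 2 := by linarith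
  have hr2 : 1 - θ ^ 2 < 1 := by linarith
  have hexp1 : Complex.exp (Complex.I * (θ : ℂ)) =
      Complex.cos θ + Complex.sin θ * Complex.I := by
    rw [mul_comm Complex.I ((θ:ℂ)), Complex.exp_mul_I]
  have hexp2 : Complex.exp (-(Complex.I * (θ : ℂ))) =
      Complex.cos θ - Complex.sin θ * Complex.I := by
    have h : -(Complex.I * (θ : ℂ)) = ((-θ : ℝ) : ℂ) * Complex.I := by push_cast; ring
    rw [h, Complex.exp_mul_I]
    push_cast
    rw [Complex.cos_neg, Complex.sin_neg]
    ring
  have hD : (2 - ((1 - θ ^ 2 : ℝ) : ℂ) * Complex.exp (Complex.I * (θ : ℂ)) -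
      ((1 - θ ^ 2 : ℝ) : ℂ) * Complex.exp (-(Complex.I * (θ : ℂ)))) =
      ((2 - 2 * (1 - θ ^ 2) * Real.cos θ : ℝ) : ℂ) := by
    rw [hexp1, hexp2]
    push_cast [Complex.ofReal_cos]
    ring
  have hcos_le : Real.cos θ ≤ 1 := Real.cos_le_one θ
  have hcos_ge : 1 - θ ^ 2 / 2 ≤ Real.cos θ := Real.one_sub_sq_div_two_le_cos
  have hDpos : 0 < 2 - 2 * (1 - θ ^ 2) * Real.cos θ := by nlinarith
  have hDub : 2 - 2 * (1 - θ ^ 2) * Real.cos θ ≤ 3 * θ ^ 2 := by nlinarith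
  have hsin := stmt11_sin_bound θ hθ hδ
  have hNim : (1 - ((1 - θ ^ 2 : ℝ) : ℂ) * Complex.exp (Complex.I * (θ : ℂ))).im
      = -((1 - θ ^ 2) * Real.sin θ) := by
    rw [hexp1]
    have h2 : (1 : ℂ) - ((1 - θ^2 : ℝ):ℂ) * (Complex.cos θ + Complex.sin θ * Complex.I)
        = (((1 - (1-θ^2)*Real.cos θ) : ℝ) : ℂ) +
          ((-((1-θ^2)*Real.sin θ) : ℝ):ℂ) * Complex.I := by
      push_cast [Complex.ofReal_cos, Complex.ofReal_sin]; ring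
    rw [h2, Complex.add_im, Complex.ofReal_im, Complex.mul_im, Complex.ofReal_re,
      Complex.I_im, Complex.ofReal_im, Complex.I_re, mul_one, mul_zero, add_zero, zero_add]
  have hNlb : (3:ℝ)/8 * |θ| ≤
      ‖1 - ((1 - θ ^ 2 : ℝ) : ℂ) * Complex.exp (Complex.I * (θ : ℂ))‖ := by
    have h1 : |(1 - ((1 - θ ^ 2 : ℝ) : ℂ) * Complex.exp (Complex.I * (θ : ℂ))).im| ≤
        ‖1 - ((1 - θ ^ 2 : ℝ) : ℂ) * Complex.exp (Complex.I * (θ : ℂ))‖ :=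
      Complex.abs_im_le_norm _
    rw [hNim, abs_neg, abs_mul, abs_of_pos (by linarith : (0:ℝ) < 1 - θ ^ 2)] at h1
    nlinarith [abs_nonneg θ]
  rw [hD, norm_div, Complex.norm_real, Real.norm_eq_abs, abs_of_pos hDpos,
    div_le_div_iff₀ (abs_pos.2 hθ) hDpos]
  nlinarith [sq_abs θ, abs_nonneg θ,
    mul_le_mul_of_nonneg_right hNlb (abs_nonneg θ)]

/-- `g = (1 − z₁)/(2 − z₁ − z₂)` is unbounded on the bidisk: along the tangential path
`z(θ) = ((1−θ²)e^{iθ}, (1−θ²)e^{−iθ})` one has `|g(z(θ))| ≥ C/|θ|`, and `sup_{𝔻²}|g| = ∞`. -/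
theorem stmt11 :
    (∃ C > (0 : ℝ), ∃ δ > (0 : ℝ), ∀ θ : ℝ, θ ≠ 0 → |θ| < δ →
      C / |θ| ≤
        ‖(1 - ((1 - θ ^ 2 : ℝ) : ℂ) * Complex.exp (Complex.I * (θ : ℂ))) /
          (2 - ((1 - θ ^ 2 : ℝ) : ℂ) * Complex.exp (Complex.I * (θ : ℂ)) -
            ((1 - θ ^ 2 : ℝ) : ℂ) * Complex.exp (-(Complex.I * (θ : ℂ))))‖) ∧
    (∀ B : ℝ, ∃ z : ℂ × ℂ, ‖z.1‖ < 1 ∧ ‖z.2‖ < 1 ∧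
      B < ‖(1 - z.1) / (2 - z.1 - z.2)‖) := by
  constructor
  · exact ⟨1/8, by norm_num, 1/2, by norm_num, fun θ hθ hδ => stmt11_key θ hθ hδ⟩
  · intro B
    set θ : ℝ := 1 / (8 * (|B| + 1)) with hθdef
    have hBpos : (0:ℝ) < |B| + 1 := by positivity
    have hθpos : 0 < θ := by positivity
    have hθlt : θ < 1/2 := by
      rw [hθdef, div_lt_div_iff₀ (by positivity) (by norm_num)]
      nlinarith [abs_nonneg B]
    have hθne : θ ≠ 0 := ne_of_gt hθpos
    have habs : |θ| = θ := abs_of_pos hθpos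
    have hθ2 : θ ^ 2 < 1 := by nlinarith
    refine ⟨(((1 - θ ^ 2 : ℝ) : ℂ) * Complex.exp (Complex.I * (θ : ℂ)),
        ((1 - θ ^ 2 : ℝ) : ℂ) * Complex.exp (-(Complex.I * (θ : ℂ)))), ?_, ?_, ?_⟩
    · simp only [norm_mul, Complex.norm_real, Real.norm_eq_abs]
      rw [Complex.norm_exp]
      have hre : (Complex.I * (θ:ℂ)).re = 0 := by simp
      rw [hre, Real.exp_zero, mul_one,
        abs_of_pos (show (0:ℝ) < 1 - θ^2 by nlinarith)]
      nlinarith [hθpos]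
    · simp only [norm_mul, Complex.norm_real, Real.norm_eq_abs]
      rw [Complex.norm_exp]
      have hre : (-(Complex.I * (θ:ℂ))).re = 0 := by simp
      rw [hre, Real.exp_zero, mul_one,
        abs_of_pos (show (0:ℝ) < 1 - θ^2 by nlinarith)]
      nlinarith [hθpos]
    · have hkey := stmt11_key θ hθne (by rw [habs]; exact hθlt)
      have heq : (|B| + 1) * θ = 1/8 := by
        rw [hθdef]; field_simp
      have hB : B < 1/8 / |θ| := by
        rw [habs, lt_div_iff₀ hθpos]
        nlinarith [le_abs_self B]
      exact lt_of_lt_of_le hB hkey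
end

section
/- Let p ∈ ℂ[z₁,z₂] have bidegree (n,m) and no zeros in 𝔻², and suppose there exist polynomial vector maps A₁ : ℂ² → ℂᴺ, A₂ : ℂ² → ℂᴹ with |p(z)|² − |p̃(z)|² = (1−|z₁|²)‖A₁(z)‖² + (1−|z₂|²)‖A₂(z)‖² for all z ∈ ℂ². Then for every z ∈ 𝕋²: ‖A₁(z)‖² = n|p(z)|² − 2 Re( conj(p(z)) · z₁ ∂₁p(z) ) and ‖A₂(z)‖² = m|p(z)|² − 2 Re( conj(p(z)) · z₂ ∂₂p(z) ). -/
open MvPolynomial Filter Topology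

lemma hasDerivAt_eval_update {σ : Type*} [DecidableEq σ] (q : MvPolynomial σ ℂ)
    (z : σ → ℂ) (i : σ) (w : ℂ) :
    HasDerivAt (fun u => eval (Function.update z i u) q)
      (eval (Function.update z i w) (pderiv i q)) w := by
  induction q using MvPolynomial.induction_on with
  | C a => simpa [pderiv_C] using hasDerivAt_const w (a : ℂ)
  | add q r hq hr => simpa [map_add] using hq.fun_add hr
  | mul_X q j hq =>
    rcases eq_or_ne j i with rfl | hj
    · have h2 : HasDerivAt (fun u => eval (Function.update z j u) q * u)
          (eval (Function.update z j w) (pderiv j q) * w + eval (Function.update z j w) q) w := by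
        simpa using hq.fun_mul (hasDerivAt_id w)
      simp only [eval_mul, eval_X, Function.update_self]
      convert h2 using 1
      simp [pderiv_mul, pderiv_X_self]
      ring
    · have h := hq.mul_const (z j)
      simp only [eval_mul, eval_X, Function.update_of_ne hj]
      refine h.congr_deriv ?_
      simp [pderiv_mul, pderiv_X_of_ne hj, Function.update_of_ne hj, mul_comm]

lemma hasDerivAt_norm_sq_comp {f : ℝ → ℂ} {f' : ℂ} {x : ℝ} (hf : HasDerivAt f f' x) :
    HasDerivAt (fun r => ‖f r‖ ^ 2) (2 * ((starRingEnd ℂ) (f x) * f').re) x := by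
  have hre : HasDerivAt (fun r => (f r).re) f'.re x :=
    Complex.reCLM.hasFDerivAt.comp_hasDerivAt x hf
  have him : HasDerivAt (fun r => (f r).im) f'.im x :=
    Complex.imCLM.hasFDerivAt.comp_hasDerivAt x hf
  have h := (hre.fun_mul hre).fun_add (him.fun_mul him)
  have hfun : (fun r => ‖f r‖ ^ 2) = fun r => (f r).re * (f r).re + (f r).im * (f r).im := by
    funext r
    rw [Complex.sq_norm, Complex.normSq_apply]
  rw [hfun]
  refine h.congr_deriv ?_
  simp [Complex.mul_re]
  ring

lemma agler_key (n : ℕ) (p : MvPolynomial (Fin 2) ℂ) (k : Fin 2)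
    (z : Fin 2 → ℂ)
    (S : ℝ → ℝ) (hScont : ContinuousAt S 1)
    (hS : ∀ r : ℝ, 0 < r →
      ‖eval (Function.update z k ((r : ℂ) * z k)) p‖ ^ 2
        - r ^ (2 * n) * ‖eval (Function.update z k ((r : ℂ)⁻¹ * z k)) p‖ ^ 2
        = (1 - r ^ 2) * S r) :
    S 1 = n * ‖eval z p‖ ^ 2
        - 2 * ((starRingEnd ℂ) (eval z p) * (z k * eval z (pderiv k p))).re := by
  set P := eval z p with hP
  set Q := eval z (pderiv k p) with hQ
  -- curve r ↦ r • z k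
  have hc1 : HasDerivAt (fun r : ℝ => eval (Function.update z k ((r : ℂ) * z k)) p)
      (Q * z k) 1 := by
    have h2 : HasDerivAt (fun u : ℂ => u * z k) (z k) 1 := by
      simpa using (hasDerivAt_id (1 : ℂ)).mul_const (z k)
    have h1 := hasDerivAt_eval_update p z k ((1 : ℂ) * z k)
    have h3 := h1.comp (1 : ℂ) h2
    have h4 : HasDerivAt (fun u : ℂ => eval (Function.update z k (u * z k)) p)
        (Q * z k) ((1 : ℝ) : ℂ) := by
      simpa [Function.comp_def, Function.update_eq_self, hQ] using h3
    exact h4.comp_ofReal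
  -- curve r ↦ r⁻¹ • z k
  have hc2 : HasDerivAt (fun r : ℝ => eval (Function.update z k (((r : ℂ))⁻¹ * z k)) p)
      (-(Q * z k)) 1 := by
    have h2 : HasDerivAt (fun u : ℂ => u⁻¹ * z k) (-(z k)) 1 := by
      simpa using (hasDerivAt_inv (one_ne_zero : (1:ℂ) ≠ 0)).mul_const (z k)
    have h1 := hasDerivAt_eval_update p z k ((1 : ℂ)⁻¹ * z k)
    have h3 := h1.comp (1 : ℂ) h2
    have h4 : HasDerivAt (fun u : ℂ => eval (Function.update z k (u⁻¹ * z k)) p)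
        (-(Q * z k)) ((1 : ℝ) : ℂ) := by
      simpa [Function.comp_def, Function.update_eq_self, hQ] using h3
    exact h4.comp_ofReal
  have hg1 := hasDerivAt_norm_sq_comp hc1
  have hg2 := (hasDerivAt_pow (2 * n) (1 : ℝ)).fun_mul (hasDerivAt_norm_sq_comp hc2)
  have hg := hg1.fun_sub hg2
  set g : ℝ → ℝ := fun r => ‖eval (Function.update z k ((r : ℂ) * z k)) p‖ ^ 2
      - r ^ (2 * n) * ‖eval (Function.update z k (((r : ℂ))⁻¹ * z k)) p‖ ^ 2 with hgdef
  set D : ℝ := (2 * n : ℝ) * ‖P‖ ^ 2 - 4 * ((starRingEnd ℂ) P * (Q * z k)).re with hD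
  have hgD : HasDerivAt g (-D) 1 := by
    refine hg.congr_deriv ?_
    simp only [Complex.ofReal_one, one_mul, inv_one, Function.update_eq_self, one_pow,
      mul_neg, Complex.neg_re, hD, hP]
    push_cast
    ring
  have hg1zero : g 1 = 0 := by
    simp [hgdef, Function.update_eq_self]
  -- limits
  have hslope : Tendsto (slope g 1) (𝓝[≠] (1:ℝ)) (𝓝 (-D)) :=
    hasDerivAt_iff_tendsto_slope.mp hgD
  have haux : Tendsto (fun r : ℝ => -((1 + r)⁻¹)) (𝓝[≠] (1:ℝ)) (𝓝 (-(2⁻¹ : ℝ))) := by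
    have : ContinuousAt (fun r : ℝ => -((1 + r)⁻¹)) 1 := by
      have h : ContinuousAt (fun r : ℝ => 1 + r) 1 := by fun_prop
      exact ((h.inv₀ (by norm_num)).neg)
    have h2 := this.tendsto.mono_left (nhdsWithin_le_nhds : 𝓝[≠] (1:ℝ) ≤ 𝓝 1)
    convert h2 using 2
    norm_num
  have hmul := hslope.mul haux
  have hpos : ∀ᶠ r in 𝓝[≠] (1:ℝ), 0 < r := by
    have : ∀ᶠ r in 𝓝 (1:ℝ), 0 < r := eventually_gt_nhds (by norm_num)
    exact this.filter_mono nhdsWithin_le_nhds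
  have hne : ∀ᶠ r in 𝓝[≠] (1:ℝ), r ≠ 1 := eventually_mem_nhdsWithin
  have hEq : (fun r : ℝ => slope g 1 r * (-((1 + r)⁻¹))) =ᶠ[𝓝[≠] (1:ℝ)] S := by
    filter_upwards [hpos, hne] with r hr hr1
    have hgr : g r = (1 - r ^ 2) * S r := hS r hr
    have h1 : r - 1 ≠ 0 := sub_ne_zero.mpr hr1
    have h2 : 1 + r ≠ 0 := by positivity
    rw [slope_def_field, hg1zero, hgr]
    field_simp
    ring
  have hlim2 : Tendsto S (𝓝[≠] (1:ℝ)) (𝓝 (-D * -(2⁻¹ : ℝ))) := hmul.congr' hEq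
  have hlim1 : Tendsto S (𝓝[≠] (1:ℝ)) (𝓝 (S 1)) :=
    hScont.tendsto.mono_left nhdsWithin_le_nhds
  have hS1 : S 1 = -D * -(2⁻¹ : ℝ) := tendsto_nhds_unique hlim1 hlim2
  rw [hS1, hD]
  have hre : ((starRingEnd ℂ) P * (z k * Q)).re = ((starRingEnd ℂ) P * (Q * z k)).re := by
    congr 1
    ring
  rw [hre]
  ring


/-- The norms of the members of an Agler pair on the two-torus are determined by `p`:
`‖A₁(z)‖² = n|p|² − 2 Re(conj(p)·z₁∂₁p)` and `‖A₂(z)‖² = m|p|² − 2 Re(conj(p)·z₂∂₂p)`. -/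
theorem stmt15 (n m N M : ℕ) (p pt : MvPolynomial (Fin 2) ℂ)
    (hdeg0 : p.degreeOf 0 = n) (hdeg1 : p.degreeOf 1 = m)
    (hp : ∀ z : Fin 2 → ℂ, (∀ i, ‖z i‖ < 1) → eval z p ≠ 0)
    (hpt : ∀ z : Fin 2 → ℂ, (∀ i, z i ≠ 0) →
      eval z pt = (z 0 ^ n * z 1 ^ m) *
        (starRingEnd ℂ) (eval (fun i => ((starRingEnd ℂ) (z i))⁻¹) p))
    (A₁ : (Fin 2 → ℂ) → Fin N → ℂ) (A₂ : (Fin 2 → ℂ) → Fin M → ℂ)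
    (hA₁ : ∀ i, ∃ q : MvPolynomial (Fin 2) ℂ, ∀ z, A₁ z i = eval z q)
    (hA₂ : ∀ i, ∃ q : MvPolynomial (Fin 2) ℂ, ∀ z, A₂ z i = eval z q)
    (hAgler : ∀ z : Fin 2 → ℂ,
      ‖eval z p‖ ^ 2 - ‖eval z pt‖ ^ 2 =
        (1 - ‖z 0‖ ^ 2) * ∑ i, ‖A₁ z i‖ ^ 2 + (1 - ‖z 1‖ ^ 2) * ∑ i, ‖A₂ z i‖ ^ 2) :
    ∀ z : Fin 2 → ℂ, ‖z 0‖ = 1 → ‖z 1‖ = 1 →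
      (∑ i, ‖A₁ z i‖ ^ 2 = n * ‖eval z p‖ ^ 2 -
          2 * ((starRingEnd ℂ) (eval z p) * (z 0 * eval z (pderiv 0 p))).re) ∧
      (∑ i, ‖A₂ z i‖ ^ 2 = m * ‖eval z p‖ ^ 2 -
          2 * ((starRingEnd ℂ) (eval z p) * (z 1 * eval z (pderiv 1 p))).re) := by
  intro z hz0 hz1
  have hz0' : z 0 ≠ 0 := by
    intro h; rw [h] at hz0; simp at hz0
  have hz1' : z 1 ≠ 0 := by
    intro h; rw [h] at hz1; simp at hz1
  have hconj : ∀ i : Fin 2, ((starRingEnd ℂ) (z i))⁻¹ = z i := by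
    intro i
    have hni : ‖z i‖ = 1 := by fin_cases i <;> assumption
    have h1 : (starRingEnd ℂ) (z i) * z i = 1 := by
      rw [Complex.conj_mul']
      norm_cast
      rw [hni]
      norm_num
    exact inv_eq_of_mul_eq_one_right h1
  have hne10 : (1 : Fin 2) ≠ 0 := by decide
  have hne01 : (0 : Fin 2) ≠ 1 := by decide
  constructor
  · -- first coordinate
    choose q hq using hA₁
    set S : ℝ → ℝ := fun r => ∑ i, ‖A₁ (Function.update z 0 ((r : ℂ) * z 0)) i‖ ^ 2 with hSdef
    have hScont : ContinuousAt S 1 := by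
      have : Continuous S := by
        rw [hSdef]
        apply continuous_finset_sum
        intro i _
        have h1 : Continuous fun r : ℝ => Function.update z 0 ((r : ℂ) * z 0) :=
          continuous_const.update 0 (Complex.continuous_ofReal.mul continuous_const)
        have h2 : Continuous fun r : ℝ =>
            eval (Function.update z 0 ((r : ℂ) * z 0)) (q i) := by
          have h2' := (MvPolynomial.continuous_eval (q i)).comp h1
          exact h2'
        have h3 := (h2.norm.pow 2)
        refine h3.congr fun r => ?_
        rw [hq]
        rfl
      exact this.continuousAt
    have hkey := agler_key n p 0 z S hScont ?_
    · have hS1 : S 1 = ∑ i, ‖A₁ z i‖ ^ 2 := by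
        rw [hSdef]
        simp [Function.update_eq_self]
      rw [← hS1, hkey]
    · intro r hr
      set v : Fin 2 → ℂ := Function.update z 0 ((r : ℂ) * z 0) with hv
      have hv0 : v 0 = (r : ℂ) * z 0 := Function.update_self 0 _ z
      have hv1 : v 1 = z 1 := Function.update_of_ne hne10 _ z
      have hvne : ∀ i, v i ≠ 0 := by
        intro i
        fin_cases i
        · show v 0 ≠ 0
          rw [hv0]
          exact mul_ne_zero (by exact_mod_cast ne_of_gt hr) hz0'
        · show v 1 ≠ 0
          rw [hv1]; exact hz1'
      have hinvpt : (fun i => ((starRingEnd ℂ) (v i))⁻¹)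
          = Function.update z 0 (((r : ℂ))⁻¹ * z 0) := by
        funext i
        fin_cases i
        · show ((starRingEnd ℂ) (v 0))⁻¹ = Function.update z 0 (((r : ℂ))⁻¹ * z 0) 0
          rw [hv0, Function.update_self, map_mul, mul_inv, Complex.conj_ofReal, hconj 0]
        · show ((starRingEnd ℂ) (v 1))⁻¹ = Function.update z 0 (((r : ℂ))⁻¹ * z 0) 1
          rw [hv1, Function.update_of_ne hne10, hconj 1]
      have hptv : ‖eval v pt‖ ^ 2
          = r ^ (2 * n) * ‖eval (Function.update z 0 (((r : ℂ))⁻¹ * z 0)) p‖ ^ 2 := by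
        rw [hpt v hvne, hinvpt, hv0, hv1]
        simp only [norm_mul, norm_pow, RCLike.norm_conj, Complex.norm_real,
          Real.norm_eq_abs, abs_of_pos hr, hz0, hz1]
        ring
      have hA := hAgler v
      rw [hptv] at hA
      rw [hv0, hv1, hz1] at hA
      rw [norm_mul, Complex.norm_real, Real.norm_eq_abs, abs_of_pos hr, hz0] at hA
      have := hA
      rw [show ((1:ℝ) - 1 ^ 2) = 0 by norm_num] at this
      rw [zero_mul, add_zero] at this
      rw [mul_one] at this
      exact this
  · -- second coordinate
    choose q hq using hA₂
    set S : ℝ → ℝ := fun r => ∑ i, ‖A₂ (Function.update z 1 ((r : ℂ) * z 1)) i‖ ^ 2 with hSdef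
    have hScont : ContinuousAt S 1 := by
      have : Continuous S := by
        rw [hSdef]
        apply continuous_finset_sum
        intro i _
        have h1 : Continuous fun r : ℝ => Function.update z 1 ((r : ℂ) * z 1) :=
          continuous_const.update 1 (Complex.continuous_ofReal.mul continuous_const)
        have h2 : Continuous fun r : ℝ =>
            eval (Function.update z 1 ((r : ℂ) * z 1)) (q i) := by
          have h2' := (MvPolynomial.continuous_eval (q i)).comp h1
          exact h2'
        have h3 := (h2.norm.pow 2)
        refine h3.congr fun r => ?_
        rw [hq]
        rfl
      exact this.continuousAt
    have hkey := agler_key m p 1 z S hScont ?_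
    · have hS1 : S 1 = ∑ i, ‖A₂ z i‖ ^ 2 := by
        rw [hSdef]
        simp [Function.update_eq_self]
      rw [← hS1, hkey]
    · intro r hr
      set v : Fin 2 → ℂ := Function.update z 1 ((r : ℂ) * z 1) with hv
      have hv1 : v 1 = (r : ℂ) * z 1 := Function.update_self 1 _ z
      have hv0 : v 0 = z 0 := Function.update_of_ne hne01 _ z
      have hvne : ∀ i, v i ≠ 0 := by
        intro i
        fin_cases i
        · show v 0 ≠ 0
          rw [hv0]; exact hz0'
        · show v 1 ≠ 0
          rw [hv1]
          exact mul_ne_zero (by exact_mod_cast ne_of_gt hr) hz1'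
      have hinvpt : (fun i => ((starRingEnd ℂ) (v i))⁻¹)
          = Function.update z 1 (((r : ℂ))⁻¹ * z 1) := by
        funext i
        fin_cases i
        · show ((starRingEnd ℂ) (v 0))⁻¹ = Function.update z 1 (((r : ℂ))⁻¹ * z 1) 0
          rw [hv0, Function.update_of_ne hne01, hconj 0]
        · show ((starRingEnd ℂ) (v 1))⁻¹ = Function.update z 1 (((r : ℂ))⁻¹ * z 1) 1
          rw [hv1, Function.update_self, map_mul, mul_inv, Complex.conj_ofReal, hconj 1]
      have hptv : ‖eval v pt‖ ^ 2
          = r ^ (2 * m) * ‖eval (Function.update z 1 (((r : ℂ))⁻¹ * z 1)) p‖ ^ 2 := by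
        rw [hpt v hvne, hinvpt, hv0, hv1]
        simp only [norm_mul, norm_pow, RCLike.norm_conj, Complex.norm_real,
          Real.norm_eq_abs, abs_of_pos hr, hz0, hz1]
        ring
      have hA := hAgler v
      rw [hptv] at hA
      rw [hv0, hv1, hz0] at hA
      rw [norm_mul, Complex.norm_real, Real.norm_eq_abs, abs_of_pos hr, hz1] at hA
      have := hA
      rw [show ((1:ℝ) - 1 ^ 2) = 0 by norm_num] at this
      rw [zero_mul, zero_add] at this
      rw [mul_one] at this
      exact this
end

section
/- Let p ∈ ℂ[z₁,z₂] have bidegree (n,m), no zeros in 𝔻², and no common factor with p̃, and suppose (A₁, A₂) is an Agler pair for p with A₁ ∈ ℂᴺ[z₁,z₂], A₂ ∈ ℂᴹ[z₁,z₂]. Then there exists a (1+N+M) × (1+N+M) unitary matrix U = [[A,B],[C,D]] (block sizes 1 and N+M) such that, with Δ(z) = diag(z₁ I_N, z₂ I_M), one has p̃(z)/p(z) = A + B Δ(z)(I − D Δ(z))⁻¹ C for all z ∈ 𝔻²; equivalently, p̃(z) = p(z)·(A + B Δ(z)(I − D Δ(z))⁻¹ C). -/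
open MvPolynomial Matrix

lemma mv_eval_real_zero : ∀ (k : ℕ) (T : MvPolynomial (Fin k) ℂ),
    (∀ x : Fin k → ℝ, eval (fun i => (x i : ℂ)) T = 0) → T = 0 := by
  intro k
  induction k with
  | zero =>
    intro T h
    obtain ⟨c, rfl⟩ := MvPolynomial.C_surjective (Fin 0) T
    have := h (fun _ => 0)
    simpa using this
  | succ k ih =>
    intro T h
    have hco : ∀ j : ℕ, (finSuccEquiv ℂ k T).coeff j = 0 := by
      intro j
      apply ih
      intro x
      have hq : ∀ y : ℝ, (Polynomial.map (eval fun i => (x i : ℂ)) (finSuccEquiv ℂ k T)).eval (y : ℂ) = 0 := by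
        intro y
        rw [← eval_eq_eval_mv_eval']
        have := h (Fin.cons y x)
        rw [show (Fin.cons (y:ℂ) fun i => (x i : ℂ)) = (fun i => ((Fin.cons y x : Fin (k+1) → ℝ) i : ℂ)) from funext fun i => Fin.cases rfl (fun j => by simp) i]
        exact this
      have hq0 : Polynomial.map (eval fun i => (x i : ℂ)) (finSuccEquiv ℂ k T) = 0 := by
        apply Polynomial.eq_zero_of_infinite_isRoot
        exact Set.infinite_of_injective_forall_mem (f := fun y : ℝ => (y : ℂ))
          (fun a b hab => Complex.ofReal_injective hab) (fun y => hq y)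
      have := congrArg (fun q => Polynomial.coeff q j) hq0
      simpa [Polynomial.coeff_map] using this
    have : finSuccEquiv ℂ k T = 0 := Polynomial.ext fun j => by simp [hco j]
    exact (finSuccEquiv ℂ k).injective (by simpa using this)
lemma aeval_eq_eval'' {σ : Type*} (f : σ → ℂ) (p : MvPolynomial σ ℂ) :
    aeval f p = eval f p := by
  rw [← coe_aeval_eq_eval]; rfl

lemma diag_vanish (T : MvPolynomial (Fin 4) ℂ)
    (h : ∀ z w : ℂ, eval ![z, w, starRingEnd ℂ z, starRingEnd ℂ w] T = 0) : T = 0 := by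
  classical
  set φ : Fin 4 → MvPolynomial (Fin 4) ℂ :=
    ![X 0 + C Complex.I * X 1, X 2 + C Complex.I * X 3,
      X 0 - C Complex.I * X 1, X 2 - C Complex.I * X 3] with hφ
  set ψ : Fin 4 → MvPolynomial (Fin 4) ℂ :=
    ![C (2⁻¹:ℂ) * (X 0 + X 2), C (-Complex.I/2) * (X 0 - X 2),
      C (2⁻¹:ℂ) * (X 1 + X 3), C (-Complex.I/2) * (X 1 - X 3)] with hψ
  have hR : bind₁ φ T = 0 := by
    apply mv_eval_real_zero
    intro x
    rw [show (eval fun i => (x i : ℂ)) ((bind₁ φ) T)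
        = aeval (fun i => (x i : ℂ)) ((bind₁ φ) T) from (aeval_eq_eval'' _ _).symm,
      aeval_bind₁]
    have : (fun i => aeval (fun j => (x j : ℂ)) (φ i)) =
        ![(x 0 : ℂ) + Complex.I * x 1, (x 2 : ℂ) + Complex.I * x 3,
          starRingEnd ℂ ((x 0 : ℂ) + Complex.I * x 1), starRingEnd ℂ ((x 2 : ℂ) + Complex.I * x 3)] := by
      funext i
      fin_cases i <;>
        simp [hφ, Complex.ext_iff]
    rw [this, aeval_eq_eval'']
    exact h _ _
  have hcomp : (fun i => bind₁ ψ (φ i)) = (X : Fin 4 → MvPolynomial (Fin 4) ℂ) := by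
    funext i
    refine MvPolynomial.funext fun x => ?_
    fin_cases i <;>
      · simp [hφ, hψ, div_eq_mul_inv]
        ring_nf
        simp [Complex.I_sq]
        ring
  have : T = bind₁ ψ (bind₁ φ T) := by
    rw [bind₁_bind₁, hcomp]
    simp [bind₁_X_left]
  rw [this, hR, map_zero]
lemma conj_eval_helper (v : Fin 4 → ℂ) (q : MvPolynomial (Fin 4) ℂ) :
    eval v (map (starRingEnd ℂ) q)
      = starRingEnd ℂ (eval (fun j => starRingEnd ℂ (v j)) q) := by
  rw [eval_map,
    show (eval fun j => starRingEnd ℂ (v j)) q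
      = eval₂ (RingHom.id ℂ) (fun j => starRingEnd ℂ (v j)) q from rfl,
    MvPolynomial.eval₂_comp_left (starRingEnd ℂ)]
  simp [Function.comp_def]

lemma gram_extend {K : Type*} [Fintype K] (F G : K → MvPolynomial (Fin 2) ℂ)
    (h : ∀ z : Fin 2 → ℂ, ∑ i, eval z (F i) * starRingEnd ℂ (eval z (F i))
        = ∑ i, eval z (G i) * starRingEnd ℂ (eval z (G i))) :
    ∀ z w : Fin 2 → ℂ, ∑ i, eval z (F i) * starRingEnd ℂ (eval w (F i))
        = ∑ i, eval z (G i) * starRingEnd ℂ (eval w (G i)) := by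
  classical
  set ι₁ : Fin 2 → Fin 4 := ![0, 1] with hι₁
  set ι₂ : Fin 2 → Fin 4 := ![2, 3] with hι₂
  set T : MvPolynomial (Fin 4) ℂ :=
    (∑ i, rename ι₁ (F i) * map (starRingEnd ℂ) (rename ι₂ (F i)))
      - ∑ i, rename ι₁ (G i) * map (starRingEnd ℂ) (rename ι₂ (G i)) with hT
  have evalT : ∀ z w : Fin 2 → ℂ,
      eval ![z 0, z 1, starRingEnd ℂ (w 0), starRingEnd ℂ (w 1)] T
        = (∑ i, eval z (F i) * starRingEnd ℂ (eval w (F i)))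
          - ∑ i, eval z (G i) * starRingEnd ℂ (eval w (G i)) := by
    intro z w
    set v : Fin 4 → ℂ := ![z 0, z 1, starRingEnd ℂ (w 0), starRingEnd ℂ (w 1)] with hv
    have hv1 : v ∘ ι₁ = z := by
      funext j; fin_cases j <;> simp [hv, hι₁]
    have hv2 : ((fun j => starRingEnd ℂ (v j)) ∘ ι₂) = w := by
      funext j; fin_cases j <;> simp [hv, hι₂]
    rw [hT]
    simp only [_root_.map_sub, _root_.map_sum, _root_.map_mul, conj_eval_helper, eval_rename, hv1, hv2]
  have hT0 : T = 0 := by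
    apply diag_vanish
    intro a b
    have := evalT ![a, b] ![a, b]
    simp only [Matrix.cons_val_zero, Matrix.cons_val_one, Matrix.head_cons] at this
    rw [this, h ![a, b]]
    ring
  intro z w
  have := evalT z w
  rw [hT0] at this
  simp only [map_zero] at this
  linear_combination -this
lemma lurking {K : Type*} [Fintype K] [DecidableEq K]
    (f g : (Fin 2 → ℂ) → EuclideanSpace ℂ K)
    (hfg : ∀ z w, ∑ i, f z i * starRingEnd ℂ (f w i) = ∑ i, g z i * starRingEnd ℂ (g w i)) :
    ∃ U : Matrix K K ℂ, U ∈ Matrix.unitaryGroup K ℂ ∧ ∀ z, U.mulVec (f z) = g z := by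
  classical
  have hinner : ∀ z w, (inner ℂ (f z) (f w) : ℂ) = inner ℂ (g z) (g w) := by
    intro z w
    rw [PiLp.inner_apply, PiLp.inner_apply]
    have := hfg w z
    simp only [RCLike.inner_apply]
    exact this
  set Tf := Finsupp.linearCombination ℂ f with hTf
  set Tg := Finsupp.linearCombination ℂ g with hTg
  have hTinner : ∀ c c', (inner ℂ (Tf c) (Tf c') : ℂ) = inner ℂ (Tg c) (Tg c') := by
    intro c
    induction c using Finsupp.induction_linear with
    | zero => intro c'; simp
    | add a b ha hb => intro c'; rw [map_add, map_add, inner_add_left, inner_add_left, ha, hb]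
    | single z a =>
      intro c'
      induction c' using Finsupp.induction_linear with
      | zero => simp
      | add a b ha hb => rw [map_add, map_add, inner_add_right, inner_add_right, ha, hb]
      | single w b =>
        rw [hTf, hTg, Finsupp.linearCombination_single, Finsupp.linearCombination_single,
          Finsupp.linearCombination_single, Finsupp.linearCombination_single,
          inner_smul_left, inner_smul_left, inner_smul_right, inner_smul_right, hinner]
  have hker : LinearMap.ker Tf ≤ LinearMap.ker Tg := by
    intro c hc
    rw [LinearMap.mem_ker] at hc ⊢
    have h0 : (inner ℂ (Tg c) (Tg c) : ℂ) = 0 := by rw [← hTinner, hc, inner_zero_left]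
    exact inner_self_eq_zero.mp h0
  have hnorm : ∀ c, ‖Tf c‖ = ‖Tg c‖ := by
    intro c
    rw [norm_eq_sqrt_re_inner (𝕜 := ℂ), norm_eq_sqrt_re_inner (𝕜 := ℂ), hTinner]
  set e := LinearMap.quotKerEquivRange Tf with he
  set Φ : ↥(LinearMap.range Tf) →ₗ[ℂ] EuclideanSpace ℂ K :=
    (Submodule.liftQ (LinearMap.ker Tf) Tg hker).comp e.symm.toLinearMap with hΦdef
  have hΦ : ∀ c, Φ ⟨Tf c, LinearMap.mem_range_self _ c⟩ = Tg c := by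
    intro c
    have h1 : e (Submodule.Quotient.mk c) = ⟨Tf c, LinearMap.mem_range_self _ c⟩ :=
      Subtype.ext (LinearMap.quotKerEquivRange_apply_mk Tf c)
    have h2 : e.symm ⟨Tf c, LinearMap.mem_range_self _ c⟩ = Submodule.Quotient.mk c := by
      rw [← h1, LinearEquiv.symm_apply_apply]
    rw [hΦdef]
    simp only [LinearMap.comp_apply, LinearEquiv.coe_toLinearMap, h2, Submodule.liftQ_apply]
  have hΦnorm : ∀ v : ↥(LinearMap.range Tf), ‖Φ v‖ = ‖v‖ := by
    rintro ⟨x, hx⟩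
    obtain ⟨c, rfl⟩ := hx
    rw [hΦ c]
    exact (hnorm c).symm
  set L : ↥(LinearMap.range Tf) →ₗᵢ[ℂ] EuclideanSpace ℂ K := ⟨Φ, hΦnorm⟩ with hL
  set ext := L.extend with hext
  have hextc : ∀ c, ext (Tf c) = Tg c := by
    intro c
    have := L.extend_apply ⟨Tf c, LinearMap.mem_range_self _ c⟩
    rw [hext]
    rw [show ((⟨Tf c, LinearMap.mem_range_self _ c⟩ : ↥(LinearMap.range Tf)) : EuclideanSpace ℂ K) = Tf c from rfl] at this
    rw [this]
    exact hΦ c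
  have hfz : ∀ z, ext (f z) = g z := by
    intro z
    have h1 : Tf (Finsupp.single z 1) = f z := by
      rw [hTf, Finsupp.linearCombination_single, one_smul]
    have h2 : Tg (Finsupp.single z 1) = g z := by
      rw [hTg, Finsupp.linearCombination_single, one_smul]
    rw [← h1, ← h2]; exact hextc _
  set U : Matrix K K ℂ := Matrix.of (fun i j => ext (EuclideanSpace.single j 1) i) with hU
  have hdecomp : ∀ x : EuclideanSpace ℂ K, x = ∑ j, x j • EuclideanSpace.single j (1:ℂ) := by
    intro x
    have := (EuclideanSpace.basisFun K ℂ).sum_repr x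
    simp only [EuclideanSpace.basisFun_apply, EuclideanSpace.basisFun_repr] at this
    exact this.symm
  have hUmul : ∀ x : EuclideanSpace ℂ K, U.mulVec x = ext x := by
    intro x
    funext i
    conv_rhs => rw [hdecomp x]
    rw [map_sum]
    rw [show ((∑ j, ext (x j • EuclideanSpace.single j (1:ℂ))) i)
        = ∑ j, (ext (x j • EuclideanSpace.single j (1:ℂ))) i from
      by rw [WithLp.ofLp_sum]; exact Finset.sum_apply i Finset.univ _]
    rw [Matrix.mulVec, dotProduct]
    refine Finset.sum_congr rfl fun j _ => ?_
    rw [_root_.map_smul]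
    rw [show (x j • ext (EuclideanSpace.single j (1:ℂ))) i
        = x j * ext (EuclideanSpace.single j (1:ℂ)) i from rfl]
    simp [hU, mul_comm]
  refine ⟨U, ?_, fun z => by rw [hUmul, hfz]⟩
  rw [Matrix.mem_unitaryGroup_iff']
  funext j k
  rw [Matrix.mul_apply, Matrix.one_apply]
  have hi : (inner ℂ (ext (EuclideanSpace.single j (1:ℂ))) (ext (EuclideanSpace.single k (1:ℂ))) : ℂ)
      = inner ℂ (EuclideanSpace.single j (1:ℂ)) (EuclideanSpace.single k (1:ℂ)) :=
    ext.inner_map_map _ _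
  calc ∑ i, (star U) j i * U i k
      = (inner ℂ (ext (EuclideanSpace.single j (1:ℂ))) (ext (EuclideanSpace.single k (1:ℂ))) : ℂ) := by
        rw [PiLp.inner_apply]
        refine Finset.sum_congr rfl fun i _ => ?_
        simp only [Matrix.star_apply, hU, Matrix.of_apply, RCLike.inner_apply]
        exact mul_comm _ _
    _ = inner ℂ (EuclideanSpace.single j (1:ℂ)) (EuclideanSpace.single k (1:ℂ)) := hi
    _ = if j = k then 1 else 0 := by
        rw [PiLp.inner_apply]
        simp [RCLike.inner_apply, EuclideanSpace.single_apply, apply_ite (starRingEnd ℂ), eq_comm]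
set_option maxHeartbeats 1000000 in

lemma unitary_normSq {K : Type*} [Fintype K] [DecidableEq K]
    (U : Matrix K K ℂ) (hU : U ∈ Matrix.unitaryGroup K ℂ) (y : K → ℂ) :
    ∑ i, Complex.normSq ((U.mulVec y) i) = ∑ i, Complex.normSq (y i) := by
  have h1 : star U * U = 1 := (Matrix.mem_unitaryGroup_iff').mp hU
  have key : (star (U.mulVec y)) ⬝ᵥ (U.mulVec y) = star y ⬝ᵥ y := by
    rw [star_mulVec, dotProduct_mulVec, vecMul_vecMul, show Uᴴ * U = 1 from h1, vecMul_one]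
  have e1 : ∀ w : K → ℂ, (star w) ⬝ᵥ w = (↑(∑ i, Complex.normSq (w i)) : ℂ) := by
    intro w
    rw [dotProduct]
    push_cast
    refine Finset.sum_congr rfl fun i _ => ?_
    rw [Pi.star_apply, Complex.star_def, ← Complex.normSq_eq_conj_mul_self]
  rw [e1, e1] at key
  exact_mod_cast key

set_option maxHeartbeats 1000000 in
lemma det_one_sub_isUnit {N M : ℕ}
    (U : Matrix (Unit ⊕ (Fin N ⊕ Fin M)) (Unit ⊕ (Fin N ⊕ Fin M)) ℂ)
    (hU : U ∈ Matrix.unitaryGroup (Unit ⊕ (Fin N ⊕ Fin M)) ℂ)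
    (zc : Fin N ⊕ Fin M → ℂ) (hzc : ∀ j, ‖zc j‖ < 1) :
    IsUnit (1 - Matrix.of (fun (i j : Fin N ⊕ Fin M) => U (Sum.inr i) (Sum.inr j))
      * Matrix.diagonal zc).det := by
  classical
  set D : Matrix (Fin N ⊕ Fin M) (Fin N ⊕ Fin M) ℂ :=
    Matrix.of (fun i j => U (Sum.inr i) (Sum.inr j)) with hD
  -- contraction estimate for D
  have hDcontract : ∀ u : Fin N ⊕ Fin M → ℂ,
      ∑ i, Complex.normSq ((D.mulVec u) i) ≤ ∑ i, Complex.normSq (u i) := by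
    intro u
    set uh : (Unit ⊕ (Fin N ⊕ Fin M)) → ℂ := Sum.elim (fun _ => 0) u with huh
    have h2 : ∀ i, (U.mulVec uh) (Sum.inr i) = (D.mulVec u) i := by
      intro i
      rw [Matrix.mulVec, Matrix.mulVec, dotProduct, dotProduct,
        Fintype.sum_sum_type]
      simp [huh, hD]
    have h3 := unitary_normSq U hU uh
    calc ∑ i, Complex.normSq ((D.mulVec u) i)
        = ∑ i, Complex.normSq ((U.mulVec uh) (Sum.inr i)) := by
          refine Finset.sum_congr rfl fun i _ => ?_; rw [h2]
      _ ≤ (∑ i : Unit, Complex.normSq ((U.mulVec uh) (Sum.inl i)))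
          + ∑ i, Complex.normSq ((U.mulVec uh) (Sum.inr i)) := by
          have : (0:ℝ) ≤ ∑ i : Unit, Complex.normSq ((U.mulVec uh) (Sum.inl i)) :=
            Finset.sum_nonneg fun i _ => Complex.normSq_nonneg _
          linarith
      _ = ∑ i : Unit ⊕ (Fin N ⊕ Fin M), Complex.normSq ((U.mulVec uh) i) := by
          simp [Fintype.sum_sum_type]
      _ = ∑ i : Unit ⊕ (Fin N ⊕ Fin M), Complex.normSq (uh i) := h3
      _ = ∑ i, Complex.normSq (u i) := by
          rw [Fintype.sum_sum_type]; simp [huh]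
  by_contra hdet
  have hdet0 : (1 - D * Matrix.diagonal zc).det = 0 := by
    by_contra h0
    exact hdet (isUnit_iff_ne_zero.mpr h0)
  obtain ⟨v, hvne, hveq⟩ := (Matrix.exists_mulVec_eq_zero_iff).mpr hdet0
  have h4 : D.mulVec (fun j => zc j * v j) = v := by
    have h5 : (1 - D * Matrix.diagonal zc).mulVec v
        = v - (D * Matrix.diagonal zc).mulVec v := by
      rw [Matrix.sub_mulVec, Matrix.one_mulVec]
    rw [hveq] at h5
    have h6 : (D * Matrix.diagonal zc).mulVec v = v := by
      have := sub_eq_zero.mp h5.symm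
      exact this.symm
    rw [← Matrix.mulVec_mulVec] at h6
    rw [show (Matrix.diagonal zc).mulVec v = fun j => zc j * v j from
      funext fun j => Matrix.mulVec_diagonal zc v j] at h6
    exact h6
  obtain ⟨j0, hj0⟩ : ∃ j, v j ≠ 0 := Function.ne_iff.mp hvne
  have hstrict : ∑ j, Complex.normSq (zc j * v j) < ∑ j, Complex.normSq (v j) := by
    apply Finset.sum_lt_sum
    · intro j _
      rw [Complex.normSq_mul]
      have h7 : Complex.normSq (zc j) ≤ 1 := by
        rw [← Complex.sq_norm]
        have := hzc j
        nlinarith [norm_nonneg (zc j)]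
      nlinarith [Complex.normSq_nonneg (v j)]
    · refine ⟨j0, Finset.mem_univ _, ?_⟩
      rw [Complex.normSq_mul]
      have h7 : Complex.normSq (zc j0) < 1 := by
        rw [← Complex.sq_norm]
        have := hzc j0
        nlinarith [norm_nonneg (zc j0)]
      have h8 : 0 < Complex.normSq (v j0) := Complex.normSq_pos.mpr hj0
      nlinarith
  have hfin := hDcontract (fun j => zc j * v j)
  rw [h4] at hfin
  linarith
set_option maxHeartbeats 1000000 in
/-- Every Agler pair for a semi-stable `p` yields a unitary transfer function
realization of `p̃/p` on the bidisk. -/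
theorem stmt19 (n m N M : ℕ) (p pt : MvPolynomial (Fin 2) ℂ)
    (hdeg0 : p.degreeOf 0 = n) (hdeg1 : p.degreeOf 1 = m)
    (hp : ∀ z : Fin 2 → ℂ, (∀ i, ‖z i‖ < 1) → eval z p ≠ 0)
    (hpt : ∀ z : Fin 2 → ℂ, (∀ i, z i ≠ 0) →
      eval z pt = (z 0 ^ n * z 1 ^ m) *
        (starRingEnd ℂ) (eval (fun i => ((starRingEnd ℂ) (z i))⁻¹) p))
    (hcoprime : ∀ r : MvPolynomial (Fin 2) ℂ, r ∣ p → r ∣ pt → IsUnit r)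
    (A₁ : (Fin 2 → ℂ) → Fin N → ℂ) (A₂ : (Fin 2 → ℂ) → Fin M → ℂ)
    (hA₁ : ∀ i, ∃ q : MvPolynomial (Fin 2) ℂ, ∀ z, A₁ z i = eval z q)
    (hA₂ : ∀ i, ∃ q : MvPolynomial (Fin 2) ℂ, ∀ z, A₂ z i = eval z q)
    (hAgler : ∀ z : Fin 2 → ℂ,
      ‖eval z p‖ ^ 2 - ‖eval z pt‖ ^ 2 =
        (1 - ‖z 0‖ ^ 2) * ∑ i, ‖A₁ z i‖ ^ 2 + (1 - ‖z 1‖ ^ 2) * ∑ i, ‖A₂ z i‖ ^ 2) :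
    ∃ U : Matrix (Unit ⊕ (Fin N ⊕ Fin M)) (Unit ⊕ (Fin N ⊕ Fin M)) ℂ,
      U ∈ Matrix.unitaryGroup (Unit ⊕ (Fin N ⊕ Fin M)) ℂ ∧
      ∀ z : Fin 2 → ℂ, ‖z 0‖ < 1 → ‖z 1‖ < 1 →
        eval z pt = eval z p *
          (U (Sum.inl ()) (Sum.inl ()) +
            (Matrix.of (fun (_ : Unit) (j : Fin N ⊕ Fin M) => U (Sum.inl ()) (Sum.inr j)) *
              Matrix.diagonal (Sum.elim (fun _ : Fin N => z 0) (fun _ : Fin M => z 1)) *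
              (1 - Matrix.of (fun (i j : Fin N ⊕ Fin M) => U (Sum.inr i) (Sum.inr j)) *
                Matrix.diagonal (Sum.elim (fun _ : Fin N => z 0) (fun _ : Fin M => z 1)))⁻¹ *
              Matrix.of (fun (i : Fin N ⊕ Fin M) (_ : Unit) => U (Sum.inr i) (Sum.inl ())))
              () ()) := by
  classical
  choose q hq using hA₁
  choose r hr using hA₂
  set F : (Unit ⊕ (Fin N ⊕ Fin M)) → MvPolynomial (Fin 2) ℂ :=
    Sum.elim (fun _ => p) (Sum.elim (fun i => X 0 * q i) (fun i => X 1 * r i)) with hF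
  set G : (Unit ⊕ (Fin N ⊕ Fin M)) → MvPolynomial (Fin 2) ℂ :=
    Sum.elim (fun _ => pt) (Sum.elim q r) with hG
  have hxc : ∀ x : ℂ, x * starRingEnd ℂ x = ((‖x‖^2 : ℝ) : ℂ) := by
    intro x
    rw [Complex.mul_conj]
    norm_cast
    rw [Complex.sq_norm]
  have hreal : ∀ z : Fin 2 → ℂ,
      ‖eval z p‖^2 + ((∑ i, ‖eval z (X 0 * q i)‖^2) + ∑ i, ‖eval z (X 1 * r i)‖^2)
        = ‖eval z pt‖^2 + ((∑ i, ‖eval z (q i)‖^2) + ∑ i, ‖eval z (r i)‖^2) := by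
    intro z
    have s1 : ∑ i, ‖eval z (X 0 * q i)‖^2 = ‖z 0‖^2 * ∑ i, ‖A₁ z i‖^2 := by
      rw [Finset.mul_sum]
      refine Finset.sum_congr rfl fun i _ => ?_
      rw [_root_.map_mul, eval_X, norm_mul, mul_pow, ← hq i z]
    have s2 : ∑ i, ‖eval z (X 1 * r i)‖^2 = ‖z 1‖^2 * ∑ i, ‖A₂ z i‖^2 := by
      rw [Finset.mul_sum]
      refine Finset.sum_congr rfl fun i _ => ?_
      rw [_root_.map_mul, eval_X, norm_mul, mul_pow, ← hr i z]
    have s3 : ∑ i, ‖eval z (q i)‖^2 = ∑ i, ‖A₁ z i‖^2 :=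
      Finset.sum_congr rfl fun i _ => by rw [← hq i z]
    have s4 : ∑ i, ‖eval z (r i)‖^2 = ∑ i, ‖A₂ z i‖^2 :=
      Finset.sum_congr rfl fun i _ => by rw [← hr i z]
    rw [s1, s2, s3, s4]
    linarith [hAgler z]
  have hdiag : ∀ z : Fin 2 → ℂ,
      ∑ k, eval z (F k) * starRingEnd ℂ (eval z (F k))
        = ∑ k, eval z (G k) * starRingEnd ℂ (eval z (G k)) := by
    intro z
    simp only [hF, hG, Fintype.sum_sum_type, Sum.elim_inl, Sum.elim_inr, hxc,
      Finset.univ_unique, Finset.sum_singleton]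
    exact_mod_cast hreal z
  have hgram := gram_extend F G hdiag
  set f : (Fin 2 → ℂ) → EuclideanSpace ℂ (Unit ⊕ (Fin N ⊕ Fin M)) :=
    fun z => WithLp.toLp 2 (fun k => eval z (F k)) with hf
  set g : (Fin 2 → ℂ) → EuclideanSpace ℂ (Unit ⊕ (Fin N ⊕ Fin M)) :=
    fun z => WithLp.toLp 2 (fun k => eval z (G k)) with hg
  obtain ⟨U, hUuni, hUf⟩ := lurking f g (fun z w => hgram z w)
  refine ⟨U, hUuni, ?_⟩
  intro z hz0 hz1
  set zc : Fin N ⊕ Fin M → ℂ := Sum.elim (fun _ : Fin N => z 0) (fun _ : Fin M => z 1) with hzc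
  have hzclt : ∀ j, ‖zc j‖ < 1 := by rintro (j|j) <;> simpa [hzc]
  set Dm : Matrix (Fin N ⊕ Fin M) (Fin N ⊕ Fin M) ℂ :=
    Matrix.of (fun i j : Fin N ⊕ Fin M => U (Sum.inr i) (Sum.inr j)) with hDm
  have hdet : IsUnit (1 - Dm * Matrix.diagonal zc).det :=
    det_one_sub_isUnit U hUuni zc hzclt
  set av : Fin N ⊕ Fin M → ℂ := Sum.elim (A₁ z) (A₂ z) with hav
  have hfk : ∀ j, f z (Sum.inr j) = zc j * av j := by
    rintro (j|j)
    · simp [hf, hF, hzc, hav, ← hq j z]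
    · simp [hf, hF, hzc, hav, ← hr j z]
  have hgk : ∀ j, g z (Sum.inr j) = av j := by
    rintro (j|j)
    · simp [hg, hG, hav, ← hq j z]
    · simp [hg, hG, hav, ← hr j z]
  have hUfz := hUf z
  have eqinl : U (Sum.inl ()) (Sum.inl ()) * eval z p
      + ∑ j, U (Sum.inl ()) (Sum.inr j) * (zc j * av j) = eval z pt := by
    have h1 := congrFun hUfz (Sum.inl ())
    rw [Matrix.mulVec, dotProduct, Fintype.sum_sum_type] at h1
    simp only [Finset.univ_unique, Finset.sum_singleton, hfk] at h1
    rw [show g z (Sum.inl ()) = eval z pt from rfl] at h1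
    rw [show f z (Sum.inl ()) = eval z p from rfl] at h1
    exact h1
  have eqinr : ∀ i, U (Sum.inr i) (Sum.inl ()) * eval z p
      + ∑ j, U (Sum.inr i) (Sum.inr j) * (zc j * av j) = av i := by
    intro i
    have h1 := congrFun hUfz (Sum.inr i)
    rw [Matrix.mulVec, dotProduct, Fintype.sum_sum_type] at h1
    simp only [Finset.univ_unique, Finset.sum_singleton, hfk] at h1
    rw [show g z (Sum.inr i) = av i from hgk i] at h1
    rw [show f z (Sum.inl ()) = eval z p from rfl] at h1
    exact h1
  set Cv : Fin N ⊕ Fin M → ℂ := fun i => U (Sum.inr i) (Sum.inl ()) with hCv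
  have hMzEq : (1 - Dm * Matrix.diagonal zc).mulVec av = eval z p • Cv := by
    funext i
    have e2 : (Dm * Matrix.diagonal zc).mulVec av = Dm.mulVec (fun j => zc j * av j) := by
      rw [← Matrix.mulVec_mulVec,
        show (Matrix.diagonal zc).mulVec av = (fun j => zc j * av j) from
          funext fun j => Matrix.mulVec_diagonal zc av j]
    have e1 : (1 - Dm * Matrix.diagonal zc).mulVec av i
        = av i - ∑ j, Dm i j * (zc j * av j) := by
      rw [Matrix.sub_mulVec, Matrix.one_mulVec, Pi.sub_apply, e2]
      rfl
    rw [e1, Pi.smul_apply, smul_eq_mul]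
    have e3 : ∑ j, Dm i j * (zc j * av j)
        = ∑ j, U (Sum.inr i) (Sum.inr j) * (zc j * av j) := rfl
    rw [e3, hCv]
    linear_combination -eqinr i
  set iM := (1 - Dm * Matrix.diagonal zc)⁻¹ with hiM
  have hsol : av = eval z p • iM.mulVec Cv := by
    calc av = (1 : Matrix (Fin N ⊕ Fin M) (Fin N ⊕ Fin M) ℂ).mulVec av :=
        (Matrix.one_mulVec av).symm
      _ = (iM * (1 - Dm * Matrix.diagonal zc)).mulVec av := by
          rw [hiM, Matrix.nonsing_inv_mul _ hdet]
      _ = iM.mulVec ((1 - Dm * Matrix.diagonal zc).mulVec av) := by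
          rw [Matrix.mulVec_mulVec]
      _ = iM.mulVec (eval z p • Cv) := by rw [hMzEq]
      _ = eval z p • iM.mulVec Cv := Matrix.mulVec_smul _ _ _
  set wv := iM.mulVec Cv with hwv
  have havj : ∀ j, av j = eval z p * wv j := by
    intro j; rw [hsol]; simp
  have hE : (Matrix.of (fun (_ : Unit) (j : Fin N ⊕ Fin M) => U (Sum.inl ()) (Sum.inr j)) *
        Matrix.diagonal zc * iM *
        Matrix.of (fun (i : Fin N ⊕ Fin M) (_ : Unit) => U (Sum.inr i) (Sum.inl ()))) () ()
      = ∑ j, U (Sum.inl ()) (Sum.inr j) * zc j * wv j := by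
    rw [show Matrix.of (fun (_ : Unit) (j : Fin N ⊕ Fin M) => U (Sum.inl ()) (Sum.inr j)) *
          Matrix.diagonal zc * iM *
          Matrix.of (fun (i : Fin N ⊕ Fin M) (_ : Unit) => U (Sum.inr i) (Sum.inl ()))
        = (Matrix.of (fun (_ : Unit) (j : Fin N ⊕ Fin M) => U (Sum.inl ()) (Sum.inr j)) *
            Matrix.diagonal zc) *
          (iM * Matrix.of (fun (i : Fin N ⊕ Fin M) (_ : Unit) => U (Sum.inr i) (Sum.inl ()))) from by
      rw [Matrix.mul_assoc]]
    rw [Matrix.mul_apply]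
    refine Finset.sum_congr rfl fun j _ => ?_
    rw [Matrix.mul_diagonal, Matrix.mul_apply]
    rw [hwv, show iM.mulVec Cv j = ∑ k, iM j k * Cv k from rfl]
    rw [Finset.mul_sum, Finset.mul_sum]
    refine Finset.sum_congr rfl fun k _ => ?_
    simp only [Matrix.of_apply, hCv]
    try ring
  rw [hE, ← eqinl]
  have hsum : ∑ j, U (Sum.inl ()) (Sum.inr j) * (zc j * av j)
      = eval z p * ∑ j, U (Sum.inl ()) (Sum.inr j) * zc j * wv j := by
    rw [Finset.mul_sum]
    refine Finset.sum_congr rfl fun j _ => ?_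
    rw [havj j]; ring
  rw [hsum]
  ring
end
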